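/- arXiv:1907.09611 — 9 statements merged into one kernel-verified Lean document; each statement's English description precedes it below -/
import Mathlib

section
/- Let $(\Theta, \mathcal{A}, \Pi)$ be a probability space, and for each $n$ let $f_n : \Theta \to \mathbb{R}$ be measurable with $z_n = \int_\Theta \exp(-n f_n(\theta)) \Pi(d\theta) < \infty$. Define $\Pi_n(d\theta) = \exp(-n f_n(\theta)) \Pi(d\theta)/z_n$. Suppose $\theta_0 \in \Theta$ and $f : \Theta \to \mathbb{R}$ satisfy: (1) $f_n(\theta) \to f(\theta)$ for all $\theta$; (2) $\Pi(A_\epsilon) > 0$ for all $\epsilon > 0$, where $A_\epsilon = \{\theta : f(\theta) < f(\theta_0) + \epsilon\}$; and (3) $\liminf_n \inf_{\theta \in A_\epsilon^c} f_n(\theta) > f(\theta_0)$ for all $\epsilon > 0$. Then $\Pi_n(A_\epsilon) \to 1$ as $n \to \infty$ for every $\epsilon > 0$. -/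
open MeasureTheory Filter Set
open scoped Topology ENNReal

set_option maxHeartbeats 800000

theorem generalized_posterior_concentration_sublevel
    {Θ : Type*} [MeasurableSpace Θ] (P : Measure Θ) [IsProbabilityMeasure P]
    (fn : ℕ → Θ → ℝ) (hmeas : ∀ n, Measurable (fn n))
    (hint : ∀ n : ℕ, Integrable (fun θ => Real.exp (-(n : ℝ) * fn n θ)) P)
    (θ0 : Θ) (f : Θ → ℝ)
    (hconv : ∀ θ, Tendsto (fun n => fn n θ) atTop (𝓝 (f θ)))
    (hprior : ∀ ε > (0:ℝ), 0 < P {θ | f θ < f θ0 + ε})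
    (hsep : ∀ ε > (0:ℝ), ∃ β, f θ0 < β ∧
      ∀ᶠ n in atTop, ∀ θ, ¬ f θ < f θ0 + ε → β ≤ fn n θ) :
    ∀ ε > (0:ℝ), Tendsto (fun n : ℕ =>
        (∫ θ in {θ | f θ < f θ0 + ε}, Real.exp (-(n : ℝ) * fn n θ) ∂P) /
        ∫ θ, Real.exp (-(n : ℝ) * fn n θ) ∂P) atTop (𝓝 1) := by
  intro ε hε
  have hfmeas : Measurable f := measurable_of_tendsto_metrizable hmeas
    (tendsto_pi_nhds.2 hconv)
  set A : Set Θ := {θ | f θ < f θ0 + ε} with hA_def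
  have hA : MeasurableSet A := measurableSet_lt hfmeas measurable_const
  obtain ⟨β, hβ, hev⟩ := hsep ε hε
  -- choose α with f θ0 < α < β and α ≤ f θ0 + ε
  set ε' : ℝ := min ε ((β - f θ0) / 2) with hε'_def
  have hε' : 0 < ε' := lt_min hε (by linarith)
  set α : ℝ := f θ0 + ε' with hα_def
  have hαβ : α < β := by
    have : ε' ≤ (β - f θ0) / 2 := min_le_right _ _
    rw [hα_def]; linarith
  set B : Set Θ := {θ | f θ < α} with hB_def
  have hBA : B ⊆ A := by
    intro θ hθ
    have h1 : f θ < α := hθ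
    have h2 : ε' ≤ ε := min_le_left _ _
    have h3 := hα_def
    show f θ < f θ0 + ε
    linarith
  have hPB : 0 < P B := hprior ε' hε'
  set a : ℕ → ℝ := fun n => ∫ θ in A, Real.exp (-(n : ℝ) * fn n θ) ∂P with ha_def
  set b : ℕ → ℝ := fun n => ∫ θ in Aᶜ, Real.exp (-(n : ℝ) * fn n θ) ∂P with hb_def
  have hb0 : ∀ n, 0 ≤ b n := fun n =>
    integral_nonneg fun θ => (Real.exp_pos _).le
  have ha0 : ∀ n, 0 < a n := by
    intro n
    rw [ha_def]
    rw [integral_pos_iff_support_of_nonneg (fun θ => (Real.exp_pos _).le)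
      ((hint n).restrict)]
    have : Function.support (fun θ => Real.exp (-(n : ℝ) * fn n θ)) = Set.univ := by
      ext θ; simp [Function.mem_support, (Real.exp_pos _).ne']
    rw [this, Measure.restrict_apply_univ]
    exact lt_of_lt_of_le hPB (measure_mono hBA)
  -- lower bound for a via Fatou on B
  have hlower : ∀ᶠ n : ℕ in atTop, Real.exp (-(n : ℝ) * α) ≤ a n := by
    have hmeash : ∀ n : ℕ, Measurable fun θ =>
        ENNReal.ofReal (Real.exp ((n : ℝ) * (α - fn n θ))) :=
      fun n => (Real.measurable_exp.comp
        ((measurable_const.sub (hmeas n)).const_mul _)).ennreal_ofReal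
    have hliminf : ∀ θ ∈ B, Filter.atTop.liminf
        (fun n : ℕ => ENNReal.ofReal (Real.exp ((n : ℝ) * (α - fn n θ)))) = ⊤ := by
      intro θ hθ
      have hc : (0:ℝ) < α - f θ := by
        have : f θ < α := hθ
        linarith
      have h1 : Tendsto (fun n : ℕ => (n : ℝ) * (α - fn n θ)) atTop atTop :=
        Filter.Tendsto.atTop_mul_pos hc tendsto_natCast_atTop_atTop
          (tendsto_const_nhds.sub (hconv θ))
      have h2 : Tendsto (fun n : ℕ =>
          ENNReal.ofReal (Real.exp ((n : ℝ) * (α - fn n θ)))) atTop (𝓝 ⊤) :=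
        ENNReal.tendsto_ofReal_atTop.comp (Real.tendsto_exp_atTop.comp h1)
      exact h2.liminf_eq
    have hFatou : (⊤ : ℝ≥0∞) ≤ Filter.atTop.liminf
        (fun n : ℕ => ∫⁻ θ in B, ENNReal.ofReal (Real.exp ((n : ℝ) * (α - fn n θ))) ∂P) := by
      have hBmeas : MeasurableSet B := measurableSet_lt hfmeas measurable_const
      calc (⊤ : ℝ≥0∞) = ∫⁻ _ in B, (⊤ : ℝ≥0∞) ∂P := by
            rw [setLIntegral_const, ENNReal.top_mul hPB.ne']
        _ = ∫⁻ θ in B, Filter.atTop.liminf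
              (fun n : ℕ => ENNReal.ofReal (Real.exp ((n : ℝ) * (α - fn n θ)))) ∂P := by
            exact (setLIntegral_congr_fun hBmeas
              (fun θ hθ => (hliminf θ hθ).symm))
        _ ≤ _ := lintegral_liminf_le hmeash
    have hev1 : ∀ᶠ n : ℕ in atTop, (1 : ℝ≥0∞) <
        ∫⁻ θ in B, ENNReal.ofReal (Real.exp ((n : ℝ) * (α - fn n θ))) ∂P := by
      exact eventually_lt_of_lt_liminf
        (lt_of_lt_of_le (by simp : (1:ℝ≥0∞) < ⊤) hFatou)
    filter_upwards [hev1] with n hn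
    -- convert the lintegral bound to a real bound
    have hgint : Integrable (fun θ => Real.exp ((n : ℝ) * (α - fn n θ))) P := by
      have : (fun θ => Real.exp ((n : ℝ) * (α - fn n θ)))
          = fun θ => Real.exp ((n : ℝ) * α) * Real.exp (-(n : ℝ) * fn n θ) := by
        funext θ; rw [← Real.exp_add]; ring_nf
      rw [this]
      exact (hint n).const_mul _
    have hlt : (∫⁻ θ in B, ENNReal.ofReal (Real.exp ((n : ℝ) * (α - fn n θ))) ∂P) < ⊤ :=
      hgint.restrict.lintegral_lt_top
    have heq : (∫ θ in B, Real.exp ((n : ℝ) * (α - fn n θ)) ∂P)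
        = (∫⁻ θ in B, ENNReal.ofReal (Real.exp ((n : ℝ) * (α - fn n θ))) ∂P).toReal := by
      rw [integral_eq_lintegral_of_nonneg_ae
        (Filter.Eventually.of_forall fun θ => (Real.exp_pos _).le)
        hgint.restrict.aestronglyMeasurable]
    have h1le : (1 : ℝ) ≤ ∫ θ in B, Real.exp ((n : ℝ) * (α - fn n θ)) ∂P := by
      rw [heq]
      have := ENNReal.toReal_mono hlt.ne hn.le
      simpa using this
    have hsplit : (∫ θ in B, Real.exp ((n : ℝ) * (α - fn n θ)) ∂P)
        = Real.exp ((n : ℝ) * α) * ∫ θ in B, Real.exp (-(n : ℝ) * fn n θ) ∂P := by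
      rw [← integral_const_mul]
      congr 1; funext θ; rw [← Real.exp_add]; ring_nf
    have hBint : (1 : ℝ) ≤ Real.exp ((n : ℝ) * α) * ∫ θ in B, Real.exp (-(n : ℝ) * fn n θ) ∂P := by
      rw [← hsplit]; exact h1le
    have hexp : Real.exp (-(n : ℝ) * α) ≤ ∫ θ in B, Real.exp (-(n : ℝ) * fn n θ) ∂P := by
      have hpos : (0 : ℝ) < Real.exp ((n : ℝ) * α) := Real.exp_pos _
      rw [neg_mul, Real.exp_neg]
      rw [inv_le_iff_one_le_mul₀ hpos]
      linarith [hBint]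
    refine le_trans hexp ?_
    rw [ha_def]
    exact setIntegral_mono_set (hint n).integrableOn
      (Filter.Eventually.of_forall fun θ => (Real.exp_pos _).le)
      (HasSubset.Subset.eventuallyLE hBA)
  -- upper bound for b
  have hupper : ∀ᶠ n in atTop, b n ≤ Real.exp (-(n : ℝ) * β) := by
    filter_upwards [hev] with n hn
    have hble : b n ≤ ∫ _ in Aᶜ, Real.exp (-(n : ℝ) * β) ∂P := by
      apply setIntegral_mono_on (hint n).integrableOn
        (integrableOn_const (measure_ne_top P _)) hA.compl
      intro θ hθ
      apply Real.exp_le_exp.2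
      have := hn θ hθ
      have hn0 : (0 : ℝ) ≤ (n : ℝ) := Nat.cast_nonneg n
      nlinarith
    refine hble.trans ?_
    rw [setIntegral_const, smul_eq_mul, measureReal_def]
    have h1 : (P Aᶜ).toReal ≤ 1 := by
      have : P Aᶜ ≤ P Set.univ := measure_mono (Set.subset_univ Aᶜ)
      rw [measure_univ] at this
      simpa using ENNReal.toReal_mono (by simp) this
    nlinarith [Real.exp_pos (-(n : ℝ) * β), (P Aᶜ).toReal, ENNReal.toReal_nonneg (a := P Aᶜ)]
  -- b / a → 0
  have hba : Tendsto (fun n : ℕ => b n / a n) atTop (𝓝 0) := by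
    have hup : ∀ᶠ n in atTop, b n / a n ≤ Real.exp ((n : ℝ) * (α - β)) := by
      filter_upwards [hlower, hupper] with n h1 h2
      have := div_le_div₀ (Real.exp_pos (-(n : ℝ) * β)).le h2 (Real.exp_pos _) h1
      refine this.trans_eq ?_
      rw [← Real.exp_sub]; ring_nf
    have hlim : Tendsto (fun n : ℕ => Real.exp ((n : ℝ) * (α - β))) atTop (𝓝 0) := by
      apply Real.tendsto_exp_atBot.comp
      apply Filter.Tendsto.atTop_mul_const_of_neg (by linarith) tendsto_natCast_atTop_atTop
    refine tendsto_of_tendsto_of_tendsto_of_le_of_le' tendsto_const_nhds hlim ?_ hup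
    exact Filter.Eventually.of_forall fun n => div_nonneg (hb0 n) (ha0 n).le
  -- assemble
  have htot : ∀ n : ℕ, (∫ θ, Real.exp (-(n : ℝ) * fn n θ) ∂P) = a n + b n := by
    intro n
    rw [ha_def, hb_def]
    exact (integral_add_compl hA (hint n)).symm
  have hgoal : Tendsto (fun n : ℕ => (1 + b n / a n)⁻¹) atTop (𝓝 1) := by
    have : Tendsto (fun n : ℕ => 1 + b n / a n) atTop (𝓝 1) := by
      simpa using tendsto_const_nhds.add hba
    simpa using this.inv₀ (by norm_num)
  apply hgoal.congr
  intro n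
  rw [htot n]
  have han := ha0 n
  have hbn := hb0 n
  have key : (1 + b n / a n)⁻¹ = a n / (a n + b n) := by
    have h1 : a n ≠ 0 := han.ne'
    have h2 : a n + b n ≠ 0 := by positivity
    field_simp
  rw [key, ha_def]
end

section
/- Let $(\Theta, d)$ be a metric space with Borel sigma-algebra, $\Pi$ a probability measure, $f_n : \Theta \to \mathbb{R}$ measurable with $z_n = \int \exp(-n f_n) d\Pi < \infty$, and $\Pi_n(d\theta) = \exp(-n f_n(\theta))\Pi(d\theta)/z_n$. Fix $\theta_0$ and write $N_\epsilon = \{\theta : d(\theta, \theta_0) < \epsilon\}$. Suppose $\Pi(N_\epsilon) > 0$ for all $\epsilon > 0$, $f_n \to f$ pointwise, $f$ is continuous at $\theta_0$, and $\liminf_n \inf_{\theta \in N_\epsilon^c} f_n(\theta) > f(\theta_0)$ for all $\epsilon > 0$. Then $\Pi_n(N_\epsilon) \to 1$ for every $\epsilon > 0$. -/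
open MeasureTheory Filter Set
open scoped Topology ENNReal

theorem posterior_concentration_metric
    {Θ : Type*} [MetricSpace Θ] [MeasurableSpace Θ] [BorelSpace Θ]
    (P : Measure Θ) [IsProbabilityMeasure P]
    (fn : ℕ → Θ → ℝ) (hmeas : ∀ n, Measurable (fn n))
    (hint : ∀ n : ℕ, Integrable (fun θ => Real.exp (-(n : ℝ) * fn n θ)) P)
    (θ0 : Θ) (f : Θ → ℝ)
    (hprior : ∀ ε > (0:ℝ), 0 < P (Metric.ball θ0 ε))
    (hconv : ∀ θ, Tendsto (fun n => fn n θ) atTop (𝓝 (f θ)))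
    (hcont : ContinuousAt f θ0)
    (hsep : ∀ ε > (0:ℝ), ∃ β, f θ0 < β ∧
      ∀ᶠ n in atTop, ∀ θ, θ ∉ Metric.ball θ0 ε → β ≤ fn n θ) :
    ∀ ε > (0:ℝ), Tendsto (fun n : ℕ =>
        (∫ θ in Metric.ball θ0 ε, Real.exp (-(n : ℝ) * fn n θ) ∂P) /
        ∫ θ, Real.exp (-(n : ℝ) * fn n θ) ∂P) atTop (𝓝 1) := by
  intro ε hε
  obtain ⟨β, hβ, hev⟩ := hsep ε hε
  -- a small ball on which f < β
  have h1 : ∀ᶠ θ in 𝓝 θ0, f θ < β := hcont.eventually (eventually_lt_nhds hβ)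
  rw [Metric.eventually_nhds_iff] at h1
  obtain ⟨δ, hδ, hfδ⟩ := h1
  set s : Set Θ := Metric.ball θ0 (min δ ε) with hs_def
  have hs_pos : 0 < P s := hprior _ (lt_min hδ hε)
  have hs_sub : s ⊆ Metric.ball θ0 ε := Metric.ball_subset_ball (min_le_right _ _)
  set N : ℕ → ℝ := fun n => ∫ θ in Metric.ball θ0 ε, Real.exp (-(n:ℝ) * fn n θ) ∂P with hN_def
  set R : ℕ → ℝ := fun n => ∫ θ in (Metric.ball θ0 ε)ᶜ, Real.exp (-(n:ℝ) * fn n θ) ∂P with hR_def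
  have hmexp : ∀ n : ℕ, Measurable (fun θ => Real.exp (-(n:ℝ) * fn n θ)) := fun n =>
    ((hmeas n).const_mul (-(n:ℝ))).exp
  have hNnonneg : ∀ n, 0 ≤ N n := fun n =>
    setIntegral_nonneg measurableSet_ball fun θ _ => (Real.exp_pos _).le
  have hRnonneg : ∀ n, 0 ≤ R n := fun n =>
    setIntegral_nonneg measurableSet_ball.compl fun θ _ => (Real.exp_pos _).le
  have hZ : ∀ n : ℕ, (∫ θ, Real.exp (-(n:ℝ) * fn n θ) ∂P) = N n + R n := fun n =>
    (integral_add_compl measurableSet_ball (hint n)).symm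
  -- the lintegral over the ball
  set A : ℕ → ℝ≥0∞ := fun n =>
    ∫⁻ θ in Metric.ball θ0 ε, ENNReal.ofReal (Real.exp (-(n:ℝ) * fn n θ)) ∂P with hA_def
  have hA_lt : ∀ n, A n < ⊤ := fun n =>
    lt_of_le_of_lt (setLIntegral_le_lintegral _ _) (hint n).lintegral_lt_top
  have hNA : ∀ n, N n = (A n).toReal := by
    intro n
    rw [hN_def]
    exact integral_eq_lintegral_of_nonneg_ae (ae_of_all _ fun θ => (Real.exp_pos _).le)
      (hmexp n).aestronglyMeasurable
  -- key claim
  have key : Tendsto (fun n : ℕ => Real.exp ((n:ℝ) * β) * N n) atTop atTop := by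
    set g : ℕ → Θ → ℝ≥0∞ := fun n θ => ENNReal.ofReal (Real.exp ((n:ℝ) * (β - fn n θ)))
      with hg_def
    have hgmeas : ∀ n, Measurable (g n) := fun n =>
      ENNReal.measurable_ofReal.comp (((measurable_const.sub (hmeas n)).const_mul _).exp)
    set E : ℕ → ℝ≥0∞ := fun n => ∫⁻ θ in s, g n θ ∂P with hE_def
    have hE_le : ∀ n, E n ≤ ENNReal.ofReal (Real.exp ((n:ℝ) * β)) * A n := by
      intro n
      have heq : ∀ θ, g n θ =
          ENNReal.ofReal (Real.exp ((n:ℝ) * β)) * ENNReal.ofReal (Real.exp (-(n:ℝ) * fn n θ)) := by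
        intro θ
        rw [hg_def, ← ENNReal.ofReal_mul (Real.exp_nonneg _), ← Real.exp_add]
        ring_nf
      calc E n = ∫⁻ θ in s, ENNReal.ofReal (Real.exp ((n:ℝ) * β)) *
            ENNReal.ofReal (Real.exp (-(n:ℝ) * fn n θ)) ∂P := by
              simp only [hE_def]; exact lintegral_congr fun θ => heq θ
        _ = ENNReal.ofReal (Real.exp ((n:ℝ) * β)) *
            ∫⁻ θ in s, ENNReal.ofReal (Real.exp (-(n:ℝ) * fn n θ)) ∂P :=
              lintegral_const_mul _ (ENNReal.measurable_ofReal.comp (hmexp n))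
        _ ≤ ENNReal.ofReal (Real.exp ((n:ℝ) * β)) * A n :=
              mul_le_mul_right (lintegral_mono_set hs_sub) _
    have hliminf : liminf E atTop = ⊤ := by
      have hpt : ∀ θ ∈ s, Tendsto (fun n => g n θ) atTop (𝓝 ⊤) := by
        intro θ hθ
        have hfθ : f θ < β := hfδ (lt_of_lt_of_le (Metric.mem_ball.mp hθ) (min_le_left _ _))
        have hc : Tendsto (fun n => β - fn n θ) atTop (𝓝 (β - f θ)) :=
          tendsto_const_nhds.sub (hconv θ)
        have hmul : Tendsto (fun n : ℕ => (n:ℝ) * (β - fn n θ)) atTop atTop :=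
          Tendsto.atTop_mul_pos (by linarith) tendsto_natCast_atTop_atTop hc
        exact ENNReal.tendsto_ofReal_atTop.comp (Real.tendsto_exp_atTop.comp hmul)
      have hfatou := lintegral_liminf_le (μ := P.restrict s) (u := atTop) hgmeas
      have hint_top : ∫⁻ θ in s, liminf (fun n => g n θ) atTop ∂P = ⊤ := by
        rw [setLIntegral_congr_fun_ae measurableSet_ball
          (ae_of_all _ fun θ hθ => ((hpt θ hθ).liminf_eq)), setLIntegral_const]
        exact ENNReal.top_mul hs_pos.ne'
      rw [← top_le_iff]
      calc (⊤ : ℝ≥0∞) = ∫⁻ θ in s, liminf (fun n => g n θ) atTop ∂P := hint_top.symm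
        _ ≤ liminf E atTop := hfatou
    rw [tendsto_atTop]
    intro M
    have hM : ENNReal.ofReal M < liminf E atTop := by
      rw [hliminf]; exact ENNReal.ofReal_lt_top
    filter_upwards [eventually_lt_of_lt_liminf hM
      ⟨⊥, eventually_map.2 (Eventually.of_forall fun _ => bot_le)⟩] with n hn
    have h2 : ENNReal.ofReal M ≤ ENNReal.ofReal (Real.exp ((n:ℝ) * β)) * A n :=
      hn.le.trans (hE_le n)
    have hne : ENNReal.ofReal (Real.exp ((n:ℝ) * β)) * A n ≠ ⊤ :=
      ENNReal.mul_ne_top ENNReal.ofReal_ne_top (hA_lt n).ne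
    calc M ≤ (ENNReal.ofReal M).toReal := by
          rcases le_total M 0 with h | h
          · exact h.trans ENNReal.toReal_nonneg
          · rw [ENNReal.toReal_ofReal h]
      _ ≤ (ENNReal.ofReal (Real.exp ((n:ℝ) * β)) * A n).toReal := ENNReal.toReal_mono hne h2
      _ = Real.exp ((n:ℝ) * β) * (A n).toReal := by
          rw [ENNReal.toReal_mul, ENNReal.toReal_ofReal (Real.exp_nonneg _)]
      _ = Real.exp ((n:ℝ) * β) * N n := by rw [hNA]
  -- consequences of the key claim and separation
  have hNpos : ∀ᶠ n in atTop, 0 < N n := by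
    filter_upwards [key.eventually_ge_atTop 1] with n hn
    nlinarith [Real.exp_pos ((n:ℝ) * β), hNnonneg n]
  have hRle : ∀ᶠ n in atTop, R n ≤ Real.exp (-(n:ℝ) * β) := by
    filter_upwards [hev] with n hn
    have hb : R n ≤ (P (Metric.ball θ0 ε)ᶜ).toReal * Real.exp (-(n:ℝ) * β) := by
      calc R n ≤ ∫ _ in (Metric.ball θ0 ε)ᶜ, Real.exp (-(n:ℝ) * β) ∂P := by
            refine setIntegral_mono_on ((hint n).integrableOn)
              ((integrableOn_const_iff).mpr (Or.inr (measure_lt_top _ _)))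
              measurableSet_ball.compl fun θ hθ => ?_
            have h4 : 0 ≤ (n:ℝ) * (fn n θ - β) :=
              mul_nonneg (Nat.cast_nonneg n) (sub_nonneg.mpr (hn θ hθ))
            exact Real.exp_le_exp.mpr (by nlinarith)
        _ = (P (Metric.ball θ0 ε)ᶜ).toReal * Real.exp (-(n:ℝ) * β) := by
            rw [setIntegral_const, smul_eq_mul, measureReal_def]
    refine hb.trans ?_
    have hle1 : (P (Metric.ball θ0 ε)ᶜ).toReal ≤ 1 := by
      calc (P (Metric.ball θ0 ε)ᶜ).toReal ≤ (1 : ℝ≥0∞).toReal :=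
            ENNReal.toReal_mono ENNReal.one_ne_top prob_le_one
        _ = 1 := by simp
    nlinarith [Real.exp_pos (-(n:ℝ) * β)]
  -- squeeze
  have hup : ∀ᶠ n in atTop, N n / (N n + R n) ≤ 1 := by
    filter_upwards [hNpos] with n hn
    exact div_le_one_of_le₀ (by linarith [hRnonneg n]) (by linarith [hRnonneg n])
  have hlow : ∀ᶠ n : ℕ in atTop,
      1 - (Real.exp ((n:ℝ) * β) * N n)⁻¹ ≤ N n / (N n + R n) := by
    filter_upwards [hNpos, hRle] with n hN hR
    have hZpos : 0 < N n + R n := by linarith [hRnonneg n]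
    have h2 : R n / (N n + R n) ≤ Real.exp (-(n:ℝ) * β) / N n :=
      div_le_div₀ (Real.exp_nonneg _) hR hN (by linarith [hRnonneg n])
    have h3 : N n / (N n + R n) = 1 - R n / (N n + R n) := by field_simp; ring
    have h4 : Real.exp (-(n:ℝ) * β) / N n = (Real.exp ((n:ℝ) * β) * N n)⁻¹ := by
      rw [neg_mul, Real.exp_neg, mul_inv, div_eq_mul_inv]
    rw [h3]
    linarith [h4 ▸ h2]
  have hlim : Tendsto (fun n : ℕ => 1 - (Real.exp ((n:ℝ) * β) * N n)⁻¹) atTop (𝓝 1) := by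
    have h0 : Tendsto (fun n : ℕ => (Real.exp ((n:ℝ) * β) * N n)⁻¹) atTop (𝓝 0) :=
      key.inv_tendsto_atTop
    have h5 := (tendsto_const_nhds (x := (1:ℝ))).sub h0
    simpa using h5
  have hmain := tendsto_of_tendsto_of_tendsto_of_le_of_le' hlim tendsto_const_nhds hlow hup
  exact hmain.congr fun n => by rw [hZ n]
end

section
/- Let $\Theta \subseteq \mathbb{R}^D$, let $E \subseteq \Theta$ be convex and open in $\mathbb{R}^D$, and $\theta_0 \in E$. Let $f_n : \Theta \to \mathbb{R}$ be convex functions with $f_n \to f$ pointwise on $E$. If $f'$ exists in a neighborhood of $\theta_0$, $f'(\theta_0) = 0$, and the Hessian $f''(\theta_0)$ exists and is positive definite, then $f(\theta) > f(\theta_0)$ for all $\theta \in E \setminus \{\theta_0\}$. -/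
open Filter Set
open scoped Topology

theorem limit_of_convex_strict_local_min_is_strict_global_min
    {D : ℕ} (Θ E : Set (EuclideanSpace ℝ (Fin D))) (hEΘ : E ⊆ Θ)
    (hEconv : Convex ℝ E) (hEopen : IsOpen E)
    (θ0 : EuclideanSpace ℝ (Fin D)) (hθ0 : θ0 ∈ E)
    (fn : ℕ → EuclideanSpace ℝ (Fin D) → ℝ) (f : EuclideanSpace ℝ (Fin D) → ℝ)
    (hconvex : ∀ (n : ℕ), ∀ x ∈ Θ, ∀ y ∈ Θ, ∀ t ∈ Set.Icc (0:ℝ) 1,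
      t • x + (1 - t) • y ∈ Θ →
      fn n (t • x + (1 - t) • y) ≤ t * fn n x + (1 - t) * fn n y)
    (hlim : ∀ θ ∈ E, Tendsto (fun n => fn n θ) atTop (𝓝 (f θ)))
    (hdiff : ∀ᶠ θ in 𝓝 θ0, DifferentiableAt ℝ f θ)
    (hgrad0 : fderiv ℝ f θ0 = 0)
    (hf'' : DifferentiableAt ℝ (fderiv ℝ f) θ0)
    (hposdef : ∀ v : EuclideanSpace ℝ (Fin D), v ≠ 0 →
      0 < fderiv ℝ (fderiv ℝ f) θ0 v v) :
    ∀ θ ∈ E, θ ≠ θ0 → f θ0 < f θ := by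
  -- f is convex on E as a pointwise limit of convex functions
  have hfE : ConvexOn ℝ E f := by
    refine ⟨hEconv, fun x hx y hy a b ha hb hab => ?_⟩
    have hmem : a • x + b • y ∈ E := hEconv hx hy ha hb hab
    have hb' : b = 1 - a := by linarith
    have key : ∀ n, fn n (a • x + b • y) ≤ a * fn n x + b * fn n y := by
      intro n
      subst hb'
      exact hconvex n x (hEΘ hx) y (hEΘ hy) a ⟨ha, by linarith⟩ (hEΘ hmem)
    exact le_of_tendsto_of_tendsto' (hlim _ hmem)
      (((hlim x hx).const_mul a).add ((hlim y hy).const_mul b)) key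
  intro θ hθ hne
  set v : EuclideanSpace ℝ (Fin D) := θ - θ0 with hv
  have hvne : v ≠ 0 := sub_ne_zero.mpr hne
  set c : ℝ →ᵃ[ℝ] EuclideanSpace ℝ (Fin D) := AffineMap.lineMap θ0 θ with hc
  have hc0 : c 0 = θ0 := AffineMap.lineMap_apply_zero θ0 θ
  have hc1 : c 1 = θ := AffineMap.lineMap_apply_one θ0 θ
  have hcderiv : ∀ t : ℝ, HasDerivAt c v t := fun t => AffineMap.hasDerivAt_lineMap
  set g : ℝ → ℝ := f ∘ c with hg
  have hgconv : ConvexOn ℝ (c ⁻¹' E) g := hfE.comp_affineMap c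
  have hIcc : Icc (0:ℝ) 1 ⊆ c ⁻¹' E := by
    intro t ht
    have : c t = (1 - t) • θ0 + t • θ := by
      simp only [hc, AffineMap.lineMap_apply, vsub_eq_sub, vadd_eq_add]
      module
    simpa [Set.mem_preimage, this] using
      hEconv hθ0 hθ (by linarith [ht.2]) ht.1 (by ring)
  -- the directional derivative function
  set φ : ℝ → ℝ := fun t => fderiv ℝ f (c t) v with hφ
  have hφ0 : φ 0 = 0 := by simp [hφ, hc0, hgrad0]
  -- φ has positive derivative at 0
  have hφderiv : HasDerivAt φ (fderiv ℝ (fderiv ℝ f) θ0 v v) 0 := by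
    have hf2 : HasFDerivAt (fderiv ℝ f) (fderiv ℝ (fderiv ℝ f) θ0) (c 0) := by
      rw [hc0]; exact hf''.hasFDerivAt
    have h1 : HasDerivAt (fun t => fderiv ℝ f (c t)) (fderiv ℝ (fderiv ℝ f) θ0 v) 0 :=
      hf2.comp_hasDerivAt 0 (hcderiv 0)
    have := h1.clm_apply (hasDerivAt_const 0 v)
    simpa [hc0, hgrad0] using this
  have hL : 0 < fderiv ℝ (fderiv ℝ f) θ0 v v := hposdef v hvne
  -- so φ is positive slightly to the right of 0
  have hslope : Tendsto (slope φ 0) (𝓝[≠] 0) (𝓝 (fderiv ℝ (fderiv ℝ f) θ0 v v)) :=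
    hasDerivAt_iff_tendsto_slope.mp hφderiv
  have hpos : ∀ᶠ t in 𝓝[>] (0:ℝ), 0 < φ t := by
    have h1 : ∀ᶠ t in 𝓝[>] (0:ℝ), 0 < slope φ 0 t :=
      (hslope.mono_left (nhdsWithin_mono _ (fun t ht => ht.ne'))).eventually
        (eventually_gt_nhds hL)
    filter_upwards [h1, self_mem_nhdsWithin] with t h1 (ht : 0 < t)
    have : slope φ 0 t = φ t / t := by simp [slope_def_field, hφ0]
    rw [this] at h1
    exact (div_pos_iff.mp h1).resolve_right (fun h => absurd ht (not_lt.mpr h.2.le)) |>.1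
  -- f is differentiable at c t for t near 0
  have hdiffc : ∀ᶠ t in 𝓝[>] (0:ℝ), DifferentiableAt ℝ f (c t) := by
    have : Tendsto c (𝓝 0) (𝓝 θ0) := by
      simpa [hc0] using (hcderiv 0).continuousAt.tendsto
    exact nhdsWithin_le_nhds (this.eventually hdiff)
  have hlt1 : ∀ᶠ t in 𝓝[>] (0:ℝ), t < 1 :=
    nhdsWithin_le_nhds (eventually_lt_nhds one_pos)
  obtain ⟨t0, hφt0, hdt0, ht01, (ht0 : (0:ℝ) < t0)⟩ :=
    (hpos.and (hdiffc.and (hlt1.and self_mem_nhdsWithin))).exists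
  -- derivative of g
  have hg' : ∀ t : ℝ, DifferentiableAt ℝ f (c t) → HasDerivAt g (φ t) t := fun t hd =>
    hd.hasFDerivAt.comp_hasDerivAt t (hcderiv t)
  have h0S : (0:ℝ) ∈ c ⁻¹' E := hIcc ⟨le_refl 0, zero_le_one⟩
  have ht0S : t0 ∈ c ⁻¹' E := hIcc ⟨ht0.le, ht01.le⟩
  have h1S : (1:ℝ) ∈ c ⁻¹' E := hIcc ⟨zero_le_one, le_refl 1⟩
  -- g 0 ≤ g t0
  have hdf0 : DifferentiableAt ℝ f θ0 := hdiff.self_of_nhds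
  have h0le : g 0 ≤ g t0 := by
    have := hgconv.le_slope_of_hasDerivAt h0S ht0S ht0
      (by simpa [hφ0] using hg' 0 (by rwa [hc0]))
    rw [slope_def_field, le_div_iff₀ (by linarith : (0:ℝ) < t0 - 0)] at this
    linarith
  -- g t0 < g 1
  have ht0lt : g t0 < g 1 := by
    have := hgconv.le_slope_of_hasDerivAt ht0S h1S ht01 (hg' t0 hdt0)
    rw [slope_def_field, le_div_iff₀ (by linarith : (0:ℝ) < 1 - t0)] at this
    have h3 : 0 < φ t0 * (1 - t0) := mul_pos hφt0 (by linarith)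
    linarith
  calc f θ0 = g 0 := by simp [hg, hc0]
    _ ≤ g t0 := h0le
    _ < g 1 := ht0lt
    _ = f θ := by simp [hg, hc1]
end

section
/- Let $\Theta \subseteq \mathbb{R}^D$, let $E \subseteq \Theta$ be convex and open, and $\theta_0 \in E$. Let $f_n : \Theta \to \mathbb{R}$ be convex with $f_n \to f$ pointwise on $E$, and suppose $f(\theta) > f(\theta_0)$ for all $\theta \in E \setminus \{\theta_0\}$. Then for any $\epsilon > 0$, $\liminf_{n} \inf_{\theta \in \Theta \setminus B_\epsilon(\theta_0)} f_n(\theta) > f(\theta_0)$, where $B_\epsilon(\theta_0)$ is the Euclidean ball of radius $\epsilon$ around $\theta_0$. -/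
open Filter Set
open scoped Topology

private lemma coord_abs_le_norm {D : ℕ} (v : EuclideanSpace ℝ (Fin D)) (i : Fin D) :
    |v i| ≤ ‖v‖ := by
  rw [EuclideanSpace.norm_eq, ← Real.sqrt_sq_eq_abs]
  apply Real.sqrt_le_sqrt
  refine Finset.single_le_sum (f := fun j => ‖v j‖ ^ 2) (fun j _ => by positivity)
    (Finset.mem_univ i) |>.trans_eq' ?_
  simp [Real.norm_eq_abs, sq_abs]

set_option maxHeartbeats 1000000 in
theorem convex_strict_min_gives_liminf_separation
    {D : ℕ} (Θ E : Set (EuclideanSpace ℝ (Fin D))) (hEΘ : E ⊆ Θ)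
    (hEconv : Convex ℝ E) (hEopen : IsOpen E)
    (θ0 : EuclideanSpace ℝ (Fin D)) (hθ0 : θ0 ∈ E)
    (fn : ℕ → EuclideanSpace ℝ (Fin D) → ℝ) (f : EuclideanSpace ℝ (Fin D) → ℝ)
    (hconvex : ∀ (n : ℕ), ∀ x ∈ Θ, ∀ y ∈ Θ, ∀ t ∈ Set.Icc (0:ℝ) 1,
      t • x + (1 - t) • y ∈ Θ →
      fn n (t • x + (1 - t) • y) ≤ t * fn n x + (1 - t) * fn n y)
    (hlim : ∀ θ ∈ E, Tendsto (fun n => fn n θ) atTop (𝓝 (f θ)))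
    (hmin : ∀ θ ∈ E, θ ≠ θ0 → f θ0 < f θ) :
    ∀ ε > (0:ℝ), ∃ β, f θ0 < β ∧
      ∀ᶠ n in atTop, ∀ θ ∈ Θ \ Metric.ball θ0 ε, β ≤ fn n θ := by
  intro ε hε
  by_cases hne : (Θ \ Metric.ball θ0 ε).Nonempty
  swap
  · exact ⟨f θ0 + 1, by linarith, Filter.Eventually.of_forall fun n θ hθ =>
      absurd ⟨θ, hθ⟩ hne⟩
  obtain ⟨θ1, hθ1Θ, hθ1b⟩ := hne
  have hθ1d : ε ≤ dist θ1 θ0 := by simpa [Metric.mem_ball, not_lt] using hθ1b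
  -- radii
  obtain ⟨ρ, hρpos, hρ⟩ := Metric.isOpen_iff.1 hEopen θ0 hθ0
  set sD := Real.sqrt D with hsD
  have hsD0 : 0 ≤ sD := Real.sqrt_nonneg _
  set R := ρ / (2 * (sD + 1)) with hR
  have hRpos : 0 < R := by positivity
  have hRρ : R < ρ := by
    rw [hR, div_lt_iff₀ (by positivity)]; nlinarith
  have hcbE : Metric.closedBall θ0 R ⊆ E := fun x hx =>
    hρ (Metric.mem_ball.2 (lt_of_le_of_lt (Metric.mem_closedBall.1 hx) hRρ))
  set e := min R ε with he
  have hepos : 0 < e := lt_min hRpos hε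
  set r := e / 3 with hr
  set r' := e / 2 with hr'
  have hr_pos : 0 < r := by positivity
  have hrr' : r < r' := by rw [hr, hr']; linarith
  have hr'R : r' < R := by
    have : e ≤ R := min_le_left _ _
    rw [hr']; linarith
  have hrε : r < ε := by
    have : e ≤ ε := min_le_right _ _
    rw [hr]; linarith
  have hrR : r ≤ R := le_of_lt (hrr'.trans hr'R)
  -- convexity of fn on E
  have hfnE : ∀ n, ConvexOn ℝ E (fn n) := by
    intro n
    refine ⟨hEconv, fun x hx y hy a b ha hb hab => ?_⟩
    have hmem : a • x + b • y ∈ E := hEconv hx hy ha hb hab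
    have h1b : (1 : ℝ) - a = b := by linarith
    have := hconvex n x (hEΘ hx) y (hEΘ hy) a ⟨ha, by linarith⟩
      (by rw [h1b]; exact hEΘ hmem)
    rwa [h1b] at this
  -- convexity and continuity of f on E
  have hfconv : ConvexOn ℝ E f := by
    refine ⟨hEconv, fun x hx y hy a b ha hb hab => ?_⟩
    have hmem : a • x + b • y ∈ E := hEconv hx hy ha hb hab
    refine le_of_tendsto_of_tendsto' (hlim _ hmem)
      (((hlim x hx).const_mul a).add ((hlim y hy).const_mul b)) fun n => ?_
    exact (hfnE n).2 hx hy ha hb hab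
  have hfcont : ContinuousOn f E := hfconv.continuousOn hEopen
  -- the sphere
  set S := Metric.sphere θ0 r with hS
  have hSsubE : S ⊆ E := fun s hs =>
    hcbE (Metric.mem_closedBall.2 (by rw [Metric.mem_sphere.1 hs]; exact hrR))
  have hSne : S.Nonempty := by
    refine ⟨θ0 + (r / dist θ1 θ0) • (θ1 - θ0), ?_⟩
    have hd0 : dist θ1 θ0 ≠ 0 := ne_of_gt (lt_of_lt_of_le hε hθ1d)
    rw [hS, Metric.mem_sphere, dist_eq_norm, add_sub_cancel_left, norm_smul,
      Real.norm_eq_abs, abs_of_nonneg (by positivity), ← dist_eq_norm]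
    field_simp
  have hScomp : IsCompact S := isCompact_sphere θ0 r
  obtain ⟨sstar, hsstarS, hsmin⟩ := hScomp.exists_isMinOn hSne (hfcont.mono hSsubE)
  have hsstar_ne : sstar ≠ θ0 := by
    intro h
    have h0 : dist sstar θ0 = r := Metric.mem_sphere.1 hsstarS
    rw [h, dist_self] at h0
    exact hr_pos.ne h0
  set g := f sstar - f θ0 with hg
  have hgpos : 0 < g := sub_pos.2 (hmin sstar (hSsubE hsstarS) hsstar_ne)
  -- the cube vertex set
  set V : Set (EuclideanSpace ℝ (Fin D)) :=
    WithLp.ofLp ⁻¹' Set.univ.pi (fun i => ({θ0 i - R, θ0 i + R} : Set ℝ)) with hV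
  have hVfin : V.Finite := Set.Finite.preimage
    (fun _ _ _ _ h => (WithLp.linearEquiv 2 ℝ (Fin D → ℝ)).injective h)
    (Set.Finite.pi (fun i => Set.toFinite _))
  have hVE : V ⊆ E := by
    intro v hv
    apply hρ
    rw [Metric.mem_ball, dist_eq_norm, EuclideanSpace.norm_eq]
    have hcoord : ∀ i : Fin D, ‖(v - θ0) i‖ ^ 2 = R ^ 2 := by
      intro i
      have h1 : (v - θ0) i = v i - θ0 i := rfl
      rcases hv i (Set.mem_univ i) with h | h <;>
        · rw [h1, h]; rw [Real.norm_eq_abs, sq_abs]; ring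
    have hsum : (∑ i : Fin D, ‖(v - θ0) i‖ ^ 2) = (D : ℝ) * R ^ 2 := by
      rw [Finset.sum_congr rfl (fun i _ => hcoord i)]
      simp [Finset.sum_const, Finset.card_univ, mul_comm]
    rw [hsum]
    have hsqrt : Real.sqrt ((D : ℝ) * R ^ 2) = sD * R := by
      rw [Real.sqrt_mul (Nat.cast_nonneg D), Real.sqrt_sq hRpos.le, hsD]
    rw [hsqrt]
    have : sD * R * (2 * (sD + 1)) = sD * ρ := by
      rw [hR]; field_simp
    nlinarith
  have hhull : ∀ x ∈ Metric.closedBall θ0 R, x ∈ convexHull ℝ V := by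
    intro x hx
    rw [hV]
    suffices hx' : WithLp.ofLp x ∈
        convexHull ℝ (Set.univ.pi (fun i => ({θ0 i - R, θ0 i + R} : Set ℝ))) by
      have h := Set.mem_image_of_mem (WithLp.linearEquiv 2 ℝ (Fin D → ℝ)).symm.toLinearMap hx'
      rw [LinearMap.image_convexHull] at h
      convert h using 2
      · ext v
        constructor
        · intro hv; exact ⟨_, hv, rfl⟩
        · rintro ⟨y, hy, rfl⟩; exact hy
      · simp
    apply mem_convexHull_pi
    intro i _
    rw [convexHull_pair, segment_eq_Icc (by linarith)]
    have h2 := coord_abs_le_norm (x - θ0) i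
    have h1 : (x - θ0) i = x i - θ0 i := rfl
    rw [h1, ← dist_eq_norm] at h2
    have h3 : |x i - θ0 i| ≤ R := h2.trans (Metric.mem_closedBall.1 hx)
    rw [abs_le] at h3
    exact ⟨by linarith [h3.1], by linarith [h3.2]⟩
  -- bound on f over V
  obtain ⟨M, hM⟩ := (hVfin.image f).bddAbove
  have hMV : ∀ v ∈ V, f v ≤ M := fun v hv => hM (Set.mem_image_of_mem f hv)
  set γ := min 1 (g / 8) with hγ
  have hγpos : 0 < γ := lt_min one_pos (by linarith)
  -- constants
  set L := 2 * (f θ0 - 1) - (M + 1) with hL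
  set M' := max (M + 1) (-L) with hM'
  set εL := R - r' with hεL
  have hεLpos : 0 < εL := by rw [hεL]; linarith
  set Kr := max (2 * M' / εL) 0 with hKr
  have hKr0 : 0 ≤ Kr := le_max_right _ _
  set δ := (g / 8) / (Kr + 1) with hδ
  have hδpos : 0 < δ := by positivity
  have hKδ : Kr * δ ≤ g / 8 := by
    have h1 : (Kr + 1) * δ = g / 8 := by
      rw [hδ]; field_simp
    nlinarith
  -- finite subcover of the sphere
  obtain ⟨T, hTS, hTcov⟩ := hScomp.elim_nhds_subcover (fun s => Metric.ball s δ)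
    (fun s _ => Metric.ball_mem_nhds s hδpos)
  -- eventual facts
  have Ev1 : ∀ᶠ n in atTop, ∀ v ∈ V, fn n v < M + 1 := by
    rw [eventually_all_finite hVfin]
    intro v hv
    exact (hlim v (hVE hv)).eventually (gt_mem_nhds (by linarith [hMV v hv]))
  have Ev2 : ∀ᶠ n in atTop, |fn n θ0 - f θ0| < γ := by
    have := (hlim θ0 hθ0).eventually (Metric.ball_mem_nhds (f θ0) hγpos)
    simpa [Real.dist_eq] using this
  have Ev3 : ∀ᶠ n in atTop, ∀ s ∈ T, f s - g / 8 < fn n s := by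
    rw [Filter.eventually_all_finset]
    intro s hs
    exact (hlim s (hSsubE (hTS s hs))).eventually (lt_mem_nhds (by linarith))
  refine ⟨f θ0 + g / 2, by linarith, ?_⟩
  filter_upwards [Ev1, Ev2, Ev3] with n h1 h2 h3
  -- uniform upper bound on the ball
  have hub : ∀ x ∈ Metric.closedBall θ0 R, fn n x ≤ M + 1 := by
    intro x hx
    obtain ⟨v, hvV, hle⟩ := (hfnE n).exists_ge_of_mem_convexHull hVE (hhull x hx)
    exact hle.trans (h1 v hvV).le
  have hγ1 : γ ≤ 1 := min_le_left _ _
  have hγg : γ ≤ g / 8 := min_le_right _ _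
  have habs2 := abs_lt.1 h2
  -- uniform lower bound on the ball
  have hlb : ∀ x ∈ Metric.closedBall θ0 R, L ≤ fn n x := by
    intro x hx
    set y := θ0 + (θ0 - x) with hy
    have hyB : y ∈ Metric.closedBall θ0 R := by
      rw [Metric.mem_closedBall, dist_eq_norm, hy, add_sub_cancel_left, norm_sub_rev,
        ← dist_eq_norm]
      exact Metric.mem_closedBall.1 hx
    have hcomb := (hfnE n).2 (hcbE hx) (hcbE hyB)
      (by norm_num : (0:ℝ) ≤ 1/2) (by norm_num : (0:ℝ) ≤ 1/2) (by norm_num)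
    have hmid : (1/2 : ℝ) • x + (1/2 : ℝ) • y = θ0 := by rw [hy]; module
    rw [hmid] at hcomb
    simp only [smul_eq_mul] at hcomb
    have hyub := hub y hyB
    have hθ0lb : f θ0 - 1 ≤ fn n θ0 := by linarith [habs2.1]
    rw [hL]
    linarith
  have habs : ∀ a : EuclideanSpace ℝ (Fin D), dist a θ0 < R → |fn n a| ≤ M' := by
    intro a ha
    have ha' : a ∈ Metric.closedBall θ0 R := Metric.mem_closedBall.2 ha.le
    rw [abs_le]
    constructor
    · have h4 := hlb a ha'
      have h5 : -L ≤ M' := le_max_right _ _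
      linarith
    · exact (hub a ha').trans (le_max_left _ _)
  -- uniform Lipschitz bound
  have hlip : LipschitzOnWith (2 * M' / εL).toNNReal (fn n) (Metric.ball θ0 r') := by
    have hconvBall : ConvexOn ℝ (Metric.ball θ0 R) (fn n) :=
      (hfnE n).subset (fun z hz => hcbE (Metric.ball_subset_closedBall hz))
        (convex_ball θ0 R)
    have := hconvBall.lipschitzOnWith_of_abs_le hεLpos habs
    have hr'eq : R - εL = r' := by rw [hεL]; ring
    rwa [hr'eq] at this
  -- eventual lower bound on the sphere
  have hsph : ∀ s ∈ S, f θ0 + (3/4) * g ≤ fn n s := by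
    intro s hs
    have hsball : s ∈ Metric.ball θ0 r' := by
      rw [Metric.mem_ball, Metric.mem_sphere.1 hs]; exact hrr'
    obtain ⟨i, hiT, hsi⟩ := Set.mem_iUnion₂.1 (hTcov hs)
    have hiS : i ∈ S := hTS i hiT
    have hiball : i ∈ Metric.ball θ0 r' := by
      rw [Metric.mem_ball, Metric.mem_sphere.1 hiS]; exact hrr'
    have hd := hlip.dist_le_mul s hsball i hiball
    rw [Real.coe_toNNReal'] at hd
    have hdsi : dist s i < δ := Metric.mem_ball.1 hsi
    have h5 : dist (fn n s) (fn n i) ≤ g / 8 := by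
      refine hd.trans ?_
      have : Kr * dist s i ≤ Kr * δ := by
        apply mul_le_mul_of_nonneg_left hdsi.le hKr0
      rw [← hKr] at *
      calc (max (2 * M' / εL) 0) * dist s i = Kr * dist s i := by rw [hKr]
        _ ≤ Kr * δ := this
        _ ≤ g / 8 := hKδ
    have h6 := h3 i hiT
    have h7 : f θ0 + g ≤ f i := by
      have h8 := isMinOn_iff.1 hsmin i hiS
      rw [hg]; linarith
    rw [Real.dist_eq] at h5
    have h9 := abs_le.1 h5
    linarith [h9.1]
  have hθ0ub : fn n θ0 ≤ f θ0 + g / 8 := by linarith [habs2.2]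
  -- final argument
  intro θ hθ
  obtain ⟨hθΘ, hθb⟩ := hθ
  have hdθ : ε ≤ dist θ θ0 := by simpa [Metric.mem_ball, not_lt] using hθb
  have hdpos : 0 < dist θ θ0 := lt_of_lt_of_le hε hdθ
  set t := r / dist θ θ0 with ht
  have htpos : 0 < t := div_pos hr_pos hdpos
  have ht1 : t ≤ 1 := by
    rw [ht, div_le_one hdpos]; linarith
  set s := t • θ + (1 - t) • θ0 with hs
  have hsS : s ∈ S := by
    have hsub : s - θ0 = t • (θ - θ0) := by rw [hs]; module
    rw [hS, Metric.mem_sphere, dist_eq_norm, hsub, norm_smul, Real.norm_eq_abs,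
      abs_of_pos htpos, ht, ← dist_eq_norm]
    field_simp
  have hsΘ : s ∈ Θ := hEΘ (hSsubE hsS)
  have hcb := hconvex n θ hθΘ θ0 (hEΘ hθ0) t ⟨htpos.le, ht1⟩ (by rw [← hs]; exact hsΘ)
  rw [← hs] at hcb
  have h8 := hsph s hsS
  -- conclude : f θ0 + g/2 ≤ fn n θ
  have key : t * (f θ0 + 3/4 * g) ≤ t * fn n θ := by
    have hprod : (1 - t) * fn n θ0 ≤ (1 - t) * (f θ0 + g / 8) :=
      mul_le_mul_of_nonneg_left hθ0ub (by linarith)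
    nlinarith [mul_nonneg (by linarith : (0:ℝ) ≤ 1 - t) hgpos.le]
  have h10 : f θ0 + 3/4 * g ≤ fn n θ := le_of_mul_le_mul_left key htpos
  linarith
end

section
/- Let $E \subseteq \mathbb{R}^D$ be open and convex and $\theta_0 \in E$. Let $f_n : E \to \mathbb{R}$ have continuous third derivatives. Suppose: (1) there exist $\theta_n \in E$ with $\theta_n \to \theta_0$ and $f_n'(\theta_n) = 0$ for all sufficiently large $n$; (2) $f_n''(\theta_0) \to H_0$ for some positive definite $H_0$; and (3) the third-derivative tensors $(f_n''')$ are uniformly bounded on $E$. Then, with $H_n = f_n''(\theta_n)$, there exist $\epsilon_0, c_0 > 0$ such that for all sufficiently large $n$: $H_n \to H_0$, and for all $x$ with $|x| < \epsilon_0$, the remainder $r_n(x) := f_n(\theta_n + x) - f_n(\theta_n) - \frac{1}{2} x^\top H_n x$ satisfies $|r_n(x)| \le c_0 |x|^3$. -/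
open Filter Set
open scoped Topology

noncomputable instance instNACG3 (D : ℕ) : NormedAddCommGroup (EuclideanSpace ℝ (Fin D) →L[ℝ] EuclideanSpace ℝ (Fin D) →L[ℝ] EuclideanSpace ℝ (Fin D) →L[ℝ] ℝ) :=
  @ContinuousLinearMap.toNormedAddCommGroup ℝ ℝ (EuclideanSpace ℝ (Fin D)) (EuclideanSpace ℝ (Fin D) →L[ℝ] EuclideanSpace ℝ (Fin D) →L[ℝ] ℝ) _ ContinuousLinearMap.toNormedAddCommGroup _ _ _ ContinuousLinearMap.toNormedSpace (RingHom.id ℝ) _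

noncomputable instance instNS3 (D : ℕ) : NormedSpace ℝ (EuclideanSpace ℝ (Fin D) →L[ℝ] EuclideanSpace ℝ (Fin D) →L[ℝ] EuclideanSpace ℝ (Fin D) →L[ℝ] ℝ) :=
  @ContinuousLinearMap.toNormedSpace ℝ ℝ (EuclideanSpace ℝ (Fin D)) (EuclideanSpace ℝ (Fin D) →L[ℝ] EuclideanSpace ℝ (Fin D) →L[ℝ] ℝ) _ ContinuousLinearMap.toSeminormedAddCommGroup _ _ _ ContinuousLinearMap.toNormedSpace (RingHom.id ℝ) _ ℝ _ ContinuousLinearMap.toNormedSpace _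

set_option maxHeartbeats 4000000 in
theorem quadratic_representation_sufficient_conditions
    {D : ℕ} (E : Set (EuclideanSpace ℝ (Fin D)))
    (hEopen : IsOpen E) (hEconv : Convex ℝ E)
    (θ0 : EuclideanSpace ℝ (Fin D)) (hθ0 : θ0 ∈ E)
    (fn : ℕ → EuclideanSpace ℝ (Fin D) → ℝ)
    (hsmooth : ∀ n, ContDiffOn ℝ 3 (fn n) E)
    (θn : ℕ → EuclideanSpace ℝ (Fin D)) (hθnE : ∀ n, θn n ∈ E)
    (hθn : Tendsto θn atTop (𝓝 θ0))
    (hcrit : ∀ᶠ n in atTop, fderiv ℝ (fn n) (θn n) = 0)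
    (H0 : EuclideanSpace ℝ (Fin D) →L[ℝ] EuclideanSpace ℝ (Fin D) →L[ℝ] ℝ)
    (hH0lim : Tendsto (fun n => fderiv ℝ (fderiv ℝ (fn n)) θ0) atTop (𝓝 H0))
    (hH0posdef : ∀ v : EuclideanSpace ℝ (Fin D), v ≠ 0 → 0 < H0 v v)
    (hthird : ∃ C, ∀ (n : ℕ), ∀ θ ∈ E, ‖iteratedFDeriv ℝ 3 (fn n) θ‖ ≤ C) :
    Tendsto (fun n => fderiv ℝ (fderiv ℝ (fn n)) (θn n)) atTop (𝓝 H0) ∧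
    ∃ ε0 > (0:ℝ), ∃ c0 > (0:ℝ), ∀ᶠ n in atTop,
      ∀ x : EuclideanSpace ℝ (Fin D), ‖x‖ < ε0 →
        |fn n (θn n + x) - fn n (θn n)
          - (1/2) * fderiv ℝ (fderiv ℝ (fn n)) (θn n) x x| ≤ c0 * ‖x‖ ^ 3 := by
  obtain ⟨C, hC⟩ := hthird
  have hC0 : 0 ≤ C := le_trans (norm_nonneg _) (hC 0 θ0 hθ0)
  set g : ℕ → EuclideanSpace ℝ (Fin D) →
      (EuclideanSpace ℝ (Fin D) →L[ℝ] EuclideanSpace ℝ (Fin D) →L[ℝ] ℝ) :=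
    fun n => fderiv ℝ (fderiv ℝ (fn n)) with hg
  -- basic differentiability facts at points of E
  have hcd3 : ∀ n, ∀ z ∈ E, ContDiffAt ℝ 3 (fn n) z := fun n z hz =>
    (hsmooth n).contDiffAt (hEopen.mem_nhds hz)
  have hd1 : ∀ n, ∀ z ∈ E, DifferentiableAt ℝ (fn n) z := fun n z hz =>
    (hcd3 n z hz).differentiableAt (by norm_num)
  have hcd2 : ∀ n, ∀ z ∈ E, ContDiffAt ℝ 2 (fderiv ℝ (fn n)) z := fun n z hz =>
    (hcd3 n z hz).fderiv_right (by norm_num)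
  have hd2 : ∀ n, ∀ z ∈ E, DifferentiableAt ℝ (fderiv ℝ (fn n)) z := fun n z hz =>
    (hcd2 n z hz).differentiableAt (by norm_num)
  have hd3 : ∀ n, ∀ z ∈ E, DifferentiableAt ℝ (g n) z := fun n z hz =>
    (((hcd2 n z hz).fderiv_right (m := 1) (by norm_num))).differentiableAt (by norm_num)
  -- bound on the derivative of g
  have hgbound : ∀ n, ∀ z ∈ E, ‖fderiv ℝ (g n) z‖ ≤ C := by
    intro n z hz
    have h1 : ‖fderiv ℝ (g n) z‖ = ‖iteratedFDeriv ℝ 3 (fn n) z‖ := by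
      calc ‖fderiv ℝ (g n) z‖ = ‖iteratedFDeriv ℝ 0 (fderiv ℝ (g n)) z‖ := by
            rw [norm_iteratedFDeriv_zero]
        _ = ‖iteratedFDeriv ℝ 1 (g n) z‖ := by rw [norm_iteratedFDeriv_zero, norm_iteratedFDeriv_one]
        _ = ‖iteratedFDeriv ℝ 1 (fderiv ℝ (fderiv ℝ (fn n))) z‖ := rfl
        _ = ‖iteratedFDeriv ℝ 2 (fderiv ℝ (fn n)) z‖ := norm_iteratedFDeriv_fderiv
        _ = ‖iteratedFDeriv ℝ 3 (fn n) z‖ := norm_iteratedFDeriv_fderiv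
    rw [h1]; exact hC n z hz
  -- Lipschitz bound of g on E
  have hlip : ∀ n, ∀ y ∈ E, ∀ z ∈ E, ‖g n z - g n y‖ ≤ C * ‖z - y‖ := by
    intro n y hy z hz
    exact hEconv.norm_image_sub_le_of_norm_fderiv_le (𝕜 := ℝ) (f := g n) (fun w hw => hd3 n w hw)
      (fun w hw => by
        rw [← norm_iteratedFDeriv_one]
        calc ‖iteratedFDeriv ℝ 1 (g n) w‖ = ‖iteratedFDeriv ℝ 1 (fderiv ℝ (fderiv ℝ (fn n))) w‖ := rfl
          _ = ‖iteratedFDeriv ℝ 3 (fn n) w‖ := by rw [norm_iteratedFDeriv_fderiv, norm_iteratedFDeriv_fderiv]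
          _ ≤ C := hC n w hw) hy hz
  -- Part 1
  have part1 : Tendsto (fun n => g n (θn n)) atTop (𝓝 H0) := by
    rw [tendsto_iff_norm_sub_tendsto_zero (f := fun n => g n (θn n)) (a := atTop) (b := H0)]
    have hb : ∀ n, ‖g n (θn n) - H0‖ ≤ C * ‖θn n - θ0‖ + ‖g n θ0 - H0‖ := by
      intro n
      calc ‖g n (θn n) - H0‖ = ‖(g n (θn n) - g n θ0) + (g n θ0 - H0)‖ := by
            have h4 : g n (θn n) - H0 = (g n (θn n) - g n θ0) + (g n θ0 - H0) := by abel
            rw [h4]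
        _ ≤ ‖g n (θn n) - g n θ0‖ + ‖g n θ0 - H0‖ := by exact norm_add_le (g n (θn n) - g n θ0) (g n θ0 - H0)
        _ ≤ C * ‖θn n - θ0‖ + ‖g n θ0 - H0‖ := by
            gcongr; exact hlip n θ0 hθ0 (θn n) (hθnE n)
    have h2 : Tendsto (fun n => C * ‖θn n - θ0‖ + ‖g n θ0 - H0‖) atTop (𝓝 0) := by
      have hA : Tendsto (fun n => ‖θn n - θ0‖) atTop (𝓝 0) :=
        tendsto_iff_norm_sub_tendsto_zero.mp hθn
      have hB : Tendsto (fun n => ‖g n θ0 - H0‖) atTop (𝓝 0) :=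
        (tendsto_iff_norm_sub_tendsto_zero (f := fun n => g n θ0) (a := atTop) (b := H0)).mp hH0lim
      have h3 := (hA.const_mul C).add hB
      rw [mul_zero, add_zero] at h3
      exact h3
    exact squeeze_zero (fun n => norm_nonneg (g n (θn n) - H0)) hb h2
  refine ⟨part1, ?_⟩
  -- Part 2
  obtain ⟨ε, hε, hball⟩ := Metric.isOpen_iff.mp hEopen θ0 hθ0
  refine ⟨ε / 2, by linarith, C + 1, by linarith, ?_⟩
  have hdist : ∀ᶠ n in atTop, dist (θn n) θ0 < ε / 2 :=
    hθn (Metric.ball_mem_nhds θ0 (by linarith))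
  filter_upwards [hcrit, hdist] with n hcritn hdistn
  intro x hx
  set θ := θn n with hθdef
  set Hn := g n θ with hHn
  clear_value θ Hn
  have hθE : θ ∈ E := by rw [hθdef]; exact hθnE n
  -- all relevant points lie in E
  have hmem : ∀ z ∈ segment ℝ θ (θ + x), z ∈ Metric.ball θ0 ε := by
    intro z hz
    refine (convex_ball θ0 ε).segment_subset ?_ ?_ hz
    · exact Metric.mem_ball.mpr (lt_trans hdistn (by linarith))
    · have : dist (θ + x) θ0 ≤ dist (θ + x) θ + dist θ θ0 := dist_triangle _ _ _
      have h1 : dist (θ + x) θ = ‖x‖ := by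
        rw [dist_eq_norm]; simp
      simp only [Metric.mem_ball]
      rw [h1] at this
      linarith
  have hmemE : ∀ z ∈ segment ℝ θ (θ + x), z ∈ E := fun z hz => hball (hmem z hz)
  have hθmem : θ ∈ segment ℝ θ (θ + x) := left_mem_segment ℝ _ _
  have hθxmem : θ + x ∈ segment ℝ θ (θ + x) := right_mem_segment ℝ _ _
  -- distance control on segment
  have hseg_norm : ∀ z ∈ segment ℝ θ (θ + x), ‖z - θ‖ ≤ ‖x‖ := by
    intro z hz
    rw [segment_eq_image'] at hz
    obtain ⟨t, ht, rfl⟩ := hz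
    have : θ + t • (θ + x - θ) - θ = t • x := by
      module
    rw [this, norm_smul, Real.norm_eq_abs, abs_of_nonneg ht.1]
    nlinarith [norm_nonneg x, ht.2]
  -- Step 1: first-order Taylor of the gradient
  have step1 : ∀ z ∈ segment ℝ θ (θ + x),
      ‖fderiv ℝ (fn n) z - Hn (z - θ)‖ ≤ (C * ‖x‖) * ‖z - θ‖ := by
    intro z hz
    set u : EuclideanSpace ℝ (Fin D) → (EuclideanSpace ℝ (Fin D) →L[ℝ] ℝ) :=
      fun w => fderiv ℝ (fn n) w - Hn (w - θ) with hu
    have hder : ∀ w ∈ segment ℝ θ (θ + x),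
        HasFDerivWithinAt u (g n w - Hn) (segment ℝ θ (θ + x)) w := by
      intro w hw
      have h1 : HasFDerivAt (fderiv ℝ (fn n)) (g n w) w :=
        (hd2 n w (hmemE w hw)).hasFDerivAt
      have h2 : HasFDerivAt (fun w => Hn (w - θ)) Hn w := by
        have : HasFDerivAt (fun w : EuclideanSpace ℝ (Fin D) => w - θ)
            (ContinuousLinearMap.id ℝ _) w := (hasFDerivAt_id w).sub_const θ
        exact Hn.hasFDerivAt.comp w this
      exact (h1.sub h2).hasFDerivWithinAt
    have hbound : ∀ w ∈ segment ℝ θ (θ + x), ‖g n w - Hn‖ ≤ C * ‖x‖ := by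
      intro w hw
      calc ‖g n w - Hn‖ = ‖g n w - g n θ‖ := by rw [hHn]
        _ ≤ C * ‖w - θ‖ := hlip n θ hθE w (hmemE w hw)
        _ ≤ C * ‖x‖ := mul_le_mul_of_nonneg_left (hseg_norm w hw) hC0
    have := (convex_segment θ (θ + x)).norm_image_sub_le_of_norm_hasFDerivWithin_le
      hder hbound hθmem hz
    have huθ : u θ = 0 := by
      simp [hu, hcritn]
    rw [huθ, sub_zero] at this
    simpa [hu] using this
  -- symmetry of Hn
  have hsymm : ∀ v w, Hn v w = Hn w v := by
    intro v w
    rw [hHn]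
    exact ((hcd3 n θ hθE).isSymmSndFDerivAt (by norm_num)).eq v w
  -- Step 2: second-order Taylor of fn
  set v : EuclideanSpace ℝ (Fin D) → ℝ :=
    fun w => fn n w - (1/2) * Hn (w - θ) (w - θ) with hv
  have hder2 : ∀ w ∈ segment ℝ θ (θ + x),
      HasFDerivWithinAt v (fderiv ℝ (fn n) w - Hn (w - θ)) (segment ℝ θ (θ + x)) w := by
    intro w hw
    have h1 : HasFDerivAt (fn n) (fderiv ℝ (fn n) w) w :=
      (hd1 n w (hmemE w hw)).hasFDerivAt
    have hsub : HasFDerivAt (fun z : EuclideanSpace ℝ (Fin D) => z - θ)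
        (ContinuousLinearMap.id ℝ _) w := (hasFDerivAt_id w).sub_const θ
    have hq : HasFDerivAt (fun z => Hn (z - θ) (z - θ))
        (Hn.precompR _ (w - θ) (ContinuousLinearMap.id ℝ _)
          + Hn.precompL _ (ContinuousLinearMap.id ℝ _) (w - θ)) w :=
      Hn.hasFDerivAt_of_bilinear hsub hsub
    have hq2 : HasFDerivAt (fun z => (1/2 : ℝ) * Hn (z - θ) (z - θ))
        ((1/2 : ℝ) • (Hn.precompR _ (w - θ) (ContinuousLinearMap.id ℝ _)
          + Hn.precompL _ (ContinuousLinearMap.id ℝ _) (w - θ))) w := hq.const_mul _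
    have heq : (1/2 : ℝ) • (Hn.precompR _ (w - θ) (ContinuousLinearMap.id ℝ _)
          + Hn.precompL _ (ContinuousLinearMap.id ℝ _) (w - θ)) = Hn (w - θ) := by
      ext y
      simp [ContinuousLinearMap.precompR, ContinuousLinearMap.precompL]
      rw [hsymm y w, hsymm y θ]
      ring
    rw [heq] at hq2
    exact (h1.sub hq2).hasFDerivWithinAt
  have hbound2 : ∀ w ∈ segment ℝ θ (θ + x),
      ‖fderiv ℝ (fn n) w - Hn (w - θ)‖ ≤ C * ‖x‖ ^ 2 := by
    intro w hw
    calc ‖fderiv ℝ (fn n) w - Hn (w - θ)‖ ≤ (C * ‖x‖) * ‖w - θ‖ := step1 w hw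
      _ ≤ (C * ‖x‖) * ‖x‖ :=
          mul_le_mul_of_nonneg_left (hseg_norm w hw) (mul_nonneg hC0 (norm_nonneg x))
      _ = C * ‖x‖ ^ 2 := by ring
  have key := (convex_segment θ (θ + x)).norm_image_sub_le_of_norm_hasFDerivWithin_le
    hder2 hbound2 hθmem hθxmem
  have hsub0 : θ + x - θ = x := by abel
  have hvθ : v θ = fn n θ := by rw [hv]; simp
  have hvθx : v (θ + x) = fn n (θ + x) - (1/2) * Hn x x := by
    rw [hv]
    simp only [hsub0]
  rw [hvθ, hvθx] at key
  have hfinal : |fn n (θ + x) - fn n θ - (1/2) * Hn x x| ≤ C * ‖x‖ ^ 2 * ‖x‖ := by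
    have : fn n (θ + x) - (1/2) * Hn x x - fn n θ
        = fn n (θ + x) - fn n θ - (1/2) * Hn x x := by ring
    rw [this] at key
    have h1 : ‖θ + x - θ‖ = ‖x‖ := by simp
    rw [h1] at key
    exact key
  have hHn' : fderiv ℝ (fderiv ℝ (fn n)) θ = Hn := hHn.symm
  rw [hHn']
  calc |fn n (θ + x) - fn n θ - (1/2) * Hn x x| ≤ C * ‖x‖ ^ 2 * ‖x‖ := hfinal
    _ = C * ‖x‖ ^ 3 := by ring
    _ ≤ (C + 1) * ‖x‖ ^ 3 := by nlinarith [norm_nonneg x, pow_nonneg (norm_nonneg x) 3]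
end

section
/- Let $E \subseteq \mathbb{R}^D$ be open, convex, and bounded. For $n \in \mathbb{N}$, let $f_n : E \to \mathbb{R}$ have continuous third derivatives, and suppose the third-derivative tensors $(f_n''')$ are uniformly bounded on $E$. If $(f_n)$ is pointwise bounded, then $(f_n)$, $(f_n')$, and $(f_n'')$ are all equi-Lipschitz and uniformly bounded on $E$. If moreover $f_n \to f$ pointwise for some $f : E \to \mathbb{R}$, then $f'$ and $f''$ exist on $E$, and $f_n \to f$, $f_n' \to f'$, and $f_n'' \to f''$ all uniformly on $E$. -/
open Filter Set
open scoped Topology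

set_option linter.unusedSectionVars false

section aux
variable {X : Type*} [NormedAddCommGroup X] [NormedSpace ℝ X]
variable {F : Type*} [NormedAddCommGroup F] [NormedSpace ℝ F]

lemma aux_lip {s : Set X} (hconv : Convex ℝ s) {h : X → F}
    (hd : ∀ x ∈ s, DifferentiableAt ℝ h x) {C : ℝ}
    (hb : ∀ x ∈ s, ‖fderiv ℝ h x‖ ≤ C) {x y : X} (hx : x ∈ s) (hy : y ∈ s) :
    ‖h y - h x‖ ≤ C * ‖y - x‖ :=
  hconv.norm_image_sub_le_of_norm_hasFDerivWithin_le
    (fun z hz => (hd z hz).hasFDerivAt.hasFDerivWithinAt) hb hx hy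


lemma seg_norm_le {a b w : X} (hw : w ∈ segment ℝ a b) : ‖w - a‖ ≤ ‖b - a‖ := by
  obtain ⟨u, v, hu, hv, huv, rfl⟩ := hw
  have h1 : u • a + v • b - a = v • (b - a) := by
    have hu1 : u = 1 - v := by linarith
    subst hu1; module
  rw [h1, norm_smul, Real.norm_eq_abs, abs_of_nonneg hv]
  nlinarith [norm_nonneg (b - a)]

lemma aux_taylor1 {s : Set X} (hconv : Convex ℝ s) {h : X → F}
    (hd : ∀ x ∈ s, DifferentiableAt ℝ h x) {a b : X} (ha : a ∈ s) (hb : b ∈ s) {K : ℝ}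
    (hK : ∀ z ∈ segment ℝ a b, ‖fderiv ℝ h z - fderiv ℝ h a‖ ≤ K) :
    ‖h b - h a - fderiv ℝ h a (b - a)‖ ≤ K * ‖b - a‖ := by
  have hseg : segment ℝ a b ⊆ s := hconv.segment_subset ha hb
  have hφ : ∀ z ∈ segment ℝ a b, HasFDerivWithinAt (fun z => h z - fderiv ℝ h a z)
      (fderiv ℝ h z - fderiv ℝ h a) (segment ℝ a b) z := fun z hz =>
    ((hd z (hseg hz)).hasFDerivAt.sub ((fderiv ℝ h a).hasFDerivAt)).hasFDerivWithinAt
  have key := (convex_segment a b).norm_image_sub_le_of_norm_hasFDerivWithin_le hφ hK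
    (left_mem_segment ℝ a b) (right_mem_segment ℝ a b)
  have e1 : h b - fderiv ℝ h a b - (h a - fderiv ℝ h a a)
      = h b - h a - fderiv ℝ h a (b - a) := by
    rw [map_sub]; abel
  simpa [e1] using key

/-- Second order Taylor estimate with Lipschitz second derivative. -/
lemma aux_taylor2 {s : Set X} (hconv : Convex ℝ s) {h : X → F}
    (hd0 : ∀ x ∈ s, DifferentiableAt ℝ h x)
    (hd1 : ∀ x ∈ s, DifferentiableAt ℝ (fderiv ℝ h) x)
    {a b : X} (ha : a ∈ s) (hb : b ∈ s) {C : ℝ} (hC0 : 0 ≤ C)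
    (hC : ∀ z ∈ s, ‖fderiv ℝ (fderiv ℝ h) z - fderiv ℝ (fderiv ℝ h) a‖ ≤ C * ‖z - a‖)
    (hsym : ∀ u v, fderiv ℝ (fderiv ℝ h) a u v = fderiv ℝ (fderiv ℝ h) a v u) :
    ‖h b - h a - fderiv ℝ h a (b - a)
      - (1/2 : ℝ) • fderiv ℝ (fderiv ℝ h) a (b - a) (b - a)‖
      ≤ C * ‖b - a‖ * ‖b - a‖ * ‖b - a‖ := by
  set B := fderiv ℝ (fderiv ℝ h) a with hB
  set P := fderiv ℝ h a with hP
  -- first-order Taylor for fderiv h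
  have hR1 : ∀ z ∈ s, ‖fderiv ℝ h z - P - B (z - a)‖ ≤ (C * ‖z - a‖) * ‖z - a‖ := by
    intro z hz
    exact aux_taylor1 hconv hd1 ha hz (fun w hw => by
      calc ‖fderiv ℝ (fderiv ℝ h) w - B‖ ≤ C * ‖w - a‖ :=
            hC w (hconv.segment_subset ha hz hw)
        _ ≤ C * ‖z - a‖ := mul_le_mul_of_nonneg_left (seg_norm_le hw) hC0)
  -- the function g and its derivative
  set g : X → F := fun z => h z - P (z - a) - (1/2 : ℝ) • B (z - a) (z - a) with hg
  have hgd : ∀ z ∈ s, HasFDerivAt g (fderiv ℝ h z - P - B (z - a)) z := by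
    intro z hz
    have h1 : HasFDerivAt (fun z => P (z - a)) P z := by
      have : (fun z : X => P (z - a)) = fun z => P z - P a := by
        ext z; rw [map_sub]
      rw [this]
      exact (P.hasFDerivAt).sub_const (P a)
    have hc : HasFDerivAt (fun z : X => B (z - a)) B z := by
      have : (fun z : X => B (z - a)) = fun z => B z - B a := by
        ext z; rw [map_sub]
      rw [this]
      exact (B.hasFDerivAt).sub_const (B a)
    have hu : HasFDerivAt (fun z : X => z - a) (ContinuousLinearMap.id ℝ X) z :=
      (hasFDerivAt_id z).sub_const a
    have hq : HasFDerivAt (fun z : X => B (z - a) (z - a))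
        ((B (z - a)).comp (ContinuousLinearMap.id ℝ X) + B.flip (z - a)) z :=
      hc.clm_apply hu
    have hq2 : HasFDerivAt (fun z : X => (1/2 : ℝ) • B (z - a) (z - a))
        ((1/2 : ℝ) • ((B (z - a)).comp (ContinuousLinearMap.id ℝ X) + B.flip (z - a))) z :=
      hq.const_smul (1/2 : ℝ)
    have heq : (1/2 : ℝ) • ((B (z - a)).comp (ContinuousLinearMap.id ℝ X) + B.flip (z - a))
        = B (z - a) := by
      ext v
      simp only [ContinuousLinearMap.smul_apply, ContinuousLinearMap.add_apply,
        ContinuousLinearMap.coe_comp', Function.comp_apply, ContinuousLinearMap.coe_id',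
        id_eq, ContinuousLinearMap.flip_apply]
      rw [hsym v (z - a)]
      rw [← two_smul ℝ (B (z - a) v), smul_smul]
      norm_num
    rw [heq] at hq2
    exact ((hd0 z hz).hasFDerivAt.sub h1).sub hq2
  -- mean value inequality for g on the segment
  have hseg : segment ℝ a b ⊆ s := hconv.segment_subset ha hb
  have hbound : ∀ z ∈ segment ℝ a b, ‖fderiv ℝ h z - P - B (z - a)‖
      ≤ C * ‖b - a‖ * ‖b - a‖ := by
    intro z hz
    have h1 := hR1 z (hseg hz)
    have h2 := seg_norm_le hz
    nlinarith [norm_nonneg (fderiv ℝ h z - P - B (z - a)), norm_nonneg (z - a),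
      norm_nonneg (b - a), mul_le_mul_of_nonneg_left h2 hC0]
  have key := (convex_segment a b).norm_image_sub_le_of_norm_hasFDerivWithin_le
    (fun z hz => ((hgd z (hseg hz)).hasFDerivWithinAt : HasFDerivWithinAt g _ _ z))
    hbound (left_mem_segment ℝ a b) (right_mem_segment ℝ a b)
  have e1 : g b - g a = h b - h a - P (b - a) - (1/2 : ℝ) • B (b - a) (b - a) := by
    simp only [hg, sub_self, map_zero, ContinuousLinearMap.zero_apply, smul_zero]
    abel
  rw [e1] at key
  calc ‖h b - h a - P (b - a) - (1/2 : ℝ) • B (b - a) (b - a)‖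
      ≤ C * ‖b - a‖ * ‖b - a‖ * ‖b - a‖ := key
/-- Cone estimate: bound the derivative of a small function with Lipschitz derivative. -/
lemma aux_cone {s : Set X} (hconv : Convex ℝ s) {x₀ : X} {r₀ : ℝ} (hr₀ : 0 < r₀)
    (hball : Metric.closedBall x₀ r₀ ⊆ s) {Dm : ℝ}
    (hDm : ∀ z ∈ s, ∀ w ∈ s, ‖z - w‖ ≤ Dm) {h : X → F}
    (hd : ∀ x ∈ s, DifferentiableAt ℝ h x) {ε K : ℝ} (hK0 : 0 ≤ K)
    (hε : ∀ z ∈ s, ‖h z‖ ≤ ε)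
    (hLip : ∀ z ∈ s, ∀ w ∈ s, ‖fderiv ℝ h z - fderiv ℝ h w‖ ≤ K * ‖z - w‖)
    {lam : ℝ} (hl0 : 0 < lam) (hl1 : lam ≤ 1) {x : X} (hx : x ∈ s) :
    ‖fderiv ℝ h x‖ ≤ 2 * ε / (lam * r₀) + K * (lam * r₀) + K * (lam * Dm) := by
  have hx₀ : x₀ ∈ s := hball (Metric.mem_closedBall_self hr₀.le)
  have hε0 : 0 ≤ ε := le_trans (norm_nonneg _) (hε x hx)
  set y := x + lam • (x₀ - x) with hy_def
  have hy_comb : y = (1 - lam) • x + lam • x₀ := by rw [hy_def]; module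
  have hy : y ∈ s := by
    rw [hy_comb]
    exact hconv hx hx₀ (by linarith) hl0.le (by ring)
  have hlr : 0 < lam * r₀ := mul_pos hl0 hr₀
  -- bound on ‖fderiv h y‖
  have hyb : ‖fderiv ℝ h y‖ ≤ 2 * ε / (lam * r₀) + K * (lam * r₀) := by
    apply ContinuousLinearMap.opNorm_le_bound _ (by positivity)
    intro v
    rcases eq_or_ne v 0 with rfl | hv0
    · simp
    have hvn : 0 < ‖v‖ := norm_pos_iff.2 hv0
    set b := y + ((lam * r₀ / ‖v‖) • v) with hb_def
    have hunit : x₀ + r₀ • ((‖v‖)⁻¹ • v) ∈ s := by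
      apply hball
      rw [Metric.mem_closedBall, dist_eq_norm]
      have : x₀ + r₀ • (‖v‖)⁻¹ • v - x₀ = r₀ • (‖v‖)⁻¹ • v := by abel
      rw [this, norm_smul, norm_smul]
      simp [abs_of_nonneg hr₀.le, abs_of_nonneg (inv_nonneg.2 hvn.le)]
      rw [inv_mul_cancel₀ hvn.ne', mul_one]
    have hb_comb : b = (1 - lam) • x + lam • (x₀ + r₀ • ((‖v‖)⁻¹ • v)) := by
      rw [hb_def, hy_def, div_eq_mul_inv]
      module
    have hbmem : b ∈ s := by
      rw [hb_comb]
      exact hconv hx hunit (by linarith) hl0.le (by ring)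
    have hT := aux_taylor1 hconv hd hy hbmem (K := K * (lam * r₀)) (fun z hz => by
      calc ‖fderiv ℝ h z - fderiv ℝ h y‖ ≤ K * ‖z - y‖ :=
            hLip z (hconv.segment_subset hy hbmem hz) y hy
        _ ≤ K * ‖b - y‖ := mul_le_mul_of_nonneg_left (seg_norm_le hz) hK0
        _ = K * (lam * r₀) := by
            rw [hb_def]
            have : y + (lam * r₀ / ‖v‖) • v - y = (lam * r₀ / ‖v‖) • v := by abel
            rw [this, norm_smul, Real.norm_eq_abs, abs_of_nonneg (by positivity)]
            field_simp)
    have hby : b - y = (lam * r₀ / ‖v‖) • v := by rw [hb_def]; abel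
    have hbn : ‖b - y‖ = lam * r₀ := by
      rw [hby, norm_smul, Real.norm_eq_abs, abs_of_nonneg (by positivity)]
      field_simp
    have h1 : ‖fderiv ℝ h y (b - y)‖ ≤ 2 * ε + K * (lam * r₀) * (lam * r₀) := by
      have h2 : ‖h b - h y‖ ≤ 2 * ε := by
        calc ‖h b - h y‖ ≤ ‖h b‖ + ‖h y‖ := norm_sub_le _ _
          _ ≤ ε + ε := add_le_add (hε b hbmem) (hε y hy)
          _ = 2 * ε := by ring
      calc ‖fderiv ℝ h y (b - y)‖
          = ‖(h b - h y) - (h b - h y - fderiv ℝ h y (b - y))‖ := by congr 1; abel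
        _ ≤ ‖h b - h y‖ + ‖h b - h y - fderiv ℝ h y (b - y)‖ := norm_sub_le _ _
        _ ≤ 2 * ε + K * (lam * r₀) * (lam * r₀) := by
            rw [hbn] at hT; exact add_le_add h2 hT
    have h3 : ‖fderiv ℝ h y (b - y)‖ = (lam * r₀ / ‖v‖) * ‖fderiv ℝ h y v‖ := by
      rw [hby, map_smul, norm_smul, Real.norm_eq_abs, abs_of_nonneg (by positivity)]
    rw [h3] at h1
    rw [div_mul_eq_mul_div, div_le_iff₀ hvn] at h1
    rw [div_add' _ _ _ hlr.ne', div_mul_eq_mul_div, le_div_iff₀ hlr]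
    calc ‖fderiv ℝ h y v‖ * (lam * r₀)
        = lam * r₀ * ‖fderiv ℝ h y v‖ := by ring
      _ ≤ (2 * ε + K * (lam * r₀) * (lam * r₀)) * ‖v‖ := h1
      _ = (2 * ε + K * (lam * r₀) * (lam * r₀)) * ‖v‖ := rfl
  -- transfer to x
  have hxy : ‖x - y‖ ≤ lam * Dm := by
    have : x - y = -(lam • (x₀ - x)) := by rw [hy_def]; abel
    rw [this, norm_neg, norm_smul, Real.norm_eq_abs, abs_of_nonneg hl0.le]
    exact mul_le_mul_of_nonneg_left (hDm x₀ hx₀ x hx) hl0.le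
  calc ‖fderiv ℝ h x‖ = ‖fderiv ℝ h y + (fderiv ℝ h x - fderiv ℝ h y)‖ := by congr 1; abel
    _ ≤ ‖fderiv ℝ h y‖ + ‖fderiv ℝ h x - fderiv ℝ h y‖ := norm_add_le _ _
    _ ≤ (2 * ε / (lam * r₀) + K * (lam * r₀)) + K * (lam * Dm) := by
        apply add_le_add hyb
        calc ‖fderiv ℝ h x - fderiv ℝ h y‖ ≤ K * ‖x - y‖ := hLip x hx y hy
          _ ≤ K * (lam * Dm) := mul_le_mul_of_nonneg_left hxy hK0
    _ = 2 * ε / (lam * r₀) + K * (lam * r₀) + K * (lam * Dm) := by ring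
/-- Uniform convergence from equi-Lipschitz + pointwise convergence on a totally bounded set. -/
lemma aux_net {s : Set X} (hs : TotallyBounded s) {fn : ℕ → X → ℝ} {f : X → ℝ} {M : ℝ}
    (hM : 0 ≤ M)
    (hL : ∀ n, ∀ x ∈ s, ∀ y ∈ s, |fn n x - fn n y| ≤ M * ‖x - y‖)
    (hp : ∀ x ∈ s, Tendsto (fun n => fn n x) atTop (𝓝 (f x))) :
    TendstoUniformlyOn (fun n x => fn n x) f atTop s := by
  have hfL : ∀ x ∈ s, ∀ y ∈ s, |f x - f y| ≤ M * ‖x - y‖ := by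
    intro x hx y hy
    have ht : Tendsto (fun n => |fn n x - fn n y|) atTop (𝓝 |f x - f y|) :=
      (((hp x hx).sub (hp y hy)).abs)
    exact le_of_tendsto ht (Eventually.of_forall fun n => hL n x hx y hy)
  rw [Metric.tendstoUniformlyOn_iff]
  intro ε hε
  set δ : ℝ := ε / (3 * (M + 1)) with hδ_def
  have hδ : 0 < δ := by positivity
  obtain ⟨t, hts, htfin, htcov⟩ := (totallyBounded_iff_subset.1 hs)
    {p : X × X | dist p.1 p.2 < δ} (Metric.dist_mem_uniformity hδ)
  have hev : ∀ᶠ n in atTop, ∀ y ∈ t, dist (fn n y) (f y) < ε / 3 := by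
    rw [htfin.eventually_all]
    intro y hy
    have := (hp y (hts hy))
    exact (Metric.tendsto_nhds.1 this) (ε / 3) (by positivity)
  filter_upwards [hev] with n hn x hx
  obtain ⟨y, hy, hxy⟩ := by
    have := htcov hx
    simpa using this
  have hxyd : dist x y < δ := hxy
  have hyt : y ∈ s := hts hy
  have h1 : |fn n x - fn n y| ≤ M * ‖x - y‖ := hL n x hx y hyt
  have h2 : |f y - f x| ≤ M * ‖y - x‖ := hfL y hyt x hx
  have h3 : dist (fn n y) (f y) < ε / 3 := hn y hy
  have hnorm : ‖x - y‖ < δ := by rwa [← dist_eq_norm]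
  have hnorm' : ‖y - x‖ < δ := by rwa [norm_sub_rev]
  have hMδ : M * δ ≤ ε / 3 := by
    rw [hδ_def]
    rw [mul_div_assoc']
    rw [div_le_div_iff₀ (by positivity) (by norm_num)]
    nlinarith
  rw [Real.dist_eq]
  have e1 : f x - fn n x = (f x - f y) + (f y - fn n y) + (fn n y - fn n x) := by ring
  rw [e1]
  calc |(f x - f y) + (f y - fn n y) + (fn n y - fn n x)|
      ≤ |f x - f y| + |f y - fn n y| + |fn n y - fn n x| := abs_add_three _ _ _
    _ < ε / 3 + ε / 3 + ε / 3 := by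
        apply add_lt_add_of_lt_of_le
        apply add_lt_add_of_le_of_lt
        · calc |f x - f y| = |f y - f x| := abs_sub_comm _ _
            _ ≤ M * ‖y - x‖ := h2
            _ ≤ M * δ := by nlinarith
            _ ≤ ε / 3 := hMδ
        · rw [← Real.dist_eq]; rw [dist_comm]; exact h3
        · calc |fn n y - fn n x| = |fn n x - fn n y| := abs_sub_comm _ _
            _ ≤ M * ‖x - y‖ := h1
            _ ≤ M * δ := by nlinarith
            _ ≤ ε / 3 := hMδ
    _ = ε := by ring
/-- Uniform Cauchy estimate for derivatives from uniform smallness of a sequence with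
equi-Lipschitz derivatives on a bounded convex open-ish set containing a ball. -/
lemma aux_cauchy {s : Set X} (hconv : Convex ℝ s) {x₀ : X} {r₀ : ℝ} (hr₀ : 0 < r₀)
    (hball : Metric.closedBall x₀ r₀ ⊆ s) {Dm : ℝ}
    (hDm : ∀ z ∈ s, ∀ w ∈ s, ‖z - w‖ ≤ Dm)
    {g : ℕ → X → F} (hd : ∀ n, ∀ x ∈ s, DifferentiableAt ℝ (g n) x)
    {M : ℝ} (hM0 : 0 ≤ M)
    (hLip : ∀ n, ∀ z ∈ s, ∀ w ∈ s, ‖fderiv ℝ (g n) z - fderiv ℝ (g n) w‖ ≤ M * ‖z - w‖)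
    (hsmall : ∀ δ > (0:ℝ), ∃ N, ∀ m ≥ N, ∀ n ≥ N, ∀ x ∈ s, ‖g m x - g n x‖ ≤ δ) :
    ∀ η > (0:ℝ), ∃ N, ∀ m ≥ N, ∀ n ≥ N, ∀ x ∈ s,
      ‖fderiv ℝ (g m) x - fderiv ℝ (g n) x‖ ≤ η := by
  intro η hη
  have hx₀s : x₀ ∈ s := hball (Metric.mem_closedBall_self hr₀.le)
  have hDm0 : 0 ≤ Dm := le_trans (norm_nonneg _) (hDm x₀ hx₀s x₀ hx₀s)
  set K : ℝ := 2 * M with hK_def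
  have hK0 : 0 ≤ K := by positivity
  set S : ℝ := K * r₀ + K * Dm with hS_def
  have hS0 : 0 ≤ S := by positivity
  set lam : ℝ := min 1 (η / (2 * S + 1)) with hlam_def
  have hlam0 : 0 < lam := lt_min one_pos (by positivity)
  have hlam1 : lam ≤ 1 := min_le_left _ _
  have hlamS : K * (lam * r₀) + K * (lam * Dm) ≤ η / 2 := by
    have h1 : lam ≤ η / (2 * S + 1) := min_le_right _ _
    have h2 : lam * (2 * S + 1) ≤ η := (le_div_iff₀ (by positivity)).1 h1
    nlinarith
  set δ : ℝ := η * lam * r₀ / 9 with hδ_def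
  have hδ : 0 < δ := by positivity
  obtain ⟨N, hN⟩ := hsmall δ hδ
  refine ⟨N, fun m hm n hn x hx => ?_⟩
  set h : X → F := fun z => g m z - g n z with hh_def
  have hhd : ∀ z ∈ s, DifferentiableAt ℝ h z := fun z hz => (hd m z hz).sub (hd n z hz)
  have hsub : ∀ z ∈ s, fderiv ℝ h z = fderiv ℝ (g m) z - fderiv ℝ (g n) z := fun z hz => by
    rw [hh_def]
    exact fderiv_sub (hd m z hz) (hd n z hz)
  have hε : ∀ z ∈ s, ‖h z‖ ≤ δ := fun z hz => hN m hm n hn z hz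
  have hhLip : ∀ z ∈ s, ∀ w ∈ s, ‖fderiv ℝ h z - fderiv ℝ h w‖ ≤ K * ‖z - w‖ := by
    intro z hz w hw
    rw [hsub z hz, hsub w hw]
    calc ‖fderiv ℝ (g m) z - fderiv ℝ (g n) z - (fderiv ℝ (g m) w - fderiv ℝ (g n) w)‖
        = ‖(fderiv ℝ (g m) z - fderiv ℝ (g m) w) - (fderiv ℝ (g n) z - fderiv ℝ (g n) w)‖ := by
          congr 1; abel
      _ ≤ ‖fderiv ℝ (g m) z - fderiv ℝ (g m) w‖ + ‖fderiv ℝ (g n) z - fderiv ℝ (g n) w‖ :=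
          norm_sub_le _ _
      _ ≤ M * ‖z - w‖ + M * ‖z - w‖ := add_le_add (hLip m z hz w hw) (hLip n z hz w hw)
      _ = K * ‖z - w‖ := by rw [hK_def]; ring
  have hcone := aux_cone hconv hr₀ hball hDm hhd hK0 hε hhLip hlam0 hlam1 hx
  rw [hsub x hx] at hcone
  have hlr : 0 < lam * r₀ := mul_pos hlam0 hr₀
  have hdiv : 2 * δ / (lam * r₀) ≤ η / 2 := by
    rw [hδ_def, div_le_div_iff₀ hlr (by norm_num)]
    ring_nf
    nlinarith
  calc ‖fderiv ℝ (g m) x - fderiv ℝ (g n) x‖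
      ≤ 2 * δ / (lam * r₀) + K * (lam * r₀) + K * (lam * Dm) := hcone
    _ ≤ η / 2 + η / 2 := by linarith
    _ = η := by ring
lemma euclid_coord_le {D : ℕ} (u : EuclideanSpace ℝ (Fin D)) (i : Fin D) : |u i| ≤ ‖u‖ := by
  rw [EuclideanSpace.norm_eq]
  rw [show |u i| = √(‖u i‖ ^ 2) by rw [Real.sqrt_sq_eq_abs, Real.norm_eq_abs, abs_abs]]
  apply Real.sqrt_le_sqrt
  exact Finset.single_le_sum (fun j _ => sq_nonneg ‖u j‖) (Finset.mem_univ i)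

lemma euclid_decomp {D : ℕ} (u : EuclideanSpace ℝ (Fin D)) :
    u = ∑ i, u i • (EuclideanSpace.single i (1:ℝ)) := by
  ext j
  have : (∑ i, u i • (EuclideanSpace.single i (1:ℝ))) j
      = ∑ i, u i * (EuclideanSpace.single i (1:ℝ) j) := by
    induction (Finset.univ : Finset (Fin D)) using Finset.induction with
    | empty => simp
    | insert _ _ hni ih =>
        rw [Finset.sum_insert hni, Finset.sum_insert hni, ← ih]
        rfl
  rw [this]
  simp [EuclideanSpace.single_apply]

lemma euclid_opnorm_le {D : ℕ} {F : Type*} [NormedAddCommGroup F] [NormedSpace ℝ F]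
    (T : EuclideanSpace ℝ (Fin D) →L[ℝ] F) :
    ‖T‖ ≤ ∑ i, ‖T (EuclideanSpace.single i (1:ℝ))‖ := by
  apply ContinuousLinearMap.opNorm_le_bound _ (by positivity)
  intro u
  calc ‖T u‖ = ‖∑ i, u i • T (EuclideanSpace.single i (1:ℝ))‖ := by
        conv_lhs => rw [euclid_decomp u]
        rw [map_sum]
        simp [map_smul]
    _ ≤ ∑ i, ‖u i • T (EuclideanSpace.single i (1:ℝ))‖ := norm_sum_le _ _
    _ = ∑ i, |u i| * ‖T (EuclideanSpace.single i (1:ℝ))‖ := by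
        simp [norm_smul]
    _ ≤ ∑ i, ‖u‖ * ‖T (EuclideanSpace.single i (1:ℝ))‖ := by
        apply Finset.sum_le_sum
        intro i _
        exact mul_le_mul_of_nonneg_right (euclid_coord_le u i) (norm_nonneg _)
    _ = (∑ i, ‖T (EuclideanSpace.single i (1:ℝ))‖) * ‖u‖ := by
        rw [Finset.sum_mul]
        exact Finset.sum_congr rfl (fun i _ => mul_comm _ _)

@[reducible] noncomputable def aux_inst1 {D : ℕ} :
    NormedAddCommGroup (EuclideanSpace ℝ (Fin D) →L[ℝ] EuclideanSpace ℝ (Fin D) →L[ℝ] ℝ) :=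
  inferInstance
@[reducible] noncomputable def aux_inst2 {D : ℕ} :
    NormedSpace ℝ (EuclideanSpace ℝ (Fin D) →L[ℝ] EuclideanSpace ℝ (Fin D) →L[ℝ] ℝ) :=
  inferInstance
attribute [local instance] aux_inst1 aux_inst2

lemma third_norm_eq {D : ℕ} (f : EuclideanSpace ℝ (Fin D) → ℝ) (x : EuclideanSpace ℝ (Fin D)) :
    ‖fderiv ℝ (fderiv ℝ (fderiv ℝ f)) x‖ = ‖iteratedFDeriv ℝ 3 f x‖ := by
  calc ‖fderiv ℝ (fderiv ℝ (fderiv ℝ f)) x‖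
      = ‖iteratedFDeriv ℝ 0 (fderiv ℝ (fderiv ℝ (fderiv ℝ f))) x‖ := norm_iteratedFDeriv_zero.symm
    _ = ‖iteratedFDeriv ℝ 1 (fderiv ℝ (fderiv ℝ f)) x‖ := norm_iteratedFDeriv_fderiv
    _ = ‖iteratedFDeriv ℝ 2 (fderiv ℝ f) x‖ := norm_iteratedFDeriv_fderiv
    _ = ‖iteratedFDeriv ℝ 3 f x‖ := norm_iteratedFDeriv_fderiv

set_option maxHeartbeats 2000000 in
lemma regular_part1 {D : ℕ} (E : Set (EuclideanSpace ℝ (Fin D)))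
    (hEopen : IsOpen E) (hEconv : Convex ℝ E) (hEbdd : Bornology.IsBounded E)
    (fn : ℕ → EuclideanSpace ℝ (Fin D) → ℝ)
    (hsmooth : ∀ n, ContDiffOn ℝ 3 (fn n) E)
    {C : ℝ} (hC0 : 0 ≤ C)
    (hthird : ∀ (n : ℕ), ∀ x ∈ E, ‖iteratedFDeriv ℝ 3 (fn n) x‖ ≤ C)
    (hpt : ∀ x ∈ E, ∃ M, ∀ n, |fn n x| ≤ M) :
    ∃ M, 0 ≤ M ∧
      (∀ (n : ℕ), ∀ x ∈ E, |fn n x| ≤ M ∧ ‖fderiv ℝ (fn n) x‖ ≤ M ∧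
        ‖fderiv ℝ (fderiv ℝ (fn n)) x‖ ≤ M) ∧
      (∀ (n : ℕ), ∀ x ∈ E, ∀ y ∈ E,
        |fn n x - fn n y| ≤ M * ‖x - y‖ ∧
        ‖fderiv ℝ (fn n) x - fderiv ℝ (fn n) y‖ ≤ M * ‖x - y‖ ∧
        ‖fderiv ℝ (fderiv ℝ (fn n)) x - fderiv ℝ (fderiv ℝ (fn n)) y‖ ≤ M * ‖x - y‖) := by
  rcases E.eq_empty_or_nonempty with rfl | ⟨x₀, hx₀⟩
  · exact ⟨0, le_refl 0, by simp, by simp⟩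
  have hCA : ∀ n, ∀ x ∈ E, ContDiffAt ℝ 3 (fn n) x := fun n x hx =>
    (hsmooth n).contDiffAt (hEopen.mem_nhds hx)
  have hd0 : ∀ n, ∀ x ∈ E, DifferentiableAt ℝ (fn n) x := fun n x hx =>
    (hCA n x hx).differentiableAt (by norm_num)
  have hd1 : ∀ n, ∀ x ∈ E, DifferentiableAt ℝ (fderiv ℝ (fn n)) x := fun n x hx =>
    ((hCA n x hx).fderiv_right (m := 2) (by norm_num)).differentiableAt (by norm_num)
  have hd2 : ∀ n, ∀ x ∈ E, DifferentiableAt ℝ (fderiv ℝ (fderiv ℝ (fn n))) x := fun n x hx =>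
    (((hCA n x hx).fderiv_right (m := 2) (by norm_num)).fderiv_right (m := 1)
      (by norm_num)).differentiableAt (by norm_num)
  obtain ⟨Dm, hDm'⟩ := Metric.isBounded_iff.1 hEbdd
  have hDm : ∀ x ∈ E, ∀ y ∈ E, ‖x - y‖ ≤ Dm := fun x hx y hy => by
    rw [← dist_eq_norm]; exact hDm' hx hy
  have hDm0 : 0 ≤ Dm := le_trans (norm_nonneg _) (hDm x₀ hx₀ x₀ hx₀)
  -- second derivatives are C-Lipschitz
  have hLip2 : ∀ n, ∀ x ∈ E, ∀ y ∈ E,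
      ‖fderiv ℝ (fderiv ℝ (fn n)) x - fderiv ℝ (fderiv ℝ (fn n)) y‖ ≤ C * ‖x - y‖ := by
    intro n x hx y hy
    exact aux_lip hEconv (hd2 n) (fun z hz => by
      rw [third_norm_eq]; exact hthird n z hz) hy hx
  -- ball around x₀
  obtain ⟨ε₀, hε₀, hball₀⟩ := Metric.isOpen_iff.1 hEopen x₀ hx₀
  set r : ℝ := ε₀ / 4 with hr_def
  have hr : 0 < r := by positivity
  set e : Fin D → EuclideanSpace ℝ (Fin D) := fun i => EuclideanSpace.single i (1:ℝ) with he_def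
  have hen : ∀ i, ‖e i‖ = 1 := fun i => by
    rw [he_def]; simp [EuclideanSpace.norm_single]
  set p : Fin D → EuclideanSpace ℝ (Fin D) := fun i => x₀ + r • e i with hp_def
  set q : Fin D → Fin D → EuclideanSpace ℝ (Fin D) := fun i j => x₀ + (r • e i + r • e j)
    with hq_def
  have hpmem : ∀ i, p i ∈ E := by
    intro i
    apply hball₀
    rw [Metric.mem_ball, dist_eq_norm, hp_def]
    have : x₀ + r • e i - x₀ = r • e i := by abel
    rw [this, norm_smul, Real.norm_eq_abs, abs_of_nonneg hr.le, hen i]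
    rw [hr_def]; linarith
  have hqmem : ∀ i j, q i j ∈ E := by
    intro i j
    apply hball₀
    rw [Metric.mem_ball, dist_eq_norm, hq_def]
    have : x₀ + (r • e i + r • e j) - x₀ = r • e i + r • e j := by abel
    rw [this]
    calc ‖r • e i + r • e j‖ ≤ ‖r • e i‖ + ‖r • e j‖ := norm_add_le _ _
      _ = r + r := by
          rw [norm_smul, norm_smul, Real.norm_eq_abs, abs_of_nonneg hr.le, hen i, hen j]
          ring
      _ < ε₀ := by rw [hr_def]; linarith
  -- pointwise bounds
  have hm : ∀ x : EuclideanSpace ℝ (Fin D), ∃ M : ℝ,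
      (x ∈ E → ∀ n, |fn n x| ≤ M) ∧ 0 ≤ M := by
    intro x
    by_cases hx : x ∈ E
    · obtain ⟨M, hM⟩ := hpt x hx
      exact ⟨M, fun _ => hM, le_trans (abs_nonneg _) (hM 0)⟩
    · exact ⟨0, fun h => absurd h hx, le_refl 0⟩
  choose m hm1 hm0 using hm
  set M₀ : ℝ := m x₀ + ((∑ i, m (p i)) + ∑ i, ∑ j, m (q i j)) with hM₀_def
  have hsum_p : 0 ≤ ∑ i, m (p i) := Finset.sum_nonneg fun i _ => hm0 _
  have hsum_q : 0 ≤ ∑ i, ∑ j, m (q i j) :=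
    Finset.sum_nonneg fun i _ => Finset.sum_nonneg fun j _ => hm0 _
  have hM₀0 : 0 ≤ M₀ := by rw [hM₀_def]; have := hm0 x₀; linarith
  have hM₀x₀ : ∀ n, |fn n x₀| ≤ M₀ := fun n => by
    have := hm1 x₀ hx₀ n
    rw [hM₀_def]; linarith
  have hM₀p : ∀ i n, |fn n (p i)| ≤ M₀ := fun i n => by
    have h1 := hm1 (p i) (hpmem i) n
    have h2 : m (p i) ≤ ∑ i', m (p i') :=
      Finset.single_le_sum (fun i' _ => hm0 _) (Finset.mem_univ i)
    have := hm0 x₀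
    rw [hM₀_def]; linarith
  have hM₀q : ∀ i j n, |fn n (q i j)| ≤ M₀ := fun i j n => by
    have h1 := hm1 (q i j) (hqmem i j) n
    have h2 : m (q i j) ≤ ∑ j', m (q i j') :=
      Finset.single_le_sum (fun j' _ => hm0 _) (Finset.mem_univ j)
    have h3 : (∑ j', m (q i j')) ≤ ∑ i', ∑ j', m (q i' j') :=
      Finset.single_le_sum (fun i' _ => Finset.sum_nonneg fun j' _ => hm0 _)
        (Finset.mem_univ i)
    have := hm0 x₀
    rw [hM₀_def]; linarith
  -- Taylor expansions at x₀
  have hsym : ∀ n, ∀ u v, fderiv ℝ (fderiv ℝ (fn n)) x₀ u v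
      = fderiv ℝ (fderiv ℝ (fn n)) x₀ v u := fun n =>
    (hCA n x₀ hx₀).isSymmSndFDerivAt (by norm_num)
  have htay : ∀ n, ∀ b ∈ E,
      |fn n b - fn n x₀ - fderiv ℝ (fn n) x₀ (b - x₀)
        - (1/2 : ℝ) • fderiv ℝ (fderiv ℝ (fn n)) x₀ (b - x₀) (b - x₀)|
        ≤ C * ‖b - x₀‖ * ‖b - x₀‖ * ‖b - x₀‖ := by
    intro n b hb
    have := aux_taylor2 hEconv (hd0 n) (hd1 n) hx₀ hb hC0
      (fun z hz => hLip2 n z hz x₀ hx₀) (hsym n)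
    rwa [Real.norm_eq_abs] at this
  set Rm : ℕ → EuclideanSpace ℝ (Fin D) → ℝ := fun n b => fn n b - fn n x₀
    - fderiv ℝ (fn n) x₀ (b - x₀)
    - (1/2 : ℝ) • fderiv ℝ (fderiv ℝ (fn n)) x₀ (b - x₀) (b - x₀) with hRm_def
  have hpn : ∀ i, ‖p i - x₀‖ ≤ 2 * r := by
    intro i
    have d1 : p i - x₀ = r • e i := by simp only [hp_def]; abel
    rw [d1, norm_smul, Real.norm_eq_abs, abs_of_nonneg hr.le, hen i]
    linarith
  have hqn : ∀ i j, ‖q i j - x₀‖ ≤ 2 * r := by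
    intro i j
    have d3 : q i j - x₀ = r • e i + r • e j := by simp only [hq_def]; abel
    rw [d3]
    calc ‖r • e i + r • e j‖ ≤ ‖r • e i‖ + ‖r • e j‖ := norm_add_le _ _
      _ = 2 * r := by
          rw [norm_smul, norm_smul, Real.norm_eq_abs, abs_of_nonneg hr.le, hen i, hen j]
          ring
  have hRem : ∀ n, ∀ b ∈ E, ‖b - x₀‖ ≤ 2 * r → |Rm n b| ≤ 8 * C * r ^ 3 := by
    intro n b hb hnb
    have h1 := htay n b hb
    have h0 : (0:ℝ) ≤ ‖b - x₀‖ := norm_nonneg _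
    have h2 : C * ‖b - x₀‖ * ‖b - x₀‖ * ‖b - x₀‖ ≤ C * (2*r) * (2*r) * (2*r) := by
      gcongr
    have h3 : C * (2*r) * (2*r) * (2*r) = 8 * C * r ^ 3 := by ring
    simp only [hRm_def]
    linarith
  set eb : ℝ := (4 * M₀ + 24 * C * r ^ 3) / r ^ 2 with heb_def
  have heb0 : 0 ≤ eb := by positivity
  have hentry : ∀ n i j, |fderiv ℝ (fderiv ℝ (fn n)) x₀ (e i) (e j)| ≤ eb := by
    intro n i j
    have hkey : r ^ 2 * fderiv ℝ (fderiv ℝ (fn n)) x₀ (e i) (e j)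
        = (fn n (q i j) - fn n (p i) - fn n (p j) + fn n x₀)
          - Rm n (q i j) + Rm n (p i) + Rm n (p j) := by
      simp only [hRm_def, hq_def, hp_def]
      have d1 : x₀ + r • e i - x₀ = r • e i := by abel
      have d2 : x₀ + r • e j - x₀ = r • e j := by abel
      have d3 : x₀ + (r • e i + r • e j) - x₀ = r • e i + r • e j := by abel
      rw [d1, d2, d3]
      simp only [map_add, map_smul, ContinuousLinearMap.add_apply,
        ContinuousLinearMap.coe_smul', Pi.smul_apply, smul_eq_mul]
      rw [hsym n (e j) (e i)]
      ring
    have hA : |fn n (q i j) - fn n (p i) - fn n (p j) + fn n x₀| ≤ 4 * M₀ := by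
      have h1 := hM₀q i j n; have h2 := hM₀p i n; have h3 := hM₀p j n; have h4 := hM₀x₀ n
      have := abs_add_le (fn n (q i j) - fn n (p i) - fn n (p j)) (fn n x₀)
      have := abs_sub (fn n (q i j) - fn n (p i)) (fn n (p j))
      have := abs_sub (fn n (q i j)) (fn n (p i))
      calc |fn n (q i j) - fn n (p i) - fn n (p j) + fn n x₀|
          ≤ |fn n (q i j)| + |fn n (p i)| + |fn n (p j)| + |fn n x₀| := by
            have e1 := abs_add_le (fn n (q i j) - fn n (p i) - fn n (p j)) (fn n x₀)
            have e2 := abs_sub (fn n (q i j) - fn n (p i)) (fn n (p j))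
            have e3 := abs_sub (fn n (q i j)) (fn n (p i))
            linarith
        _ ≤ 4 * M₀ := by linarith
    have hR1 := hRem n (q i j) (hqmem i j) (hqn i j)
    have hR2 := hRem n (p i) (hpmem i) (hpn i)
    have hR3 := hRem n (p j) (hpmem j) (hpn j)
    have habs : |r ^ 2 * fderiv ℝ (fderiv ℝ (fn n)) x₀ (e i) (e j)|
        ≤ 4 * M₀ + 24 * C * r ^ 3 := by
      rw [hkey]
      have e1 := abs_add_le ((fn n (q i j) - fn n (p i) - fn n (p j) + fn n x₀)
        - Rm n (q i j) + Rm n (p i)) (Rm n (p j))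
      have e2 := abs_add_le ((fn n (q i j) - fn n (p i) - fn n (p j) + fn n x₀)
        - Rm n (q i j)) (Rm n (p i))
      have e3 := abs_sub (fn n (q i j) - fn n (p i) - fn n (p j) + fn n x₀) (Rm n (q i j))
      have e4 := abs_abs (Rm n (q i j))
      have e5 := abs_nonneg (Rm n (q i j))
      have e6 := neg_abs_le (Rm n (p i))
      have e7 := le_abs_self (Rm n (p i))
      have e8 := neg_abs_le (Rm n (p j))
      have e9 := le_abs_self (Rm n (p j))
      linarith
    rw [abs_mul, abs_of_pos (by positivity : (0:ℝ) < r ^ 2)] at habs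
    rw [heb_def, le_div_iff₀ (by positivity : (0:ℝ) < r ^ 2)]
    linarith
  -- operator norm bounds at x₀
  have he_app : ∀ i : Fin D, EuclideanSpace.single i (1:ℝ) = e i := fun i => rfl
  set MB : ℝ := (D:ℝ) * ((D:ℝ) * eb) with hMB_def
  have hMB0 : 0 ≤ MB := by positivity
  have hMB : ∀ n, ‖fderiv ℝ (fderiv ℝ (fn n)) x₀‖ ≤ MB := by
    intro n
    calc ‖fderiv ℝ (fderiv ℝ (fn n)) x₀‖
        ≤ ∑ i, ‖fderiv ℝ (fderiv ℝ (fn n)) x₀ (EuclideanSpace.single i (1:ℝ))‖ :=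
          euclid_opnorm_le _
      _ ≤ ∑ _i : Fin D, ((D:ℝ) * eb) := by
          apply Finset.sum_le_sum
          intro i _
          calc ‖fderiv ℝ (fderiv ℝ (fn n)) x₀ (EuclideanSpace.single i (1:ℝ))‖
              ≤ ∑ j, ‖fderiv ℝ (fderiv ℝ (fn n)) x₀ (EuclideanSpace.single i (1:ℝ))
                  (EuclideanSpace.single j (1:ℝ))‖ := euclid_opnorm_le _
            _ ≤ ∑ _j : Fin D, eb := by
                apply Finset.sum_le_sum
                intro j _
                rw [Real.norm_eq_abs, he_app, he_app]
                exact hentry n i j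
            _ = (D:ℝ) * eb := by
                rw [Finset.sum_const, Finset.card_univ, Fintype.card_fin, nsmul_eq_mul]
      _ = MB := by
          rw [Finset.sum_const, Finset.card_univ, Fintype.card_fin, nsmul_eq_mul, hMB_def]
  -- first derivative at x₀
  set pb : ℝ := (2 * M₀ + eb * r ^ 2 / 2 + 8 * C * r ^ 3) / r with hpb_def
  have hpb0 : 0 ≤ pb := by positivity
  have hPe : ∀ n i, |fderiv ℝ (fn n) x₀ (e i)| ≤ pb := by
    intro n i
    have hkey : r * fderiv ℝ (fn n) x₀ (e i)
        = fn n (p i) - fn n x₀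
          - (1/2 : ℝ) * (r * (r * fderiv ℝ (fderiv ℝ (fn n)) x₀ (e i) (e i)))
          - Rm n (p i) := by
      simp only [hRm_def, hp_def]
      have d1 : x₀ + r • e i - x₀ = r • e i := by abel
      rw [d1]
      simp only [map_smul, ContinuousLinearMap.coe_smul', Pi.smul_apply, smul_eq_mul]
      ring
    have hR := hRem n (p i) (hpmem i) (hpn i)
    have hBii : |fderiv ℝ (fderiv ℝ (fn n)) x₀ (e i) (e i)| ≤ eb := hentry n i i
    have habs : |r * fderiv ℝ (fn n) x₀ (e i)|
        ≤ 2 * M₀ + eb * r ^ 2 / 2 + 8 * C * r ^ 3 := by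
      rw [hkey]
      have h1 := hM₀p i n
      have h2 := hM₀x₀ n
      have e0 : |(1/2 : ℝ) * (r * (r * fderiv ℝ (fderiv ℝ (fn n)) x₀ (e i) (e i)))|
          ≤ eb * r ^ 2 / 2 := by
        rw [abs_mul, abs_mul, abs_mul]
        rw [abs_of_nonneg (by norm_num : (0:ℝ) ≤ (1/2:ℝ)), abs_of_nonneg hr.le]
        nlinarith [abs_nonneg (fderiv ℝ (fderiv ℝ (fn n)) x₀ (e i) (e i))]
      have e1 := abs_sub (fn n (p i) - fn n x₀
        - (1/2 : ℝ) * (r * (r * fderiv ℝ (fderiv ℝ (fn n)) x₀ (e i) (e i)))) (Rm n (p i))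
      have e2 := abs_sub (fn n (p i) - fn n x₀)
        ((1/2 : ℝ) * (r * (r * fderiv ℝ (fderiv ℝ (fn n)) x₀ (e i) (e i))))
      have e3 := abs_sub (fn n (p i)) (fn n x₀)
      linarith
    rw [abs_mul, abs_of_pos hr] at habs
    rw [hpb_def, le_div_iff₀ hr]
    linarith
  set MP : ℝ := (D:ℝ) * pb with hMP_def
  have hMP0 : 0 ≤ MP := by positivity
  have hMP : ∀ n, ‖fderiv ℝ (fn n) x₀‖ ≤ MP := by
    intro n
    calc ‖fderiv ℝ (fn n) x₀‖
        ≤ ∑ i, ‖fderiv ℝ (fn n) x₀ (EuclideanSpace.single i (1:ℝ))‖ := euclid_opnorm_le _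
      _ ≤ ∑ _i : Fin D, pb := by
          apply Finset.sum_le_sum
          intro i _
          rw [Real.norm_eq_abs, he_app]
          exact hPe n i
      _ = MP := by
          rw [Finset.sum_const, Finset.card_univ, Fintype.card_fin, nsmul_eq_mul, hMP_def]
  -- global bounds
  set M₂ : ℝ := MB + C * Dm with hM₂_def
  have hM₂0 : 0 ≤ M₂ := by positivity
  have hb2 : ∀ n, ∀ x ∈ E, ‖fderiv ℝ (fderiv ℝ (fn n)) x‖ ≤ M₂ := by
    intro n x hx
    calc ‖fderiv ℝ (fderiv ℝ (fn n)) x‖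
        = ‖fderiv ℝ (fderiv ℝ (fn n)) x₀
            + (fderiv ℝ (fderiv ℝ (fn n)) x - fderiv ℝ (fderiv ℝ (fn n)) x₀)‖ := by
          congr 1; abel
      _ ≤ ‖fderiv ℝ (fderiv ℝ (fn n)) x₀‖
            + ‖fderiv ℝ (fderiv ℝ (fn n)) x - fderiv ℝ (fderiv ℝ (fn n)) x₀‖ :=
          norm_add_le _ _
      _ ≤ MB + C * Dm := by
          apply add_le_add (hMB n)
          calc ‖fderiv ℝ (fderiv ℝ (fn n)) x - fderiv ℝ (fderiv ℝ (fn n)) x₀‖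
              ≤ C * ‖x - x₀‖ := hLip2 n x hx x₀ hx₀
            _ ≤ C * Dm := mul_le_mul_of_nonneg_left (hDm x hx x₀ hx₀) hC0
  have hLip1 : ∀ n, ∀ x ∈ E, ∀ y ∈ E,
      ‖fderiv ℝ (fn n) x - fderiv ℝ (fn n) y‖ ≤ M₂ * ‖x - y‖ := by
    intro n x hx y hy
    exact aux_lip hEconv (hd1 n) (fun z hz => hb2 n z hz) hy hx
  set M₁ : ℝ := MP + M₂ * Dm with hM₁_def
  have hM₁0 : 0 ≤ M₁ := by positivity
  have hb1 : ∀ n, ∀ x ∈ E, ‖fderiv ℝ (fn n) x‖ ≤ M₁ := by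
    intro n x hx
    calc ‖fderiv ℝ (fn n) x‖
        = ‖fderiv ℝ (fn n) x₀ + (fderiv ℝ (fn n) x - fderiv ℝ (fn n) x₀)‖ := by
          congr 1; abel
      _ ≤ ‖fderiv ℝ (fn n) x₀‖ + ‖fderiv ℝ (fn n) x - fderiv ℝ (fn n) x₀‖ := norm_add_le _ _
      _ ≤ MP + M₂ * Dm := by
          apply add_le_add (hMP n)
          calc ‖fderiv ℝ (fn n) x - fderiv ℝ (fn n) x₀‖ ≤ M₂ * ‖x - x₀‖ :=
                hLip1 n x hx x₀ hx₀
            _ ≤ M₂ * Dm := mul_le_mul_of_nonneg_left (hDm x hx x₀ hx₀) hM₂0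
  have hLip0 : ∀ n, ∀ x ∈ E, ∀ y ∈ E, |fn n x - fn n y| ≤ M₁ * ‖x - y‖ := by
    intro n x hx y hy
    have := aux_lip hEconv (hd0 n) (fun z hz => hb1 n z hz) hy hx
    rwa [Real.norm_eq_abs] at this
  set Mf : ℝ := m x₀ + M₁ * Dm with hMf_def
  have hMf0 : 0 ≤ Mf := by
    have := hm0 x₀
    positivity
  have hb0 : ∀ n, ∀ x ∈ E, |fn n x| ≤ Mf := by
    intro n x hx
    calc |fn n x| = |fn n x₀ + (fn n x - fn n x₀)| := by congr 1; ring
      _ ≤ |fn n x₀| + |fn n x - fn n x₀| := abs_add_le _ _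
      _ ≤ m x₀ + M₁ * Dm := by
          apply add_le_add (hm1 x₀ hx₀ n)
          calc |fn n x - fn n x₀| ≤ M₁ * ‖x - x₀‖ := hLip0 n x hx x₀ hx₀
            _ ≤ M₁ * Dm := mul_le_mul_of_nonneg_left (hDm x hx x₀ hx₀) hM₁0
  -- final constant
  refine ⟨Mf + M₁ + M₂ + C, by positivity, ?_, ?_⟩
  · intro n x hx
    exact ⟨le_trans (hb0 n x hx) (by linarith), le_trans (hb1 n x hx) (by linarith),
      le_trans (hb2 n x hx) (by linarith)⟩
  · intro n x hx y hy
    have hnn : (0:ℝ) ≤ ‖x - y‖ := norm_nonneg _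
    exact ⟨le_trans (hLip0 n x hx y hy) (by nlinarith),
      le_trans (hLip1 n x hx y hy) (by nlinarith),
      le_trans (hLip2 n x hx y hy) (by nlinarith)⟩

end aux

set_option maxHeartbeats 2000000 in
theorem regular_convergence
    {D : ℕ} (E : Set (EuclideanSpace ℝ (Fin D)))
    (hEopen : IsOpen E) (hEconv : Convex ℝ E) (hEbdd : Bornology.IsBounded E)
    (fn : ℕ → EuclideanSpace ℝ (Fin D) → ℝ)
    (hsmooth : ∀ n, ContDiffOn ℝ 3 (fn n) E)
    (hthird : ∃ C, ∀ (n : ℕ), ∀ x ∈ E, ‖iteratedFDeriv ℝ 3 (fn n) x‖ ≤ C) :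
    ((∀ x ∈ E, ∃ M, ∀ n, |fn n x| ≤ M) →
      (∃ C, ∀ (n : ℕ), ∀ x ∈ E, ∀ y ∈ E,
          |fn n x - fn n y| ≤ C * ‖x - y‖ ∧
          ‖fderiv ℝ (fn n) x - fderiv ℝ (fn n) y‖ ≤ C * ‖x - y‖ ∧
          ‖fderiv ℝ (fderiv ℝ (fn n)) x - fderiv ℝ (fderiv ℝ (fn n)) y‖ ≤ C * ‖x - y‖) ∧
      (∃ M, ∀ (n : ℕ), ∀ x ∈ E, |fn n x| ≤ M ∧ ‖fderiv ℝ (fn n) x‖ ≤ M ∧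
          ‖fderiv ℝ (fderiv ℝ (fn n)) x‖ ≤ M)) ∧
    (∀ f : EuclideanSpace ℝ (Fin D) → ℝ,
      (∀ x ∈ E, Tendsto (fun n => fn n x) atTop (𝓝 (f x))) →
      (∀ x ∈ E, DifferentiableAt ℝ f x) ∧
      (∀ x ∈ E, DifferentiableAt ℝ (fderiv ℝ f) x) ∧
      TendstoUniformlyOn (fun n x => fn n x) f atTop E ∧
      TendstoUniformlyOn (fun n x => fderiv ℝ (fn n) x) (fun x => fderiv ℝ f x) atTop E ∧
      TendstoUniformlyOn (fun n x => fderiv ℝ (fderiv ℝ (fn n)) x)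
        (fun x => fderiv ℝ (fderiv ℝ f) x) atTop E) := by
  obtain ⟨C₀, hC₀⟩ := hthird
  have hC0 : (0:ℝ) ≤ max C₀ 0 := le_max_right _ _
  have hthird' : ∀ (n : ℕ), ∀ x ∈ E, ‖iteratedFDeriv ℝ 3 (fn n) x‖ ≤ max C₀ 0 :=
    fun n x hx => le_trans (hC₀ n x hx) (le_max_left _ _)
  constructor
  · intro hpt
    obtain ⟨M, hM0, hbd, hlip⟩ :=
      regular_part1 E hEopen hEconv hEbdd fn hsmooth hC0 hthird' hpt
    exact ⟨⟨M, hlip⟩, ⟨M, hbd⟩⟩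
  · intro f hf
    have hpt : ∀ x ∈ E, ∃ M, ∀ n, |fn n x| ≤ M := by
      intro x hx
      have habs : Tendsto (fun n => |fn n x|) atTop (𝓝 |f x|) := (hf x hx).abs
      obtain ⟨M, hM⟩ := habs.bddAbove_range
      exact ⟨M, fun n => hM (Set.mem_range_self n)⟩
    obtain ⟨M, hM0, hbd, hlip⟩ :=
      regular_part1 E hEopen hEconv hEbdd fn hsmooth hC0 hthird' hpt
    have hCA : ∀ n, ∀ x ∈ E, ContDiffAt ℝ 3 (fn n) x := fun n x hx =>
      (hsmooth n).contDiffAt (hEopen.mem_nhds hx)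
    have hd0 : ∀ n, ∀ x ∈ E, DifferentiableAt ℝ (fn n) x := fun n x hx =>
      (hCA n x hx).differentiableAt (by norm_num)
    have hd1 : ∀ n, ∀ x ∈ E, DifferentiableAt ℝ (fderiv ℝ (fn n)) x := fun n x hx =>
      ((hCA n x hx).fderiv_right (m := 2) (by norm_num)).differentiableAt (by norm_num)
    have hd2 : ∀ n, ∀ x ∈ E, DifferentiableAt ℝ (fderiv ℝ (fderiv ℝ (fn n))) x :=
      fun n x hx =>
      (((hCA n x hx).fderiv_right (m := 2) (by norm_num)).fderiv_right (m := 1)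
        (by norm_num)).differentiableAt (by norm_num)
    rcases E.eq_empty_or_nonempty with rfl | ⟨x₀, hx₀⟩
    · exact ⟨by simp, by simp, tendstoUniformlyOn_empty, tendstoUniformlyOn_empty,
        tendstoUniformlyOn_empty⟩
    obtain ⟨ε₀, hε₀, hball₀⟩ := Metric.isOpen_iff.1 hEopen x₀ hx₀
    set r₀ : ℝ := ε₀ / 2 with hr₀_def
    have hr₀ : 0 < r₀ := by positivity
    have hball : Metric.closedBall x₀ r₀ ⊆ E :=
      (Metric.closedBall_subset_ball (by rw [hr₀_def]; linarith)).trans hball₀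
    obtain ⟨Dm, hDm'⟩ := Metric.isBounded_iff.1 hEbdd
    have hDm : ∀ x ∈ E, ∀ y ∈ E, ‖x - y‖ ≤ Dm := fun x hx y hy => by
      rw [← dist_eq_norm]; exact hDm' hx hy
    -- uniform convergence of the functions
    have htb : TotallyBounded E :=
      TotallyBounded.subset subset_closure hEbdd.isCompact_closure.totallyBounded
    have hU0 : TendstoUniformlyOn (fun n x => fn n x) f atTop E :=
      aux_net htb hM0 (fun n x hx y hy => (hlip n x hx y hy).1) hf
    -- uniform Cauchy for first derivatives
    have hsmall0 : ∀ δ > (0:ℝ), ∃ N, ∀ m ≥ N, ∀ n ≥ N, ∀ x ∈ E, ‖fn m x - fn n x‖ ≤ δ := by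
      intro δ hδ
      have := (Metric.tendstoUniformlyOn_iff.1 hU0) (δ/2) (by positivity)
      obtain ⟨N, hN⟩ := eventually_atTop.1 this
      refine ⟨N, fun m hm n hn x hx => ?_⟩
      have h1 := hN m hm x hx
      have h2 := hN n hn x hx
      rw [Real.dist_eq] at h1 h2
      rw [Real.norm_eq_abs]
      have : fn m x - fn n x = -(f x - fn m x) + (f x - fn n x) := by ring
      rw [this]
      calc |(-(f x - fn m x)) + (f x - fn n x)| ≤ |(-(f x - fn m x))| + |f x - fn n x| :=
            abs_add_le _ _
        _ ≤ δ := by rw [abs_neg]; linarith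
    have hcauchy1 := aux_cauchy hEconv hr₀ hball hDm hd0 hM0
      (fun n z hz w hw => (hlip n z hz w hw).2.1) hsmall0
    have hUC1 : UniformCauchySeqOn (fun n x => fderiv ℝ (fn n) x) atTop E := by
      rw [Metric.uniformCauchySeqOn_iff]
      intro ε hε
      obtain ⟨N, hN⟩ := hcauchy1 (ε/2) (by positivity)
      refine ⟨N, fun m hm n hn x hx => ?_⟩
      rw [dist_eq_norm]
      exact lt_of_le_of_lt (hN m hm n hn x hx) (by linarith)
    have hex1 : ∀ x : EuclideanSpace ℝ (Fin D),
        ∃ L : EuclideanSpace ℝ (Fin D) →L[ℝ] ℝ,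
          x ∈ E → Tendsto (fun n => fderiv ℝ (fn n) x) atTop (𝓝 L) := by
      intro x
      by_cases hx : x ∈ E
      · obtain ⟨L, hL⟩ := cauchySeq_tendsto_of_complete (hUC1.cauchySeq hx)
        exact ⟨L, fun _ => hL⟩
      · exact ⟨0, fun h => absurd h hx⟩
    choose g1 hg1 using hex1
    have hU1 : TendstoUniformlyOn (fun n x => fderiv ℝ (fn n) x) g1 atTop E :=
      hUC1.tendstoUniformlyOn_of_tendsto (fun x hx => hg1 x hx)
    -- uniform Cauchy for second derivatives
    have hcauchy2 := aux_cauchy hEconv hr₀ hball hDm hd1 hM0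
      (fun n z hz w hw => (hlip n z hz w hw).2.2) hcauchy1
    have hUC2 : UniformCauchySeqOn (fun n x => fderiv ℝ (fderiv ℝ (fn n)) x) atTop E := by
      rw [Metric.uniformCauchySeqOn_iff
        (α := EuclideanSpace ℝ (Fin D) →L[ℝ] EuclideanSpace ℝ (Fin D) →L[ℝ] ℝ)]
      intro ε hε
      obtain ⟨N, hN⟩ := hcauchy2 (ε/2) (by positivity)
      refine ⟨N, fun m hm n hn x hx => ?_⟩
      rw [dist_eq_norm
        (E := EuclideanSpace ℝ (Fin D) →L[ℝ] EuclideanSpace ℝ (Fin D) →L[ℝ] ℝ)]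
      exact lt_of_le_of_lt (hN m hm n hn x hx) (by linarith)
    have hex2 : ∀ x : EuclideanSpace ℝ (Fin D),
        ∃ L : EuclideanSpace ℝ (Fin D) →L[ℝ] (EuclideanSpace ℝ (Fin D) →L[ℝ] ℝ),
          x ∈ E → Tendsto (fun n => fderiv ℝ (fderiv ℝ (fn n)) x) atTop (𝓝 L) := by
      intro x
      by_cases hx : x ∈ E
      · obtain ⟨L, hL⟩ := cauchySeq_tendsto_of_complete (hUC2.cauchySeq hx)
        exact ⟨L, fun _ => hL⟩
      · exact ⟨0, fun h => absurd h hx⟩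
    choose g2 hg2 using hex2
    have hU2 : TendstoUniformlyOn (fun n x => fderiv ℝ (fderiv ℝ (fn n)) x) g2 atTop E :=
      hUC2.tendstoUniformlyOn_of_tendsto (fun x hx => hg2 x hx)
    -- pass to the limit
    have hHasD : ∀ x ∈ E, HasFDerivAt f (g1 x) x := fun x hx =>
      hasFDerivAt_of_tendstoUniformlyOn hEopen hU1
        (fun n x hx => (hd0 n x hx).hasFDerivAt) hf hx
    have hdf : ∀ x ∈ E, fderiv ℝ f x = g1 x := fun x hx => (hHasD x hx).fderiv
    have hHasD2 : ∀ x ∈ E, HasFDerivAt g1 (g2 x) x := fun x hx =>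
      hasFDerivAt_of_tendstoUniformlyOn hEopen hU2
        (fun n x hx => (hd1 n x hx).hasFDerivAt) (fun x hx => hg1 x hx) hx
    have hfg1 : ∀ x ∈ E, HasFDerivAt (fderiv ℝ f) (g2 x) x := fun x hx =>
      (hHasD2 x hx).congr_of_eventuallyEq
        (eventually_of_mem (hEopen.mem_nhds hx) (fun y hy => hdf y hy))
    have hdf2 : ∀ x ∈ E, fderiv ℝ (fderiv ℝ f) x = g2 x := fun x hx => (hfg1 x hx).fderiv
    refine ⟨fun x hx => (hHasD x hx).differentiableAt,
      fun x hx => (hfg1 x hx).differentiableAt, hU0, ?_, ?_⟩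
    · exact hU1.congr_right (fun x hx => (hdf x hx).symm)
    · exact hU2.congr_right (fun x hx => (hdf2 x hx).symm)
end

section
/- Let $R_1, R_2, \ldots \subseteq \mathbb{R}^D$ be convex sets, and suppose $R_n \to R$ pointwise (i.e., $\mathbf{1}(x \in R_n) \to \mathbf{1}(x \in R)$ for every $x$) for some set $R \subseteq \mathbb{R}^D$ with $0 < m(R) < \infty$, where $m$ is Lebesgue measure. Then for any $\epsilon > 0$, setting $A = \{x : d(x, R^c) > \epsilon\}$ and $B = \{x : d(x, R) \le \epsilon\}$, we have $A \subseteq R_n \subseteq B$ for all sufficiently large $n$. -/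
open MeasureTheory Filter Set Metric
open scoped Topology ENNReal

set_option maxHeartbeats 1000000

section Aux

open Bornology
open scoped RealInnerProductSpace

section General
variable {α : Type*}

lemma mem_iff_eventually (Rn : ℕ → Set α) (R : Set α)
    (hlim : ∀ x, Tendsto (fun n => (Rn n).indicator (fun _ => (1:ℝ)) x) atTop
      (𝓝 (R.indicator (fun _ => (1:ℝ)) x))) (x : α) :
    ∀ᶠ n in atTop, (x ∈ Rn n ↔ x ∈ R) := by
  by_cases hx : x ∈ R
  · have h1 : R.indicator (fun _ => (1:ℝ)) x = 1 := indicator_of_mem hx _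
    have := (hlim x).eventually (eventually_gt_nhds (by rw [h1]; norm_num : (1/2:ℝ) < R.indicator (fun _ => (1:ℝ)) x))
    filter_upwards [this] with n hn
    simp only [hx, iff_true]
    by_contra hmem
    rw [indicator_of_notMem hmem] at hn
    norm_num at hn
  · have h1 : R.indicator (fun _ => (1:ℝ)) x = 0 := indicator_of_notMem hx _
    have := (hlim x).eventually (eventually_lt_nhds (by rw [h1]; norm_num : R.indicator (fun _ => (1:ℝ)) x < 1/2))
    filter_upwards [this] with n hn
    simp only [hx, iff_false]
    intro hmem
    rw [indicator_of_mem hmem] at hn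
    norm_num at hn


end General

section InnerSpace
variable {E : Type*} [NormedAddCommGroup E] [InnerProductSpace ℝ E]
  [FiniteDimensional ℝ E]

lemma mem_convexHull_of_net {E : Type*} [NormedAddCommGroup E] [InnerProductSpace ℝ E]
    [CompleteSpace E]
    (x : E) (ρ δ : ℝ) (hρ : 0 < ρ) (hδρ : δ < ρ) (N : Set E) (hN : N.Finite)
    (h : ∀ y, dist y x ≤ ρ → ∃ z ∈ N, dist y z ≤ δ) :
    x ∈ convexHull ℝ N := by
  by_contra hx
  have hCc : Convex ℝ (convexHull ℝ N) := convex_convexHull ℝ N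
  have hCcl : IsClosed (convexHull ℝ N) := hN.isClosed_convexHull ℝ
  have hCne : (convexHull ℝ N).Nonempty := by
    obtain ⟨z, hz, -⟩ := h x (by simp [hρ.le])
    exact ⟨z, subset_convexHull ℝ N hz⟩
  obtain ⟨p, hpC, hp⟩ := exists_norm_eq_iInf_of_complete_convex hCne
    (hCcl.isComplete) hCc x
  have hchar := (norm_eq_iInf_iff_real_inner_le_zero hCc hpC).mp hp
  set u := x - p with hu
  have hune : u ≠ 0 := sub_ne_zero.mpr (fun hxp => hx (hxp ▸ hpC))
  have hunorm : (0:ℝ) < ‖u‖ := norm_pos_iff.mpr hune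
  set y := x + (ρ / ‖u‖) • u with hy
  have hdyx : dist y x ≤ ρ := by
    rw [hy, dist_eq_norm, add_sub_cancel_left, norm_smul]
    rw [Real.norm_eq_abs, abs_of_pos (div_pos hρ hunorm)]
    rw [div_mul_cancel₀ _ hunorm.ne']
  obtain ⟨z, hzN, hzy⟩ := h y hdyx
  have hzC : z ∈ convexHull ℝ N := subset_convexHull ℝ N hzN
  have h1 : ⟪u, z - p⟫ ≤ 0 := hchar z hzC
  have h2 : ⟪u, z - p⟫ = ⟪u, z - y⟫ + ρ * ‖u‖ + ‖u‖ ^ 2 := by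
    have hzp : z - p = (z - y) + ((ρ / ‖u‖) • u) + u := by
      rw [hy, hu]; abel
    rw [hzp, inner_add_right, inner_add_right, real_inner_smul_right,
      real_inner_self_eq_norm_sq]
    field_simp
  have h3 : -(δ * ‖u‖) ≤ ⟪u, z - y⟫ := by
    have := abs_real_inner_le_norm u (z - y)
    have hzynorm : ‖z - y‖ ≤ δ := by
      rw [← dist_eq_norm, dist_comm]; exact hzy
    nlinarith [abs_le.mp this, hunorm]
  nlinarith [hunorm]

lemma limit_convex (Rn : ℕ → Set E) (R : Set E) (hconv : ∀ n, Convex ℝ (Rn n))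
    (hlim : ∀ x, Tendsto (fun n => (Rn n).indicator (fun _ => (1:ℝ)) x) atTop
      (𝓝 (R.indicator (fun _ => (1:ℝ)) x))) :
    Convex ℝ R := by
  intro x hx y hy a b ha hb hab
  have h1 := mem_iff_eventually Rn R hlim x
  have h2 := mem_iff_eventually Rn R hlim y
  have h3 := mem_iff_eventually Rn R hlim (a • x + b • y)
  obtain ⟨n, hn1, hn2, hn3⟩ := (h1.and (h2.and h3)).exists
  exact hn3.mp (hconv n (hn1.mpr hx) (hn2.mpr hy) ha hb hab)

-- convexity cone step: if closedBall c r ⊆ R, x ∈ R, s ∈ [0,1], then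
-- closedBall (c + s•(x-c)) ((1-s)*r) ⊆ R
lemma cone_ball_subset {R : Set E} (hR : Convex ℝ R) {c x : E} {r s : ℝ}
    (hball : closedBall c r ⊆ R) (hx : x ∈ R)
    (hs0 : 0 ≤ s) (hs1 : s < 1) :
    closedBall (c + s • (x - c)) ((1 - s) * r) ⊆ R := by
  intro p hp
  rw [mem_closedBall, dist_eq_norm] at hp
  set cj := c + s • (x - c) with hcj
  have h1s : (0:ℝ) < 1 - s := by linarith
  set b := c + (1 / (1 - s)) • (p - cj) with hb
  have hbR : b ∈ R := by
    apply hball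
    rw [mem_closedBall, dist_eq_norm]
    rw [hb, add_sub_cancel_left, norm_smul, Real.norm_eq_abs,
      abs_of_pos (by positivity : (0:ℝ) < 1 / (1 - s))]
    rw [div_mul_eq_mul_div, one_mul, div_le_iff₀ h1s]
    calc ‖p - cj‖ ≤ (1 - s) * r := hp
    _ = r * (1 - s) := by ring
  have hcomb : p = (1 - s) • b + s • x := by
    rw [hb, hcj, smul_add, smul_smul]
    rw [mul_one_div, div_self h1s.ne']
    module
  rw [hcomb]
  exact hR hbR hx h1s.le hs0 (by ring)

lemma part_one (Rn : ℕ → Set E) (R : Set E) (hconv : ∀ n, Convex ℝ (Rn n))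
    (hmem : ∀ x, ∀ᶠ n in atTop, (x ∈ Rn n ↔ x ∈ R))
    (hbdd : IsBounded R) (ε : ℝ) (hε : 0 < ε) :
    ∀ᶠ n in atTop, {x | ε < infDist x Rᶜ} ⊆ Rn n := by
  set K := {y : E | ε/2 ≤ infDist y Rᶜ} with hK
  have hKR : K ⊆ R := by
    intro y hy
    by_contra hyR
    have : infDist y Rᶜ = 0 := infDist_zero_of_mem hyR
    rw [hK, mem_setOf_eq, this] at hy
    linarith
  have hKcomp : IsCompact K := by
    apply isCompact_of_isClosed_isBounded
    · exact isClosed_le continuous_const (continuous_infDist_pt Rᶜ)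
    · exact hbdd.subset hKR
  obtain ⟨Z, hZK, hZfin, hZcov⟩ := hKcomp.elim_finite_subcover_image
    (fun y (_ : y ∈ K) => isOpen_ball (x := y) (ε := ε/8))
    (fun x hx => mem_iUnion₂.mpr ⟨x, hx, mem_ball_self (by positivity)⟩)
  have hev : ∀ᶠ n in atTop, ∀ z ∈ Z, z ∈ Rn n := by
    rw [eventually_all_finite hZfin]
    intro z hz
    filter_upwards [hmem z] with n hn
    exact hn.mpr (hKR (hZK hz))
  filter_upwards [hev] with n hn x hx
  rw [mem_setOf_eq] at hx
  have hxhull : x ∈ convexHull ℝ Z := by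
    apply mem_convexHull_of_net x (ε/2) (ε/8) (by positivity) (by linarith) Z hZfin
    intro y hy
    have hyK : y ∈ K := by
      rw [hK, mem_setOf_eq]
      have := infDist_le_infDist_add_dist (x := x) (y := y) (s := Rᶜ)
      rw [dist_comm] at this
      linarith
    obtain ⟨z, hz, hyz⟩ := mem_iUnion₂.mp (hZcov hyK)
    exact ⟨z, hz, (mem_ball.mp hyz).le⟩
  exact convexHull_min (fun z hz => hn z hz) (hconv n) hxhull

-- eventually the ball closedBall c (r/4) is inside Rn n
lemma eventually_ball_subset' (Rn : ℕ → Set E) (R : Set E) (hconv : ∀ n, Convex ℝ (Rn n))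
    (hmem : ∀ x, ∀ᶠ n in atTop, (x ∈ Rn n ↔ x ∈ R))
    {c : E} {r : ℝ} (hr : 0 < r) (hball : closedBall c r ⊆ R) :
    ∀ᶠ n in atTop, closedBall c (r/4) ⊆ Rn n := by
  have hKcomp : IsCompact (closedBall c (r/2)) := isCompact_closedBall c _
  obtain ⟨Z, hZK, hZfin, hZcov⟩ := hKcomp.elim_finite_subcover_image
    (fun y (_ : y ∈ closedBall c (r/2)) => isOpen_ball (x := y) (ε := r/8))
    (fun x hx => mem_iUnion₂.mpr ⟨x, hx, mem_ball_self (by positivity)⟩)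
  have hev : ∀ᶠ n in atTop, ∀ z ∈ Z, z ∈ Rn n := by
    rw [eventually_all_finite hZfin]
    intro z hz
    filter_upwards [hmem z] with n hn
    exact hn.mpr (hball (closedBall_subset_closedBall (by linarith) (hZK hz)))
  filter_upwards [hev] with n hn x hx
  have hxhull : x ∈ convexHull ℝ Z := by
    apply mem_convexHull_of_net x (r/4) (r/8) (by positivity) (by linarith) Z hZfin
    intro y hy
    have hyK : y ∈ closedBall c (r/2) := by
      rw [mem_closedBall] at hx ⊢
      calc dist y c ≤ dist y x + dist x c := dist_triangle _ _ _
        _ ≤ r/4 + r/4 := add_le_add hy hx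
        _ = r/2 := by ring
    obtain ⟨z, hz, hyz⟩ := mem_iUnion₂.mp (hZcov hyK)
    exact ⟨z, hz, (mem_ball.mp hyz).le⟩
  exact convexHull_min (fun z hz => hn z hz) (hconv n) hxhull


section Meas
variable [MeasureSpace E] [BorelSpace E] [(volume : Measure E).IsAddHaarMeasure]

lemma bounded_of_convex_finite_volume {R : Set E}
    (hR : Convex ℝ R) (c : E) (r : ℝ) (hr : 0 < r)
    (hball : closedBall c r ⊆ R) (hfin : volume R < ⊤) :
    IsBounded R := by
  by_contra hunb
  -- volume of the small ball
  set v := volume (closedBall (0:E) (r/2)) with hv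
  have hv0 : 0 < v := measure_closedBall_pos volume _ (by positivity)
  have hvfin : v < ⊤ := by
    refine lt_of_le_of_lt ?_ hfin
    rw [hv, ← Measure.addHaar_closedBall_center volume c]
    exact measure_mono ((closedBall_subset_closedBall (by linarith)).trans hball)
  -- choose N with N * v > volume R
  obtain ⟨N, hN⟩ := ENNReal.exists_nat_gt (r := volume R / v) (by
    exact (ENNReal.div_lt_top hfin.ne hv0.ne').ne)
  have hNv : volume R < N * v := by
    rw [← ENNReal.div_lt_iff (Or.inl hv0.ne') (Or.inl hvfin.ne)]
    exact hN
  -- choose x ∈ R far from c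
  have : ¬ (∃ M, R ⊆ closedBall c M) := by
    rw [← isBounded_iff_subset_closedBall c]; exact hunb
  push_neg at this
  obtain ⟨x, hxR, hxfar⟩ : ∃ x ∈ R, ¬ x ∈ closedBall c (4 * r * N + 1) := by
    obtain ⟨x, hx1, hx2⟩ := not_subset.mp (this (4 * r * N + 1))
    exact ⟨x, hx1, hx2⟩
  rw [mem_closedBall, not_le] at hxfar
  set L := dist x c with hL
  have hL0 : (0:ℝ) < L := lt_of_le_of_lt (by positivity) hxfar
  -- centers
  set cj : ℕ → E := fun j => c + ((2 * r * j) / L) • (x - c) with hcj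
  have hsub : ∀ j ∈ Finset.range N, closedBall (cj j) (r / 2) ⊆ R := by
    intro j hj
    rw [Finset.mem_range] at hj
    have hsle : (2 * r * j) / L ≤ 1 / 2 := by
      rw [div_le_div_iff₀ hL0 (by norm_num)]
      have : (j:ℝ) ≤ (N:ℝ) := by exact_mod_cast hj.le
      nlinarith [hxfar]
    have hs0 : (0:ℝ) ≤ (2 * r * j) / L := by positivity
    have := cone_ball_subset hR hball hxR hs0 (lt_of_le_of_lt hsle (by norm_num))
    refine (closedBall_subset_closedBall ?_).trans this
    nlinarith [hsle]
  have hdisj : (↑(Finset.range N) : Set ℕ).Pairwise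
      (Function.onFun Disjoint fun j => closedBall (cj j) (r / 2)) := by
    intro i _ j _ hij
    apply closedBall_disjoint_closedBall
    have hdd : dist (cj i) (cj j) = 2 * r * |(i:ℝ) - j| := by
      rw [hcj, dist_eq_norm]
      have he : c + ((2 * r * i) / L) • (x - c) - (c + ((2 * r * j) / L) • (x - c))
          = (((2 * r * i) - (2 * r * j)) / L) • (x - c) := by
        rw [sub_div]; module
      have hxc : ‖x - c‖ = L := by rw [hL, dist_eq_norm]
      rw [he, norm_smul, Real.norm_eq_abs, abs_div, abs_of_pos hL0, hxc,
        div_mul_cancel₀ _ hL0.ne']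
      rw [show 2 * r * (i:ℝ) - 2 * r * j = 2 * r * ((i:ℝ) - j) by ring, abs_mul,
        abs_of_pos (by positivity : (0:ℝ) < 2 * r)]
    have hij1 : (1:ℝ) ≤ |(i:ℝ) - j| := by
      have : (i:ℝ) ≠ j := by exact_mod_cast hij
      have := sub_ne_zero.mpr this
      have h1 : (1:ℝ) ≤ |(i:ℝ) - (j:ℝ)| := by
        rw [show (i:ℝ) - j = ((i:ℤ) - (j:ℤ) : ℤ) by push_cast; ring]
        rw [← Int.cast_abs]
        exact_mod_cast Int.one_le_abs (by exact_mod_cast this)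
      exact h1
    rw [hdd]
    nlinarith
  have hmeas : volume (⋃ j ∈ Finset.range N, closedBall (cj j) (r / 2))
      = N * v := by
    rw [measure_biUnion_finset hdisj (fun j _ => measurableSet_closedBall)]
    have : ∀ j ∈ Finset.range N, volume (closedBall (cj j) (r / 2)) = v := by
      intro j _
      rw [hv, Measure.addHaar_closedBall_center]
    rw [Finset.sum_congr rfl this, Finset.sum_const, Finset.card_range, nsmul_eq_mul]
  have hle : (N : ℝ≥0∞) * v ≤ volume R := by
    rw [← hmeas]
    exact measure_mono (Set.iUnion₂_subset hsub)
  exact absurd (lt_of_lt_of_le hNv hle) (lt_irrefl _)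

lemma interior_nonempty_of_volume_pos
    {R : Set E} (hR : Convex ℝ R) (hpos : 0 < volume R) :
    (interior R).Nonempty := by
  by_contra h
  have hspan : affineSpan ℝ R ≠ ⊤ := by
    intro htop
    rw [← hR.interior_nonempty_iff_affineSpan_eq_top] at htop
    exact h htop
  have hle : volume R ≤ volume (affineSpan ℝ R : Set E) :=
    measure_mono (subset_affineSpan ℝ R)
  rw [Measure.addHaar_affineSubspace volume _ hspan] at hle
  exact absurd (le_antisymm hle zero_le) (by simpa using hpos.ne')

lemma part_two (Rn : ℕ → Set E) (R : Set E) (hconv : ∀ n, Convex ℝ (Rn n))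
    (hmem : ∀ x, ∀ᶠ n in atTop, (x ∈ Rn n ↔ x ∈ R))
    {c : E} {r : ℝ} (hr : 0 < r) (hball : closedBall c r ⊆ R)
    {M₀ : ℝ} (hM₀ : R ⊆ closedBall c M₀)
    (ε : ℝ) (hε : 0 < ε) :
    ∀ᶠ n in atTop, Rn n ⊆ {x | infDist x R ≤ ε} := by
  have hcR : c ∈ R := hball (mem_closedBall_self hr.le)
  have hM₀0 : 0 ≤ M₀ := by
    have := hM₀ hcR; rwa [mem_closedBall, dist_self] at this
  set r' := r/4 with hr'
  have hr'0 : 0 < r' := by positivity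
  set M := M₀ + ε with hM
  have hM0 : 0 < M := by positivity
  set ρ := min (r' * (ε/2) / (ε/2 + M)) (ε/4) with hρdef
  have hρ0 : 0 < ρ := by
    apply lt_min (by positivity) (by positivity)
  by_contra hcon
  rw [not_eventually] at hcon
  have hfreq : ∃ᶠ n in atTop, ∃ y ∈ closedBall c M,
      infDist y R = ε/2 ∧ closedBall y ρ ⊆ Rn n := by
    refine (hcon.and_eventually (eventually_ball_subset' Rn R hconv hmem hr hball)).mono ?_
    rintro n ⟨hnot, hballn⟩
    rw [not_subset] at hnot
    obtain ⟨x, hxRn, hxfar⟩ := hnot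
    rw [mem_setOf_eq, not_le] at hxfar
    -- IVT to find y on segment [c, x] with infDist y R = ε/2
    have hcont : Continuous (fun t : ℝ => infDist (c + t • (x - c)) R) := by
      exact (continuous_infDist_pt R).comp (by continuity)
    have hIVT := intermediate_value_Icc (zero_le_one (α := ℝ)) hcont.continuousOn
    have hmemIcc : ε/2 ∈ Icc (infDist (c + (0:ℝ) • (x - c)) R)
        (infDist (c + (1:ℝ) • (x - c)) R) := by
      constructor
      · simp only [zero_smul, add_zero]
        rw [infDist_zero_of_mem hcR]; positivity
      · simp only [one_smul, add_sub_cancel]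
        linarith
    obtain ⟨t, htIcc, hty⟩ := hIVT hmemIcc
    set y := c + t • (x - c) with hy
    have hyinf : infDist y R = ε/2 := hty
    have ht1 : t < 1 := by
      rcases lt_or_eq_of_le htIcc.2 with h | h
      · exact h
      · exfalso
        rw [h] at hty
        simp only [one_smul, add_sub_cancel] at hty
        linarith
    -- y ∈ closedBall c M
    have hyM : y ∈ closedBall c M := by
      have hRne : R.Nonempty := ⟨c, hcR⟩
      have : infDist y R < ε := by rw [hyinf]; linarith
      obtain ⟨z, hzR, hzy⟩ := (infDist_lt_iff hRne).mp this
      have hzc := hM₀ hzR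
      rw [mem_closedBall] at hzc ⊢
      calc dist y c ≤ dist y z + dist z c := dist_triangle _ _ _
        _ ≤ ε + M₀ := add_le_add hzy.le hzc
        _ = M := by rw [hM]; ring
    refine ⟨y, hyM, hyinf, ?_⟩
    -- ball of radius (1-t) * r' around y inside Rn n
    have hcone := cone_ball_subset (hconv n) hballn hxRn htIcc.1 ht1
    refine (closedBall_subset_closedBall ?_).trans hcone
    -- ρ ≤ (1 - t) * r'
    have hdxy : dist x y = (1 - t) * dist x c := by
      rw [hy, dist_eq_norm, dist_eq_norm]
      have : x - (c + t • (x - c)) = (1 - t) • (x - c) := by module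
      rw [this, norm_smul, Real.norm_eq_abs, abs_of_pos (by linarith)]
    have hxy2 : ε/2 ≤ dist x y := by
      have := infDist_le_infDist_add_dist (x := x) (y := y) (s := R)
      rw [hyinf] at this
      linarith
    have hxc : dist x c ≤ dist x y + M := by
      calc dist x c ≤ dist x y + dist y c := dist_triangle _ _ _
        _ ≤ dist x y + M := by
            have := hyM; rw [mem_closedBall] at this; linarith
    have hxc0 : 0 < dist x c := by
      have : infDist x R ≤ dist x c := infDist_le_dist_of_mem hcR
      linarith
    have key : r' * (ε/2) / (ε/2 + M) ≤ (1 - t) * r' := by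
      have h1t : (1 - t) = dist x y / dist x c := by
        rw [hdxy]; field_simp
      have key2 : (ε/2)/(ε/2+M) ≤ 1 - t := by
        rw [h1t, div_le_div_iff₀ (by positivity) hxc0]
        nlinarith [hxy2, hxc, hM0]
      calc r' * (ε/2) / (ε/2 + M) = r' * ((ε/2)/(ε/2+M)) := by ring
        _ ≤ r' * (1 - t) := by nlinarith [hr'0]
        _ = (1 - t) * r' := mul_comm _ _
    calc ρ ≤ r' * (ε/2) / (ε/2 + M) := min_le_left _ _
      _ ≤ (1 - t) * r' := key
  -- compactness pigeonhole
  obtain ⟨Z, hZK, hZfin, hZcov⟩ := (isCompact_closedBall c M).elim_finite_subcover_image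
    (fun y (_ : y ∈ closedBall c M) => isOpen_ball (x := y) (ε := ρ/2))
    (fun x hx => mem_iUnion₂.mpr ⟨x, hx, mem_ball_self (by positivity)⟩)
  have hfreq2 : ∃ᶠ n in atTop, ∃ z ∈ Z, ∃ y, dist y z < ρ/2 ∧
      infDist y R = ε/2 ∧ closedBall y ρ ⊆ Rn n := by
    refine hfreq.mono ?_
    rintro n ⟨y, hyM, hyinf, hysub⟩
    obtain ⟨z, hz, hyz⟩ := mem_iUnion₂.mp (hZcov hyM)
    exact ⟨z, hz, y, mem_ball.mp hyz, hyinf, hysub⟩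
  have : ∃ z ∈ Z, ∃ᶠ n in atTop, ∃ y, dist y z < ρ/2 ∧
      infDist y R = ε/2 ∧ closedBall y ρ ⊆ Rn n := by
    by_contra hall
    push_neg at hall
    have : ∀ᶠ n in atTop, ∀ z ∈ Z, ¬ ∃ y, dist y z < ρ/2 ∧
        infDist y R = ε/2 ∧ closedBall y ρ ⊆ Rn n := by
      rw [eventually_all_finite hZfin]
      intro z hz
      exact (hall z hz).mono fun n hn => by push_neg; exact hn
    obtain ⟨n, h1, h2⟩ := (hfreq2.and_eventually this).exists
    obtain ⟨z, hz, hy⟩ := h1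
    exact h2 z hz hy
  obtain ⟨z, hzZ, hzfreq⟩ := this
  -- z is not in R
  have hzR : z ∉ R := by
    obtain ⟨n, y, hyz, hyinf, -⟩ := hzfreq.exists
    intro hzR
    have h1 : infDist y R ≤ dist y z := infDist_le_dist_of_mem hzR
    have hρε : ρ ≤ ε/4 := min_le_right _ _
    rw [hyinf] at h1
    linarith [hyz]
  have hzev : ∀ᶠ n in atTop, z ∉ Rn n := by
    filter_upwards [hmem z] with n hn
    exact fun h => hzR (hn.mp h)
  have hzfreq2 : ∃ᶠ n in atTop, z ∈ Rn n := by
    refine hzfreq.mono ?_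
    rintro n ⟨y, hyz, -, hysub⟩
    apply hysub
    rw [mem_closedBall, dist_comm]
    linarith
  obtain ⟨n, h1, h2⟩ := (hzfreq2.and_eventually hzev).exists
  exact h2 h1

end Meas
end InnerSpace
end Aux

theorem squeeze_convex_sets
    {D : ℕ} (Rn : ℕ → Set (EuclideanSpace ℝ (Fin D)))
    (R : Set (EuclideanSpace ℝ (Fin D)))
    (hconv : ∀ n, Convex ℝ (Rn n))
    (hlim : ∀ x, Tendsto (fun n => (Rn n).indicator (fun _ => (1:ℝ)) x) atTop
      (𝓝 (R.indicator (fun _ => (1:ℝ)) x)))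
    (hpos : 0 < volume R) (hfin : volume R < ⊤) :
    ∀ ε > (0:ℝ), ∀ᶠ n in atTop,
      {x | ε < infDist x Rᶜ} ⊆ Rn n ∧ Rn n ⊆ {x | infDist x R ≤ ε} := by
  intro ε hε
  have hmem : ∀ x, ∀ᶠ n in atTop, (x ∈ Rn n ↔ x ∈ R) := mem_iff_eventually Rn R hlim
  have hRconv : Convex ℝ R := limit_convex Rn R hconv hlim
  have hint : (interior R).Nonempty := interior_nonempty_of_volume_pos hRconv hpos
  obtain ⟨c, hc⟩ := hint
  obtain ⟨r0, hr0, hball0⟩ := Metric.isOpen_iff.mp isOpen_interior c hc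
  have hball : closedBall c (r0/2) ⊆ R :=
    (closedBall_subset_ball (by linarith)).trans (hball0.trans interior_subset)
  have hbdd : Bornology.IsBounded R :=
    bounded_of_convex_finite_volume hRconv c (r0/2) (by positivity) hball hfin
  obtain ⟨M₀, hM₀⟩ := (isBounded_iff_subset_closedBall c).mp hbdd
  exact (part_one Rn R hconv hmem hbdd ε hε).and
    (part_two Rn R hconv hmem (by positivity) hball hM₀ ε hε)
end

section
/- Let $E \subseteq \mathbb{R}^D$ be open. Suppose $f_n : E \to \mathbb{R}$ have continuous third derivatives, $(f_n)$ is pointwise bounded, and the third-derivative tensors $(f_n''')$ are uniformly bounded on $E$ (in the Frobenius tensor norm). Then the Hessians $(f_n'')$ are pointwise bounded on $E$. -/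
open Filter Set
open scoped Topology

private lemma third_apply_bound {D : ℕ} {f : EuclideanSpace ℝ (Fin D) → ℝ} {C : ℝ}
    (y : EuclideanSpace ℝ (Fin D)) (w : EuclideanSpace ℝ (Fin D))
    (hy : ‖iteratedFDeriv ℝ 3 f y‖ ≤ C) :
    |fderiv ℝ (fderiv ℝ (fderiv ℝ f)) y w w w| ≤ C * ‖w‖ ^ 3 := by
  have e1 : iteratedFDeriv ℝ 2 (fderiv ℝ f) y ![w, w]
      = fderiv ℝ (fderiv ℝ (fderiv ℝ f)) y w w := by
    rw [iteratedFDeriv_two_apply]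
    norm_num
  calc |fderiv ℝ (fderiv ℝ (fderiv ℝ f)) y w w w|
      = ‖(iteratedFDeriv ℝ 2 (fderiv ℝ f) y ![w, w]) w‖ := by rw [e1]; rfl
    _ ≤ ‖iteratedFDeriv ℝ 2 (fderiv ℝ f) y ![w, w]‖ * ‖w‖ :=
        ContinuousLinearMap.le_opNorm _ _
    _ ≤ (‖iteratedFDeriv ℝ 2 (fderiv ℝ f) y‖ * (‖w‖ * ‖w‖)) * ‖w‖ := by
        have := (iteratedFDeriv ℝ 2 (fderiv ℝ f) y).le_opNorm ![w, w]
        rw [Fin.prod_univ_two] at this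
        simp only [Matrix.cons_val_zero, Matrix.cons_val_one, Matrix.head_cons] at this
        exact mul_le_mul_of_nonneg_right this (norm_nonneg w)
    _ = ‖iteratedFDeriv ℝ 2 (fderiv ℝ f) y‖ * ‖w‖ ^ 3 := by ring
    _ ≤ C * ‖w‖ ^ 3 := by
        rw [norm_iteratedFDeriv_fderiv]
        exact mul_le_mul_of_nonneg_right hy (by positivity)

private lemma key_bound {D : ℕ} {E : Set (EuclideanSpace ℝ (Fin D))} (hEopen : IsOpen E)
    {f : EuclideanSpace ℝ (Fin D) → ℝ} (hf : ContDiffOn ℝ 3 f E)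
    {C : ℝ} (hC3 : ∀ y ∈ E, ‖iteratedFDeriv ℝ 3 f y‖ ≤ C)
    {x w : EuclideanSpace ℝ (Fin D)} {ε : ℝ} (hε : 0 < ε)
    (hseg : ∀ t : ℝ, |t| ≤ ε → x + t • w ∈ E) :
    |fderiv ℝ (fderiv ℝ f) x w w| ≤
      (|f (x + ε • w)| + |f (x - ε • w)| + 2 * |f x|) / ε ^ 2 + 2 * C * ε * ‖w‖ ^ 3 := by
  set L : ℝ → EuclideanSpace ℝ (Fin D) := fun t => x + t • w with hLdef
  have hL : ∀ t : ℝ, HasDerivAt L w t := by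
    intro t
    have := ((hasDerivAt_id t).smul_const w).const_add x
    rw [one_smul] at this
    exact this
  have hmem : ∀ t ∈ Icc (-ε) ε, L t ∈ E := fun t ht => hseg t (abs_le.2 ⟨ht.1, ht.2⟩)
  have h1 : ContDiffOn ℝ 2 (fderiv ℝ f) E := hf.fderiv_of_isOpen hEopen (by norm_num)
  have h2 : ContDiffOn ℝ 1 (fderiv ℝ (fderiv ℝ f)) E := h1.fderiv_of_isOpen hEopen (by norm_num)
  set g : ℝ → ℝ := fun s => f (L s) with hgdef
  set g1 : ℝ → ℝ := fun s => fderiv ℝ f (L s) w with hg1def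
  set g2 : ℝ → ℝ := fun s => fderiv ℝ (fderiv ℝ f) (L s) w w with hg2def
  set g3 : ℝ → ℝ := fun s => fderiv ℝ (fderiv ℝ (fderiv ℝ f)) (L s) w w w with hg3def
  have hfd : ∀ t ∈ Icc (-ε) ε, HasDerivAt g (g1 t) t := by
    intro t ht
    exact (((hf.contDiffAt (hEopen.mem_nhds (hmem t ht))).differentiableAt
      (by norm_num)).hasFDerivAt).comp_hasDerivAt t (hL t)
  have hd1 : ∀ t ∈ Icc (-ε) ε, HasDerivAt g1 (g2 t) t := by
    intro t ht
    have hdiff : HasFDerivAt (fderiv ℝ f) (fderiv ℝ (fderiv ℝ f) (L t)) (L t) :=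
      ((h1.contDiffAt (hEopen.mem_nhds (hmem t ht))).differentiableAt (by norm_num)).hasFDerivAt
    exact (ContinuousLinearMap.apply ℝ ℝ w).hasFDerivAt.comp_hasDerivAt t
      (hdiff.comp_hasDerivAt t (hL t))
  have hd2 : ∀ t ∈ Icc (-ε) ε, HasDerivAt g2 (g3 t) t := by
    intro t ht
    have hdiff : HasFDerivAt (fderiv ℝ (fderiv ℝ f))
        (fderiv ℝ (fderiv ℝ (fderiv ℝ f)) (L t)) (L t) :=
      ((h2.contDiffAt (hEopen.mem_nhds (hmem t ht))).differentiableAt (by norm_num)).hasFDerivAt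
    have h3 := HasFDerivAt.comp_hasDerivAt (l := fderiv ℝ (fderiv ℝ f)) t hdiff (hL t)
    exact ((ContinuousLinearMap.apply ℝ ℝ w).comp
      (ContinuousLinearMap.apply ℝ (EuclideanSpace ℝ (Fin D) →L[ℝ] ℝ) w)).hasFDerivAt.comp_hasDerivAt t
      h3
  set K : ℝ := C * ‖w‖ ^ 3 with hKdef
  have hb3 : ∀ t ∈ Icc (-ε) ε, |g3 t| ≤ K :=
    fun t ht => third_apply_bound (L t) w (hC3 (L t) (hmem t ht))
  have h0mem : (0 : ℝ) ∈ Icc (-ε) ε := by constructor <;> linarith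
  -- step 1 : |g2 t - g2 0| ≤ K * ε
  have step1 : ∀ t ∈ Icc (-ε) ε, |g2 t - g2 0| ≤ K * ε := by
    intro t ht
    have := (convex_Icc (-ε) ε).norm_image_sub_le_of_norm_hasDerivWithin_le
      (f := g2) (f' := g3) (fun s hs => (hd2 s hs).hasDerivWithinAt)
      (fun s hs => by rw [Real.norm_eq_abs]; exact hb3 s hs) h0mem ht
    rw [Real.norm_eq_abs, Real.norm_eq_abs, sub_zero] at this
    refine this.trans ?_
    have hK0 : 0 ≤ K := le_trans (abs_nonneg _) (hb3 0 h0mem)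
    have : |t| ≤ ε := abs_le.2 ⟨ht.1, ht.2⟩
    exact mul_le_mul_of_nonneg_left this hK0
  -- step 2 : |g1 t - g1 0 - g2 0 * t| ≤ (K * ε) * ε
  set p1 : ℝ → ℝ := fun t => g1 t - g1 0 - g2 0 * t with hp1def
  have hdp1 : ∀ t ∈ Icc (-ε) ε, HasDerivAt p1 (g2 t - g2 0) t := by
    intro t ht
    have := ((hd1 t ht).sub_const (g1 0)).sub ((hasDerivAt_id t).const_mul (g2 0))
    have e : g2 t - g2 0 = g2 t - g2 0 * 1 := by ring
    rw [e]
    exact this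
  have step2 : ∀ t ∈ Icc (-ε) ε, |p1 t| ≤ K * ε * ε := by
    intro t ht
    have := (convex_Icc (-ε) ε).norm_image_sub_le_of_norm_hasDerivWithin_le
      (f := p1) (f' := fun t => g2 t - g2 0) (fun s hs => (hdp1 s hs).hasDerivWithinAt)
      (fun s hs => by rw [Real.norm_eq_abs]; exact step1 s hs) h0mem ht
    rw [Real.norm_eq_abs, Real.norm_eq_abs, sub_zero] at this
    have hp10 : p1 0 = 0 := by simp [hp1def]
    rw [hp10, sub_zero] at this
    refine this.trans ?_
    have hK0 : 0 ≤ K := le_trans (abs_nonneg _) (hb3 0 h0mem)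
    have ht' : |t| ≤ ε := abs_le.2 ⟨ht.1, ht.2⟩
    exact mul_le_mul_of_nonneg_left ht' (by positivity)
  -- step 3
  set p2 : ℝ → ℝ := fun t => g t - g 0 - g1 0 * t - g2 0 * t ^ 2 / 2 with hp2def
  have hdp2 : ∀ t ∈ Icc (-ε) ε, HasDerivAt p2 (p1 t) t := by
    intro t ht
    have hsq : HasDerivAt (fun t : ℝ => g2 0 * t ^ 2 / 2) (g2 0 * t) t := by
      have := (hasDerivAt_pow 2 t).const_mul (g2 0)
      have h2 := this.div_const 2
      have e : g2 0 * (↑(2:ℕ) * t ^ (2 - 1)) / 2 = g2 0 * t := by norm_num; ring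
      rw [e] at h2
      exact h2
    have := (((hfd t ht).sub_const (g 0)).sub ((hasDerivAt_id t).const_mul (g1 0))).sub hsq
    have e : p1 t = g1 t - g1 0 * 1 - g2 0 * t := by simp [hp1def]
    rw [e]
    exact this
  have step3 : ∀ t ∈ Icc (-ε) ε, |p2 t| ≤ K * ε * ε * ε := by
    intro t ht
    have := (convex_Icc (-ε) ε).norm_image_sub_le_of_norm_hasDerivWithin_le
      (f := p2) (f' := p1) (fun s hs => (hdp2 s hs).hasDerivWithinAt)
      (fun s hs => by rw [Real.norm_eq_abs]; exact step2 s hs) h0mem ht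
    rw [Real.norm_eq_abs, Real.norm_eq_abs, sub_zero] at this
    have hp20 : p2 0 = 0 := by simp [hp2def]
    rw [hp20, sub_zero] at this
    refine this.trans ?_
    have hK0 : 0 ≤ K := le_trans (abs_nonneg _) (hb3 0 h0mem)
    have ht' : |t| ≤ ε := abs_le.2 ⟨ht.1, ht.2⟩
    exact mul_le_mul_of_nonneg_left ht' (by positivity)
  have hεmem : ε ∈ Icc (-ε) ε := by constructor <;> linarith
  have hmεmem : -ε ∈ Icc (-ε) ε := by constructor <;> linarith
  have hA := step3 ε hεmem
  have hB := step3 (-ε) hmεmem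
  have hg20 : g2 0 = fderiv ℝ (fderiv ℝ f) x w w := by simp [hg2def, hLdef]
  have hgε : g ε = f (x + ε • w) := rfl
  have hgmε : g (-ε) = f (x - ε • w) := by simp [hgdef, hLdef, sub_eq_add_neg]
  have hg0 : g 0 = f x := by simp [hgdef, hLdef]
  -- combine
  have hsum : g2 0 * ε ^ 2 = (g ε + g (-ε) - 2 * g 0) - (p2 ε + p2 (-ε)) := by
    simp only [hp2def]
    ring
  have habs : |g2 0| * ε ^ 2 ≤ (|f (x + ε • w)| + |f (x - ε • w)| + 2 * |f x|) + 2 * K * ε ^ 3 := by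
    have h1' := abs_le.1 hA
    have h2' := abs_le.1 hB
    have hgabs : |g ε + g (-ε) - 2 * g 0| ≤ |f (x + ε • w)| + |f (x - ε • w)| + 2 * |f x| := by
      rw [hgε, hgmε, hg0]
      calc |f (x + ε • w) + f (x - ε • w) - 2 * f x|
          ≤ |f (x + ε • w) + f (x - ε • w)| + |2 * f x| := abs_sub _ _
        _ ≤ |f (x + ε • w)| + |f (x - ε • w)| + 2 * |f x| := by
            have := abs_add_le (f (x + ε • w)) (f (x - ε • w))
            rw [abs_mul, abs_two] at *
            linarith
    have := abs_le.1 hgabs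
    have hmul : |g2 0 * ε ^ 2| = |g2 0| * ε ^ 2 := by
      rw [abs_mul, abs_of_nonneg (by positivity : (0:ℝ) ≤ ε ^ 2)]
    rw [← hmul, hsum]
    calc |g ε + g (-ε) - 2 * g 0 - (p2 ε + p2 (-ε))|
        ≤ |g ε + g (-ε) - 2 * g 0| + |p2 ε + p2 (-ε)| := abs_sub _ _
      _ ≤ (|f (x + ε • w)| + |f (x - ε • w)| + 2 * |f x|) + 2 * K * ε ^ 3 := by
          have := abs_add_le (p2 ε) (p2 (-ε))
          nlinarith [hgabs]
  rw [← hg20]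
  have hε2 : (0:ℝ) < ε ^ 2 := by positivity
  rw [hKdef] at habs
  have : |g2 0| ≤ ((|f (x + ε • w)| + |f (x - ε • w)| + 2 * |f x|) + 2 * (C * ‖w‖ ^ 3) * ε ^ 3) / ε ^ 2 := by
    rw [le_div_iff₀ hε2]
    linarith
  refine this.trans (le_of_eq ?_)
  field_simp

private lemma bilinear_expansion {D : ℕ}
    (B : EuclideanSpace ℝ (Fin D) →L[ℝ] EuclideanSpace ℝ (Fin D) →L[ℝ] ℝ)
    (N : Fin D → Fin D → ℝ)
    (hNb : ∀ i j, |B (EuclideanSpace.single i (1:ℝ)) (EuclideanSpace.single j (1:ℝ))| ≤ N i j)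
    (u v : EuclideanSpace ℝ (Fin D)) :
    |B u v| ≤ (∑ i, ∑ j, N i j) * (‖u‖ * ‖v‖) := by
  set e : Fin D → EuclideanSpace ℝ (Fin D) := fun i => EuclideanSpace.single i (1:ℝ) with he
  have hexp : B u v = ∑ i, ∑ j, (u i * v j) * B (e i) (e j) := by
    conv_lhs => rw [show u = ∑ i, u i • e i from by
        have := (EuclideanSpace.basisFun (Fin D) ℝ).sum_repr u
        simp only [EuclideanSpace.basisFun_repr, EuclideanSpace.basisFun_apply] at this
        exact this.symm,
      show v = ∑ j, v j • e j from by
        have := (EuclideanSpace.basisFun (Fin D) ℝ).sum_repr v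
        simp only [EuclideanSpace.basisFun_repr, EuclideanSpace.basisFun_apply] at this
        exact this.symm]
    simp only [map_sum, map_smul, ContinuousLinearMap.sum_apply,
      ContinuousLinearMap.smul_apply, smul_eq_mul, Finset.mul_sum, Finset.sum_mul]
    rw [Finset.sum_comm]
    exact Finset.sum_congr rfl fun i _ => Finset.sum_congr rfl fun j _ => by ring
  rw [hexp]
  have coord : ∀ (z : EuclideanSpace ℝ (Fin D)) (i : Fin D), |z i| ≤ ‖z‖ := by
    intro z i
    rw [EuclideanSpace.norm_eq, Real.le_sqrt (abs_nonneg _) (by positivity), sq_abs]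
    refine Finset.single_le_sum (f := fun j => ‖z j‖ ^ 2) (fun j _ => by positivity)
      (Finset.mem_univ i) |>.trans_eq' ?_
    rw [Real.norm_eq_abs, sq_abs]
  calc |∑ i, ∑ j, (u i * v j) * B (e i) (e j)|
      ≤ ∑ i, ∑ j, |(u i * v j) * B (e i) (e j)| := by
        refine (Finset.abs_sum_le_sum_abs _ _).trans (Finset.sum_le_sum fun i _ => ?_)
        exact Finset.abs_sum_le_sum_abs _ _
    _ ≤ ∑ i, ∑ j, (‖u‖ * ‖v‖) * N i j := by
        refine Finset.sum_le_sum fun i _ => Finset.sum_le_sum fun j _ => ?_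
        rw [abs_mul, abs_mul]
        have h1 := coord u i
        have h2 := coord v j
        have h3 := hNb i j
        have := mul_le_mul (mul_le_mul h1 h2 (abs_nonneg _) (norm_nonneg _)) h3
          (abs_nonneg _) (by positivity)
        linarith
    _ = (∑ i, ∑ j, N i j) * (‖u‖ * ‖v‖) := by
        rw [Finset.sum_mul]
        refine Finset.sum_congr rfl fun i _ => ?_
        rw [Finset.sum_mul]
        exact Finset.sum_congr rfl fun j _ => by ring

theorem hessians_pointwise_bounded
    {D : ℕ} (E : Set (EuclideanSpace ℝ (Fin D))) (hEopen : IsOpen E)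
    (fn : ℕ → EuclideanSpace ℝ (Fin D) → ℝ)
    (hsmooth : ∀ n, ContDiffOn ℝ 3 (fn n) E)
    (hpt : ∀ x ∈ E, ∃ M, ∀ n, |fn n x| ≤ M)
    (hthird : ∃ C, ∀ (n : ℕ), ∀ x ∈ E, ‖iteratedFDeriv ℝ 3 (fn n) x‖ ≤ C) :
    ∀ x ∈ E, ∃ M, ∀ n, ‖iteratedFDeriv ℝ 2 (fn n) x‖ ≤ M := by
  obtain ⟨C, hC⟩ := hthird
  intro x hx
  obtain ⟨δ, hδ, hball⟩ := Metric.isOpen_iff.1 hEopen x hx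
  have hε : (0:ℝ) < δ/4 := by linarith
  set ε : ℝ := δ/4 with hεdef
  have hseg : ∀ w : EuclideanSpace ℝ (Fin D), ‖w‖ ≤ 2 → ∀ t : ℝ, |t| ≤ ε → x + t • w ∈ E := by
    intro w hw t ht
    apply hball
    rw [Metric.mem_ball, dist_eq_norm, add_sub_cancel_left, norm_smul, Real.norm_eq_abs]
    nlinarith [abs_nonneg t, norm_nonneg w]
  have hQ : ∀ w : EuclideanSpace ℝ (Fin D), ‖w‖ ≤ 2 →
      ∃ Mw, 0 ≤ Mw ∧ ∀ n, |fderiv ℝ (fderiv ℝ (fn n)) x w w| ≤ Mw := by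
    intro w hw
    have hp : x + ε • w ∈ E := hseg w hw ε (by rw [abs_of_pos hε])
    have hm : x - ε • w ∈ E := by
      have := hseg w hw (-ε) (by rw [abs_neg, abs_of_pos hε])
      rwa [neg_smul, ← sub_eq_add_neg] at this
    obtain ⟨Mp, hMp⟩ := hpt _ hp
    obtain ⟨Mm, hMm⟩ := hpt _ hm
    obtain ⟨M0, hM0⟩ := hpt _ hx
    have key : ∀ n, |fderiv ℝ (fderiv ℝ (fn n)) x w w| ≤
        (Mp + Mm + 2*M0)/ε^2 + 2*C*ε*‖w‖^3 := by
      intro n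
      refine (key_bound hEopen (hsmooth n) (hC n) hε (hseg w hw)).trans ?_
      have h1 := hMp n
      have h2 := hMm n
      have h3 := hM0 n
      gcongr
    exact ⟨_, le_trans (abs_nonneg _) (key 0), key⟩
  set e : Fin D → EuclideanSpace ℝ (Fin D) := fun i => EuclideanSpace.single i (1:ℝ) with he
  have hnorme : ∀ i, ‖e i‖ = 1 := fun i => by
    simp [he, EuclideanSpace.norm_single]
  have hsym : ∀ n (u v : EuclideanSpace ℝ (Fin D)),
      fderiv ℝ (fderiv ℝ (fn n)) x u v = fderiv ℝ (fderiv ℝ (fn n)) x v u :=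
    fun n => ((hsmooth n).contDiffAt (hEopen.mem_nhds hx)).isSymmSndFDerivAt (by norm_num)
  have hN : ∀ i j : Fin D, ∃ N, 0 ≤ N ∧
      ∀ n, |fderiv ℝ (fderiv ℝ (fn n)) x (e i) (e j)| ≤ N := by
    intro i j
    obtain ⟨Mi, hMi0, hMi⟩ := hQ (e i) (by rw [hnorme]; norm_num)
    obtain ⟨Mj, hMj0, hMj⟩ := hQ (e j) (by rw [hnorme]; norm_num)
    obtain ⟨Mij, hMij0, hMij⟩ := hQ (e i + e j)
      ((norm_add_le _ _).trans (by rw [hnorme, hnorme]; norm_num))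
    refine ⟨(Mij + Mi + Mj)/2, by positivity, fun n => ?_⟩
    have hid : fderiv ℝ (fderiv ℝ (fn n)) x (e i + e j) (e i + e j)
        = fderiv ℝ (fderiv ℝ (fn n)) x (e i) (e i)
          + 2 * fderiv ℝ (fderiv ℝ (fn n)) x (e i) (e j)
          + fderiv ℝ (fderiv ℝ (fn n)) x (e j) (e j) := by
      simp only [map_add, ContinuousLinearMap.add_apply]
      rw [hsym n (e j) (e i)]
      ring
    have h1 := abs_le.1 (hMij n)
    have h2 := abs_le.1 (hMi n)
    have h3 := abs_le.1 (hMj n)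
    rw [hid] at h1
    apply abs_le.2
    constructor
    · linarith
    · linarith
  choose N hN0 hNb using hN
  refine ⟨∑ i, ∑ j, N i j, fun n => ?_⟩
  refine ContinuousMultilinearMap.opNorm_le_bound (Finset.sum_nonneg fun i _ => Finset.sum_nonneg fun j _ => hN0 i j) fun m => ?_
  rw [iteratedFDeriv_two_apply, Fin.prod_univ_two, Real.norm_eq_abs]
  exact bilinear_expansion (fderiv ℝ (fderiv ℝ (fn n)) x) N
    (fun i j => hNb i j n) (m 0) (m 1)
end

section
/- Let $E \subseteq \mathbb{R}^D$ be open, convex, and bounded. Let $f_n : E \to \mathbb{R}$ have continuous second derivatives, suppose $f_n \to f$ pointwise for some $f : E \to \mathbb{R}$, and suppose the Hessians $(f_n'')$ are uniformly bounded on $E$. Then the gradient $f'$ exists and is continuous on $E$, and $f_n' \to f'$ uniformly on $E$. -/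
open Filter Set
open scoped Topology

private lemma euclid_opNorm_le_sum {D : ℕ} (ψ : EuclideanSpace ℝ (Fin D) →L[ℝ] ℝ) :
    ‖ψ‖ ≤ ∑ i : Fin D, ‖ψ (EuclideanSpace.single i 1)‖ := by
  refine ContinuousLinearMap.opNorm_le_bound ψ
    (Finset.sum_nonneg fun i _ => norm_nonneg _) ?_
  intro v
  have hv : v = ∑ i : Fin D, v i • EuclideanSpace.single i (1 : ℝ) := by
    ext j
    rw [WithLp.ofLp_sum, Finset.sum_apply]
    simp [EuclideanSpace.single_apply]
  have hcoord : ∀ i, |v i| ≤ ‖v‖ := by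
    intro i
    have h1 : ‖v‖ = Real.sqrt (∑ j, ‖v j‖ ^ 2) := EuclideanSpace.norm_eq v
    have h2 : |v i| = Real.sqrt (‖v i‖ ^ 2) := by
      rw [Real.sqrt_sq_eq_abs, Real.norm_eq_abs, abs_abs]
    rw [h1, h2]
    exact Real.sqrt_le_sqrt (Finset.single_le_sum (f := fun j => ‖v j‖ ^ 2) (fun j _ => sq_nonneg _) (Finset.mem_univ i))
  calc ‖ψ v‖ = |∑ i : Fin D, v i * ψ (EuclideanSpace.single i 1)| := by
        rw [Real.norm_eq_abs]
        congr 1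
        conv_lhs => rw [hv]
        rw [map_sum]
        simp [smul_eq_mul]
    _ ≤ ∑ i : Fin D, |v i * ψ (EuclideanSpace.single i 1)| := Finset.abs_sum_le_sum_abs _ _
    _ ≤ ∑ i : Fin D, ‖v‖ * ‖ψ (EuclideanSpace.single i 1)‖ := by
        refine Finset.sum_le_sum fun i _ => ?_
        rw [abs_mul, Real.norm_eq_abs]
        exact mul_le_mul_of_nonneg_right (hcoord i) (abs_nonneg _)
    _ = (∑ i : Fin D, ‖ψ (EuclideanSpace.single i 1)‖) * ‖v‖ := by
        rw [Finset.sum_mul]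
        simp [mul_comm]

set_option maxHeartbeats 2000000 in
theorem gradients_converge_uniformly
    {D : ℕ} (E : Set (EuclideanSpace ℝ (Fin D)))
    (hEopen : IsOpen E) (hEconv : Convex ℝ E) (hEbdd : Bornology.IsBounded E)
    (fn : ℕ → EuclideanSpace ℝ (Fin D) → ℝ) (f : EuclideanSpace ℝ (Fin D) → ℝ)
    (hsmooth : ∀ n, ContDiffOn ℝ 2 (fn n) E)
    (hlim : ∀ x ∈ E, Tendsto (fun n => fn n x) atTop (𝓝 (f x)))
    (hHess : ∃ C, ∀ (n : ℕ), ∀ x ∈ E, ‖iteratedFDeriv ℝ 2 (fn n) x‖ ≤ C) :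
    (∀ x ∈ E, DifferentiableAt ℝ f x) ∧
    ContinuousOn (fun x => fderiv ℝ f x) E ∧
    TendstoUniformlyOn (fun n x => fderiv ℝ (fn n) x) (fun x => fderiv ℝ f x) atTop E := by
  classical
  rcases E.eq_empty_or_nonempty with rfl | ⟨z, hz⟩
  · exact ⟨fun x hx => absurd hx (notMem_empty x), continuousOn_empty _,
      tendstoUniformlyOn_empty⟩
  obtain ⟨C, hC⟩ := hHess
  have hC0 : 0 ≤ C := le_trans (norm_nonneg _) (hC 0 z hz)
  set g : ℕ → EuclideanSpace ℝ (Fin D) → (EuclideanSpace ℝ (Fin D) →L[ℝ] ℝ) :=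
    fun n x => fderiv ℝ (fn n) x with hgdef
  -- basic derivative facts
  have hdf : ∀ n, ∀ x ∈ E, HasFDerivAt (fn n) (g n x) x := by
    intro n x hx
    exact (((hsmooth n).contDiffAt (hEopen.mem_nhds hx)).differentiableAt
      (by norm_num)).hasFDerivAt
  have hg1 : ∀ n, ContDiffOn ℝ 1 (fderiv ℝ (fn n)) E := fun n =>
    (hsmooth n).fderiv_of_isOpen hEopen (by norm_num)
  have hgdiff : ∀ n, ∀ x ∈ E, DifferentiableAt ℝ (g n) x := fun n x hx =>
    (((hg1 n).differentiableOn one_ne_zero) x hx).differentiableAt (hEopen.mem_nhds hx)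
  have hgC : ∀ n, ∀ x ∈ E, ‖fderiv ℝ (g n) x‖ ≤ C := by
    intro n x hx
    have h1 : ‖fderiv ℝ (fderiv ℝ (fn n)) x‖ = ‖iteratedFDeriv ℝ 2 (fn n) x‖ := by
      rw [← norm_iteratedFDeriv_zero (𝕜 := ℝ) (f := fderiv ℝ (fderiv ℝ (fn n))) (x := x),
        norm_iteratedFDeriv_fderiv, norm_iteratedFDeriv_fderiv]
    simp only [hgdef]
    rw [h1]
    exact hC n x hx
  -- Lipschitz property of the gradients
  have hLip : ∀ n, ∀ x ∈ E, ∀ y ∈ E, ‖g n y - g n x‖ ≤ C * ‖y - x‖ := fun n x hx y hy =>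
    hEconv.norm_image_sub_le_of_norm_fderiv_le (fun w hw => hgdiff n w hw)
      (fun w hw => hgC n w hw) hx hy
  -- Taylor-type estimate for differences
  have hTay : ∀ n m, ∀ x ∈ E, ∀ y ∈ E,
      ‖(fn n y - fn m y) - (fn n x - fn m x) - (g n x - g m x) (y - x)‖ ≤
        2 * C * (‖y - x‖ * ‖y - x‖) := by
    intro n m x hx y hy
    set φ : EuclideanSpace ℝ (Fin D) →L[ℝ] ℝ := g n x - g m x with hφ
    set q : EuclideanSpace ℝ (Fin D) → ℝ := fun w => (fn n w - fn m w) - φ (w - x) with hq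
    set s : Set (EuclideanSpace ℝ (Fin D)) := E ∩ Metric.closedBall x ‖y - x‖ with hs
    have hconv : Convex ℝ s := hEconv.inter (convex_closedBall x _)
    have hxs : x ∈ s := ⟨hx, by simp⟩
    have hys : y ∈ s := ⟨hy, by simp [Metric.mem_closedBall, dist_eq_norm]⟩
    have hqd : ∀ w ∈ s, HasFDerivWithinAt q ((g n w - g m w) - φ) s w := by
      intro w hw
      have h1 : HasFDerivAt (fun u => φ (u - x)) φ w := by
        exact φ.hasFDerivAt.comp w ((hasFDerivAt_id w).sub_const x)
      exact (((hdf n w hw.1).sub (hdf m w hw.1)).sub h1).hasFDerivWithinAt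
    have hbound : ∀ w ∈ s, ‖(g n w - g m w) - φ‖ ≤ 2 * C * ‖y - x‖ := by
      intro w hw
      have h1 : ‖g n w - g n x‖ ≤ C * ‖w - x‖ := hLip n x hx w hw.1
      have h2 : ‖g m w - g m x‖ ≤ C * ‖w - x‖ := hLip m x hx w hw.1
      have hwx : ‖w - x‖ ≤ ‖y - x‖ := by
        have h3 := hw.2
        rwa [Metric.mem_closedBall, dist_eq_norm] at h3
      have h4 : (g n w - g m w) - φ = (g n w - g n x) - (g m w - g m x) := by
        rw [hφ]; abel
      rw [h4]
      calc ‖(g n w - g n x) - (g m w - g m x)‖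
          ≤ ‖g n w - g n x‖ + ‖g m w - g m x‖ := norm_sub_le _ _
        _ ≤ C * ‖w - x‖ + C * ‖w - x‖ := add_le_add h1 h2
        _ ≤ 2 * C * ‖y - x‖ := by nlinarith [norm_nonneg (w - x), norm_nonneg (y - x)]
    have key := hconv.norm_image_sub_le_of_norm_hasFDerivWithin_le hqd hbound hxs hys
    have hqx : q y - q x = (fn n y - fn m y) - (fn n x - fn m x) - φ (y - x) := by
      simp only [hq, sub_self, map_zero, sub_zero]
      ring
    calc ‖(fn n y - fn m y) - (fn n x - fn m x) - φ (y - x)‖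
        = ‖q y - q x‖ := by rw [hqx]
      _ ≤ 2 * C * ‖y - x‖ * ‖y - x‖ := key
      _ = 2 * C * (‖y - x‖ * ‖y - x‖) := by ring
  -- geometry of E
  obtain ⟨ρ, hρpos, hball⟩ := Metric.isOpen_iff.mp hEopen z hz
  set r := ρ / 2 with hrdef
  have hr : 0 < r := by positivity
  have hrE : ∀ v : EuclideanSpace ℝ (Fin D), ‖v‖ ≤ 1 → z + r • v ∈ E := by
    intro v hv
    apply hball
    rw [Metric.mem_ball, dist_eq_norm]
    have h1 : z + r • v - z = r • v := by abel
    rw [h1, norm_smul, Real.norm_eq_abs, abs_of_pos hr]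
    calc r * ‖v‖ ≤ r * 1 := mul_le_mul_of_nonneg_left hv hr.le
      _ < ρ := by rw [mul_one, hrdef]; linarith
  obtain ⟨R, hR⟩ := hEbdd.subset_closedBall z
  have hR0 : 0 ≤ R := by
    have := hR hz
    simpa using this
  set d := R + r with hddef
  have hd : 0 < d := by positivity
  have hdistz : ∀ x ∈ E, ‖z - x‖ ≤ R := by
    intro x hx
    have h1 := hR hx
    rw [Metric.mem_closedBall] at h1
    rw [← dist_eq_norm, dist_comm]
    exact h1
  -- membership of the auxiliary points
  have hmem : ∀ x ∈ E, ∀ t : ℝ, 0 < t → t ≤ 1 →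
      ∀ v : EuclideanSpace ℝ (Fin D), ‖v‖ ≤ 1 → x + t • (z + r • v - x) ∈ E := by
    intro x hx t ht ht1 v hv
    exact hEconv.add_smul_sub_mem hx (hrE v hv) ⟨ht.le, ht1⟩
  have hnorm : ∀ x ∈ E, ∀ t : ℝ, 0 < t → ∀ v : EuclideanSpace ℝ (Fin D), ‖v‖ ≤ 1 →
      ‖(x + t • (z + r • v - x)) - x‖ ≤ t * d := by
    intro x hx t ht v hv
    have h1 : (x + t • (z + r • v - x)) - x = t • (z + r • v - x) := by abel
    rw [h1, norm_smul, Real.norm_eq_abs, abs_of_pos ht]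
    have h2 : ‖z + r • v - x‖ ≤ R + r := by
      have h3 : z + r • v - x = (z - x) + r • v := by abel
      rw [h3]
      refine (norm_add_le _ _).trans (add_le_add (hdistz x hx) ?_)
      rw [norm_smul, Real.norm_eq_abs, abs_of_pos hr]
      calc r * ‖v‖ ≤ r * 1 := mul_le_mul_of_nonneg_left hv hr.le
        _ = r := mul_one r
    calc t * ‖z + r • v - x‖ ≤ t * (R + r) := mul_le_mul_of_nonneg_left h2 ht.le
      _ = t * d := by rw [hddef]
  -- the key evaluation estimate
  have hEval : ∀ n m, ∀ x ∈ E, ∀ t : ℝ, 0 < t → t ≤ 1 →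
      ∀ v : EuclideanSpace ℝ (Fin D), ‖v‖ ≤ 1 →
      2 * t * r * ‖(g n x - g m x) v‖ ≤
        ‖fn n (x + t • (z + r • v - x)) - fn m (x + t • (z + r • v - x))‖ +
        ‖fn n (x + t • (z + r • (-v) - x)) - fn m (x + t • (z + r • (-v) - x))‖ +
        2 * ‖fn n x - fn m x‖ + 4 * C * (t * d) ^ 2 := by
    intro n m x hx t ht ht1 v hv
    set a := x + t • (z + r • v - x) with had
    set b := x + t • (z + r • (-v) - x) with hbd
    have hvneg : ‖(-v : EuclideanSpace ℝ (Fin D))‖ ≤ 1 := by rwa [norm_neg]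
    have haE : a ∈ E := hmem x hx t ht ht1 v hv
    have hbE : b ∈ E := hmem x hx t ht ht1 (-v) hvneg
    have hna : ‖a - x‖ ≤ t * d := hnorm x hx t ht v hv
    have hnb : ‖b - x‖ ≤ t * d := hnorm x hx t ht (-v) hvneg
    set φ : EuclideanSpace ℝ (Fin D) →L[ℝ] ℝ := g n x - g m x with hφ
    have hta := hTay n m x hx a haE
    have htb := hTay n m x hx b hbE
    have hab : φ (a - x) - φ (b - x) = (2 * t * r) * φ v := by
      have h1 : (a - x) - (b - x) = (2 * t * r) • v := by
        rw [had, hbd]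
        module
      calc φ (a - x) - φ (b - x) = φ ((a - x) - (b - x)) := (map_sub φ _ _).symm
        _ = φ ((2 * t * r) • v) := by rw [h1]
        _ = (2 * t * r) * φ v := by rw [map_smul, smul_eq_mul]
    have hA : ‖(fn n a - fn m a) - (fn n x - fn m x) - φ (a - x)‖ ≤ 2 * C * (t * d) ^ 2 := by
      refine hta.trans ?_
      have hsq : ‖a - x‖ * ‖a - x‖ ≤ (t * d) * (t * d) :=
        mul_le_mul hna hna (norm_nonneg _) (by positivity)
      calc 2 * C * (‖a - x‖ * ‖a - x‖) ≤ 2 * C * ((t * d) * (t * d)) :=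
            mul_le_mul_of_nonneg_left hsq (by linarith)
        _ = 2 * C * (t * d) ^ 2 := by ring
    have hB : ‖(fn n b - fn m b) - (fn n x - fn m x) - φ (b - x)‖ ≤ 2 * C * (t * d) ^ 2 := by
      refine htb.trans ?_
      have hsq : ‖b - x‖ * ‖b - x‖ ≤ (t * d) * (t * d) :=
        mul_le_mul hnb hnb (norm_nonneg _) (by positivity)
      calc 2 * C * (‖b - x‖ * ‖b - x‖) ≤ 2 * C * ((t * d) * (t * d)) :=
            mul_le_mul_of_nonneg_left hsq (by linarith)
        _ = 2 * C * (t * d) ^ 2 := by ring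
    have heq : (2 * t * r) * φ v =
        ((fn n a - fn m a) - (fn n x - fn m x))
        - ((fn n b - fn m b) - (fn n x - fn m x))
        - ((fn n a - fn m a) - (fn n x - fn m x) - φ (a - x))
        + ((fn n b - fn m b) - (fn n x - fn m x) - φ (b - x)) := by
      rw [← hab]; ring
    have h2tr : 0 < 2 * t * r := by positivity
    calc 2 * t * r * ‖φ v‖ = ‖(2 * t * r) * φ v‖ := by
          rw [norm_mul, Real.norm_eq_abs (2 * t * r), abs_of_pos h2tr]
      _ ≤ ‖(fn n a - fn m a) - (fn n x - fn m x)‖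
          + ‖(fn n b - fn m b) - (fn n x - fn m x)‖
          + ‖(fn n a - fn m a) - (fn n x - fn m x) - φ (a - x)‖
          + ‖(fn n b - fn m b) - (fn n x - fn m x) - φ (b - x)‖ := by
          rw [heq]
          refine (norm_add_le _ _).trans ?_
          gcongr
          refine (norm_sub_le _ _).trans ?_
          gcongr
          exact norm_sub_le _ _
      _ ≤ (‖fn n a - fn m a‖ + ‖fn n x - fn m x‖)
          + (‖fn n b - fn m b‖ + ‖fn n x - fn m x‖)
          + 2 * C * (t * d) ^ 2 + 2 * C * (t * d) ^ 2 := by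
          gcongr <;> [exact norm_sub_le _ _; exact norm_sub_le _ _]
      _ = ‖fn n a - fn m a‖ + ‖fn n b - fn m b‖
          + 2 * ‖fn n x - fn m x‖ + 4 * C * (t * d) ^ 2 := by ring
  -- pointwise Cauchy criterion for function values
  have hfnCauchy : ∀ w ∈ E, ∀ δ : ℝ, 0 < δ → ∃ N, ∀ p ≥ N, ∀ q ≥ N,
      ‖fn p w - fn q w‖ < δ := by
    intro w hw δ hδ
    have h1 : CauchySeq fun k => fn k w := (hlim w hw).cauchySeq
    rw [Metric.cauchySeq_iff] at h1
    obtain ⟨N, hN⟩ := h1 δ hδ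
    exact ⟨N, fun p hp q hq => by rw [← dist_eq_norm]; exact hN p hp q hq⟩
  -- pointwise Cauchy for the gradients
  have hgCauchy : ∀ x ∈ E, CauchySeq fun k => g k x := by
    intro x hx
    rw [Metric.cauchySeq_iff]
    intro ε hε
    set ε' := ε / (D + 1) with hε'def
    have hε' : 0 < ε' := by positivity
    set t := min 1 (r * ε' / (4 * C * d ^ 2 + 1)) with htdef
    have ht : 0 < t := lt_min one_pos (by positivity)
    have ht1 : t ≤ 1 := min_le_left _ _
    have hquad : 4 * C * (t * d) ^ 2 ≤ t * r * ε' := by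
      have h1 : t ≤ r * ε' / (4 * C * d ^ 2 + 1) := min_le_right _ _
      have h2 : t * (4 * C * d ^ 2 + 1) ≤ r * ε' := by
        rw [← le_div_iff₀ (by positivity)]
        exact h1
      nlinarith [sq_nonneg t, sq_nonneg d, mul_pos ht (mul_pos hr hε'), ht.le,
        mul_nonneg (mul_nonneg hC0 (sq_nonneg d)) ht.le]
    set τ := t * r * ε' / 4 with hτdef
    have hτ : 0 < τ := by positivity
    -- choose N for each coordinate direction and for x itself
    have hmema : ∀ i : Fin D,
        x + t • (z + r • (EuclideanSpace.single i (1:ℝ)) - x) ∈ E := fun i =>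
      hmem x hx t ht ht1 _ (by rw [EuclideanSpace.norm_single]; norm_num)
    have hmemb : ∀ i : Fin D,
        x + t • (z + r • (-(EuclideanSpace.single i (1:ℝ))) - x) ∈ E := fun i =>
      hmem x hx t ht ht1 _ (by rw [norm_neg, EuclideanSpace.norm_single]; norm_num)
    choose Na hNa using fun i : Fin D => hfnCauchy _ (hmema i) τ hτ
    choose Nb hNb using fun i : Fin D => hfnCauchy _ (hmemb i) τ hτ
    obtain ⟨Nx, hNx⟩ := hfnCauchy x hx τ hτ
    set N := max Nx ((Finset.univ.sup Na).max (Finset.univ.sup Nb)) with hNdef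
    refine ⟨N, fun p hp q hq => ?_⟩
    have hpx : p ≥ Nx := le_trans (le_max_left _ _) hp
    have hqx : q ≥ Nx := le_trans (le_max_left _ _) hq
    have hcoordbound : ∀ i : Fin D,
        ‖(g p x - g q x) (EuclideanSpace.single i (1:ℝ))‖ ≤ ε' := by
      intro i
      have hpa : p ≥ Na i := le_trans (le_trans (Finset.le_sup (Finset.mem_univ i))
        (le_trans (le_max_left _ _) (le_max_right Nx _))) hp
      have hqa : q ≥ Na i := le_trans (le_trans (Finset.le_sup (Finset.mem_univ i))
        (le_trans (le_max_left _ _) (le_max_right Nx _))) hq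
      have hpb : p ≥ Nb i := le_trans (le_trans (Finset.le_sup (Finset.mem_univ i))
        (le_trans (le_max_right _ _) (le_max_right Nx _))) hp
      have hqb : q ≥ Nb i := le_trans (le_trans (Finset.le_sup (Finset.mem_univ i))
        (le_trans (le_max_right _ _) (le_max_right Nx _))) hq
      have h1 := hEval p q x hx t ht ht1 (EuclideanSpace.single i (1:ℝ))
        (by rw [EuclideanSpace.norm_single]; norm_num)
      have h2 := hNa i p hpa q hqa
      have h3 := hNb i p hpb q hqb
      have h4 := hNx p hpx q hqx
      have h5 : 2 * t * r * ‖(g p x - g q x) (EuclideanSpace.single i (1:ℝ))‖ ≤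
          2 * t * r * ε' := by
        calc 2 * t * r * ‖(g p x - g q x) (EuclideanSpace.single i (1:ℝ))‖
            ≤ _ := h1
          _ ≤ 2 * t * r * ε' := by
              have hτeq : τ = t * r * ε' / 4 := hτdef
              linarith [h2, h3, h4, hquad]
      have h6 : 0 < 2 * t * r := by positivity
      exact le_of_mul_le_mul_left (by linarith) h6
    have hbd := euclid_opNorm_le_sum (g p x - g q x)
    rw [dist_eq_norm]
    calc ‖g p x - g q x‖ ≤ ∑ i : Fin D, ‖(g p x - g q x) (EuclideanSpace.single i 1)‖ := hbd
      _ ≤ ∑ _i : Fin D, ε' := Finset.sum_le_sum fun i _ => hcoordbound i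
      _ = (D : ℝ) * ε' := by rw [Finset.sum_const, Finset.card_univ, Fintype.card_fin,
            nsmul_eq_mul]
      _ < (D + 1) * ε' := by nlinarith
      _ = ε := by rw [hε'def]; field_simp
  -- uniform Cauchy via total boundedness and equi-Lipschitz
  have hUC : UniformCauchySeqOn g atTop E := by
    rw [Metric.uniformCauchySeqOn_iff]
    intro ε hε
    set δ := ε / (8 * (C + 1)) with hδdef
    have hδ : 0 < δ := by positivity
    have htb : TotallyBounded E :=
      hEbdd.isCompact_closure.totallyBounded.subset subset_closure
    obtain ⟨s, hsE, hsfin, hscov⟩ :=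
      totallyBounded_iff_subset.mp htb _ (Metric.dist_mem_uniformity hδ)
    have hchoice : ∀ y ∈ s, ∃ N, ∀ p ≥ N, ∀ q ≥ N, dist (g p y) (g q y) < ε / 2 := by
      intro y hy
      have h1 := hgCauchy y (hsE hy)
      rw [Metric.cauchySeq_iff] at h1
      exact h1 (ε / 2) (by positivity)
    choose! N hN using hchoice
    refine ⟨hsfin.toFinset.sup N, fun p hp q hq x hx => ?_⟩
    obtain ⟨y, hy, hxy⟩ := mem_iUnion₂.mp (hscov hx)
    have hxy' : dist x y < δ := hxy
    have hyE := hsE hy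
    have hNy : N y ≤ hsfin.toFinset.sup N := Finset.le_sup (hsfin.mem_toFinset.mpr hy)
    have hCδ : C * δ ≤ ε / 8 := by
      have h1 : C * δ ≤ (C + 1) * δ := by nlinarith
      have h2 : (C + 1) * δ = ε / 8 := by rw [hδdef]; field_simp
      linarith
    have h1 : dist (g p x) (g p y) ≤ ε / 8 := by
      rw [dist_eq_norm]
      calc ‖g p x - g p y‖ ≤ C * ‖x - y‖ := hLip p y hyE x hx
        _ ≤ C * δ := by
            refine mul_le_mul_of_nonneg_left ?_ hC0
            rw [← dist_eq_norm]; exact hxy'.le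
        _ ≤ ε / 8 := hCδ
    have h2 : dist (g q y) (g q x) ≤ ε / 8 := by
      rw [dist_eq_norm]
      calc ‖g q y - g q x‖ ≤ C * ‖y - x‖ := hLip q x hx y hyE
        _ ≤ C * δ := by
            refine mul_le_mul_of_nonneg_left ?_ hC0
            rw [← dist_eq_norm, dist_comm]; exact hxy'.le
        _ ≤ ε / 8 := hCδ
    have h3 := hN y hy p (le_trans hNy hp) q (le_trans hNy hq)
    calc dist (g p x) (g q x)
        ≤ dist (g p x) (g p y) + dist (g p y) (g q y) + dist (g q y) (g q x) :=
          dist_triangle4 _ _ _ _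
      _ < ε := by linarith [h1, h2, h3]
  -- extract the limit of the gradients
  have hptlim : ∀ x, ∃ l, x ∈ E → Tendsto (fun n => g n x) atTop (𝓝 l) := by
    intro x
    by_cases hx : x ∈ E
    · obtain ⟨l, hl⟩ := cauchySeq_tendsto_of_complete (hUC.cauchySeq hx)
      exact ⟨l, fun _ => hl⟩
    · exact ⟨0, fun h => absurd h hx⟩
  choose glim hglim using hptlim
  have htu : TendstoUniformlyOn g glim atTop E :=
    hUC.tendstoUniformlyOn_of_tendsto fun x hx => hglim x hx
  have hfd : ∀ x ∈ E, HasFDerivAt f (glim x) x := fun x hx =>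
    hasFDerivAt_of_tendstoUniformlyOn hEopen htu (fun n w hw => hdf n w hw) hlim hx
  have heq : ∀ x ∈ E, fderiv ℝ f x = glim x := fun x hx => (hfd x hx).fderiv
  refine ⟨fun x hx => (hfd x hx).differentiableAt, ?_, ?_⟩
  · have hcont : ContinuousOn glim E :=
      htu.continuousOn (Eventually.of_forall fun n =>
        (hsmooth n).continuousOn_fderiv_of_isOpen hEopen (by norm_num)).frequently
    exact hcont.congr fun x hx => heq x hx
  · exact htu.congr_right fun x hx => (heq x hx).symm
end
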